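/- arXiv:2402.00377 — 6 statements merged into one kernel-verified Lean document; each statement's English description precedes it below -/
import Mathlib

section
/- Let g : ℝⁿ → ℝ be continuously differentiable and let φ : ℝⁿ → ℝ ∪ {+∞} be a proper polyhedral convex function. Let x̄ satisfy −∇g(x̄) ∈ ∂φ(x̄), set ψ = g + φ, K = N_{∂φ(x̄)}(−∇g(x̄)), and ψ̃(x) = g(x) − ⟨∇g(x̄), x − x̄⟩ + ι_K(x − x̄). Then for any α ∈ (0,1), ψ satisfies the KL property at x̄ with exponent α if and only if ψ̃ satisfies the KL property at x̄ with exponent α. Here ψ satisfies the KL property at x̄ with exponent α means: there exist c, ε, ν > 0 such that dist(0, ∇g(x) + ∂φ(x)) ≥ c·(ψ(x) − ψ(x̄))^α for every x with ‖x − x̄‖ < ε and 0 < ψ(x) − ψ(x̄) < ν; and ψ̃ satisfies it at x̄ with exponent α means: there exist c, ε, ν > 0 such that dist(∇g(x̄) − ∇g(x), N_K(x − x̄)) ≥ c·(ψ̃(x) − ψ̃(x̄))^α for every x with x − x̄ ∈ K, ‖x − x̄‖ < ε and 0 < ψ̃(x) − ψ̃(x̄) < ν. -/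
open scoped BigOperators
open RealInnerProductSpace Metric Set

set_option linter.unusedSectionVars false
set_option linter.unusedVariables false
set_option maxHeartbeats 1000000

/-- The normal cone to a set `C` at `x` (empty if `x ∉ C`). -/
def normalCone {n : ℕ} (C : Set (EuclideanSpace ℝ (Fin n)))
    (x : EuclideanSpace ℝ (Fin n)) : Set (EuclideanSpace ℝ (Fin n)) :=
  {ξ | x ∈ C ∧ ∀ y ∈ C, (inner ℝ ξ (y - x) : ℝ) ≤ 0}

/-- The convex subdifferential of an extended-real-valued function `φ` at `x`. -/
def ESubdiff {n : ℕ} (φ : EuclideanSpace ℝ (Fin n) → EReal)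
    (x : EuclideanSpace ℝ (Fin n)) : Set (EuclideanSpace ℝ (Fin n)) :=
  {ξ | ∀ y, φ x + (((inner ℝ ξ (y - x) : ℝ)) : EReal) ≤ φ y}

variable {H : Type*} [NormedAddCommGroup H] [InnerProductSpace ℝ H] [FiniteDimensional ℝ H]

/-- nonneg combinations of a finite set of vectors -/
def coneSet (G : Finset H) : Set H :=
  {x | ∃ l : H → ℝ, (∀ v, 0 ≤ l v) ∧ x = ∑ v ∈ G, l v • v}

lemma zero_mem_coneSet (G : Finset H) : (0:H) ∈ coneSet G :=
  ⟨fun _ => 0, fun _ => le_rfl, by simp⟩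

lemma coneSet_mono {S G : Finset H} (h : S ⊆ G) : coneSet S ⊆ coneSet G := by
  classical
  rintro x ⟨l, hl, rfl⟩
  refine ⟨fun v => if v ∈ S then l v else 0,
    fun v => by by_cases h : v ∈ S <;> simp [h, hl v], ?_⟩
  calc ∑ v ∈ S, l v • v = ∑ v ∈ S, (if v ∈ S then l v else 0) • v :=
        Finset.sum_congr rfl fun v hv => by simp [hv]
    _ = ∑ v ∈ G, (if v ∈ S then l v else 0) • v :=
        Finset.sum_subset h (fun v _ hv => by simp [hv])

lemma coneSet_convex (G : Finset H) : Convex ℝ (coneSet G) := by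
  rintro x ⟨l, hl, rfl⟩ y ⟨l', hl', rfl⟩ a b ha hb _
  refine ⟨fun v => a * l v + b * l' v,
    fun v => add_nonneg (mul_nonneg ha (hl v)) (mul_nonneg hb (hl' v)), ?_⟩
  rw [Finset.smul_sum, Finset.smul_sum, ← Finset.sum_add_distrib]
  refine Finset.sum_congr rfl fun v _ => ?_
  rw [add_smul, smul_smul, smul_smul]

lemma cone_carath (G : Finset H) : ∀ x ∈ coneSet G,
    ∃ S, S ⊆ G ∧ LinearIndependent ℝ (fun v : S => (v : H)) ∧ x ∈ coneSet S := by
  classical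
  induction G using Finset.strongInductionOn with
  | _ G ih =>
  intro x hx
  by_cases hind : LinearIndependent ℝ (fun v : G => (v : H))
  · exact ⟨G, subset_rfl, hind, hx⟩
  rw [Fintype.not_linearIndependent_iff] at hind
  obtain ⟨gc, hgsum, i₀, hi₀⟩ := hind
  obtain ⟨l, hl, rfl⟩ := hx
  set gg : G → ℝ := if 0 < gc i₀ then gc else -gc with hgg
  have hggsum : ∑ i : G, gg i • (i:H) = 0 := by
    by_cases h : 0 < gc i₀
    · simp only [hgg, if_pos h]; exact hgsum
    · simp only [hgg, if_neg h, Pi.neg_apply, neg_smul, Finset.sum_neg_distrib, hgsum, neg_zero]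
  have hggpos : 0 < gg i₀ := by
    rcases lt_or_gt_of_ne hi₀ with h | h
    · have h' : ¬ (0 < gc i₀) := by linarith
      simp only [hgg, if_neg h', Pi.neg_apply]; linarith
    · simp only [hgg, if_pos h]; exact h
  set ge : H → ℝ := fun v => if h : v ∈ G then gg ⟨v, h⟩ else 0 with hge
  have hgesum : ∑ v ∈ G, ge v • v = 0 := by
    rw [← hggsum, ← Finset.sum_attach G (fun v => ge v • v)]
    refine Finset.sum_congr rfl fun i _ => by simp [hge]
  set Pos : Finset H := G.filter (fun v => 0 < ge v) with hPos
  have hPosne : Pos.Nonempty := ⟨(i₀ : H), by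
    simp only [hPos, Finset.mem_filter]
    exact ⟨i₀.2, by simpa [hge, i₀.2] using hggpos⟩⟩
  obtain ⟨v₀, hv₀mem, hv₀⟩ := Finset.exists_mem_eq_inf' hPosne (fun v => l v / ge v)
  have hv₀G : v₀ ∈ G := (Finset.mem_filter.1 hv₀mem).1
  have hv₀pos : 0 < ge v₀ := (Finset.mem_filter.1 hv₀mem).2
  set t : ℝ := l v₀ / ge v₀ with ht
  have htnn : 0 ≤ t := div_nonneg (hl v₀) hv₀pos.le
  have htmin : ∀ v ∈ Pos, t ≤ l v / ge v := by
    intro v hv; exact le_of_eq_of_le hv₀.symm (Finset.inf'_le _ hv)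
  set l' : H → ℝ := fun v => l v - t * ge v with hl'
  have hl'nn : ∀ v ∈ G, 0 ≤ l' v := by
    intro v hv
    by_cases hvp : 0 < ge v
    · have := htmin v (Finset.mem_filter.2 ⟨hv, hvp⟩)
      rw [le_div_iff₀ hvp] at this
      simp only [hl']; linarith
    · push_neg at hvp
      have : t * ge v ≤ 0 := mul_nonpos_of_nonneg_of_nonpos htnn hvp
      simp only [hl']; nlinarith [hl v]
  have hrep : ∑ v ∈ G, l v • v = ∑ v ∈ G, l' v • v := by
    simp only [hl', sub_smul, Finset.sum_sub_distrib, mul_smul]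
    rw [← Finset.smul_sum, hgesum, smul_zero, sub_zero]
  have hl'v₀ : l' v₀ = 0 := by
    simp only [hl', ht]
    rw [div_mul_cancel₀ _ hv₀pos.ne', sub_self]
  have hxe : ∑ v ∈ G, l v • v ∈ coneSet (G.erase v₀) := by
    refine ⟨fun v => if v = v₀ then 0 else l' v, fun v => by
      by_cases h : v = v₀
      · simp [h]
      · simp only [if_neg h]
        by_cases hv : v ∈ G
        · exact hl'nn v hv
        · simp only [hl', hge, dif_neg hv, mul_zero, sub_zero]; exact hl v, ?_⟩
    rw [hrep, ← Finset.add_sum_erase G _ hv₀G, hl'v₀, zero_smul, zero_add]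
    refine Finset.sum_congr rfl fun v hv => by
      simp [Finset.ne_of_mem_erase hv]
  obtain ⟨S, hS1, hS2, hS3⟩ := ih (G.erase v₀) (Finset.erase_ssubset hv₀G) _ hxe
  exact ⟨S, hS1.trans (Finset.erase_subset _ _), hS2, hS3⟩

lemma coneSet_closed_of_indep (S : Finset H)
    (h : LinearIndependent ℝ (fun v : S => (v : H))) : IsClosed (coneSet S) := by
  classical
  set T : (S → ℝ) →ₗ[ℝ] H :=
    { toFun := fun f => ∑ i : S, f i • (i : H)
      map_add' := by intro f g; simp [add_smul, Finset.sum_add_distrib]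
      map_smul' := by intro c f; simp [smul_smul, Finset.smul_sum] } with hT
  have hker : LinearMap.ker T = ⊥ := by
    rw [LinearMap.ker_eq_bot']
    intro f hf
    rw [Fintype.linearIndependent_iff] at h
    funext i; exact h f hf i
  have himg : coneSet S = T '' {f | ∀ i, 0 ≤ f i} := by
    ext x
    constructor
    · rintro ⟨l, hl, rfl⟩
      refine ⟨fun i => l i, fun i => hl i, ?_⟩
      simp only [hT, LinearMap.coe_mk, AddHom.coe_mk]
      rw [← Finset.sum_attach S (fun v => l v • v)]
      rfl
    · rintro ⟨f, hf, rfl⟩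
      refine ⟨fun v => if h : v ∈ S then f ⟨v, h⟩ else 0, fun v => by
        by_cases h : v ∈ S
        · simp [h, hf ⟨v, h⟩]
        · simp [h], ?_⟩
      simp only [hT, LinearMap.coe_mk, AddHom.coe_mk]
      rw [← Finset.sum_attach S fun v => (if h : v ∈ S then f ⟨v, h⟩ else 0) • v]
      exact (Finset.sum_congr rfl fun i _ => by simp [i.2]).symm
  rw [himg]
  refine ((T.isClosedEmbedding_of_injective hker).isClosedMap _ ?_)
  have : {f : S → ℝ | ∀ i, 0 ≤ f i} = ⋂ i, {f : S → ℝ | 0 ≤ f i} := by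
    ext f; simp
  rw [this]
  exact isClosed_iInter fun i => isClosed_le continuous_const (continuous_apply i)

lemma coneSet_closed (G : Finset H) : IsClosed (coneSet G) := by
  classical
  have : coneSet G = ⋃ S ∈ (G.powerset.filter
      (fun S => LinearIndependent ℝ (fun v : S => (v : H))) : Finset (Finset H)),
      coneSet S := by
    ext x
    simp only [Set.mem_iUnion, Finset.mem_filter, Finset.mem_powerset]
    constructor
    · intro hx
      obtain ⟨S, hS1, hS2, hS3⟩ := cone_carath G x hx
      exact ⟨S, ⟨hS1, hS2⟩, hS3⟩
    · rintro ⟨S, ⟨hS1, _⟩, hx⟩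
      exact coneSet_mono hS1 hx
  rw [this]
  exact (Finset.finite_toSet _).isClosed_biUnion
    (fun S hS => coneSet_closed_of_indep S (Finset.mem_filter.1 hS).2)

lemma mem_coneSet_of_dual (G : Finset H) (u : H)
    (hu : ∀ z : H, (∀ v ∈ G, ⟪v, z⟫ ≤ 0) → ⟪u, z⟫ ≤ 0) : u ∈ coneSet G := by
  classical
  by_contra hnot
  obtain ⟨f, cc, hfs, hfu⟩ := geometric_hahn_banach_closed_point
    (coneSet_convex G) (coneSet_closed G) hnot
  have hc0 : 0 < cc := by
    have := hfs 0 (zero_mem_coneSet G)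
    simpa using this
  have hGf : ∀ v ∈ G, f v ≤ 0 := by
    intro v hv
    by_contra hfv
    push_neg at hfv
    have hmem : ∀ t : ℝ, 0 ≤ t → t • v ∈ coneSet G := by
      intro t ht
      refine ⟨fun w => if w = v then t else 0, fun w => by by_cases h : w = v <;> simp [h, ht], ?_⟩
      have : ∀ w ∈ G, (if w = v then t else 0) • w = if w = v then t • v else 0 := by
        intro w _; by_cases h : w = v <;> simp [h]
      rw [Finset.sum_congr rfl this, Finset.sum_ite_eq' G v (fun _ => t • v), if_pos hv]
    have h2 := hfs (((cc + 1) / f v) • v) (hmem _ (by positivity))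
    rw [map_smul] at h2
    simp only [smul_eq_mul] at h2
    rw [div_mul_cancel₀ _ hfv.ne'] at h2
    linarith
  set h := (InnerProductSpace.toDual ℝ H).symm f with hh
  have hfz : ∀ z, f z = ⟪h, z⟫ := fun z => by
    rw [hh, InnerProductSpace.toDual_symm_apply]
  have hhC : ∀ v ∈ G, ⟪v, h⟫ ≤ 0 := fun v hv => by
    rw [real_inner_comm, ← hfz]; exact hGf v hv
  have := hu h hhC
  rw [real_inner_comm, ← hfz] at this
  linarith

lemma coef_bound (S : Finset H) : ∃ β > (0:ℝ),
    LinearIndependent ℝ (fun v : S => (v : H)) → ∀ l : H → ℝ, (∀ v, 0 ≤ l v) →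
      ∑ v ∈ S, l v ≤ β * ‖∑ v ∈ S, l v • v‖ := by
  classical
  by_cases hind : LinearIndependent ℝ (fun v : S => (v : H))
  swap
  · exact ⟨1, one_pos, fun h => absurd h hind⟩
  rcases S.eq_empty_or_nonempty with rfl | hSne
  · exact ⟨1, one_pos, fun _ l _ => by simp⟩
  have hne : Nonempty S := ⟨⟨hSne.choose, hSne.choose_spec⟩⟩
  set f : (S → ℝ) → ℝ := fun q => ‖∑ i : S, q i • (i : H)‖ with hf
  have hfc : Continuous f := by
    apply Continuous.norm
    exact continuous_finset_sum _ fun i _ => (continuous_apply i).smul continuous_const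
  obtain ⟨q₀, hq₀mem, hq₀min⟩ := (isCompact_stdSimplex ℝ (↥S)).exists_isMinOn
    ⟨_, single_mem_stdSimplex ℝ hne.some⟩ hfc.continuousOn
  set M : ℝ := f q₀ with hM
  have hMpos : 0 < M := by
    rcases lt_or_eq_of_le (norm_nonneg _ : (0:ℝ) ≤ f q₀) with h | h
    · exact h
    · exfalso
      have hzero : ∑ i : S, q₀ i • (i : H) = 0 := by
        have h6 := h.symm
        change ‖∑ i : S, q₀ i • (i : H)‖ = 0 at h6
        exact norm_eq_zero.mp h6
      have := (Fintype.linearIndependent_iff.1 hind) q₀ hzero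
      have hsum := hq₀mem.2
      rw [Finset.sum_eq_zero (fun i _ => this i)] at hsum
      exact one_ne_zero hsum.symm
  refine ⟨1 / M, by positivity, fun _ l hl => ?_⟩
  set σ : ℝ := ∑ v ∈ S, l v with hσ
  have hσnn : 0 ≤ σ := Finset.sum_nonneg fun v _ => hl v
  rcases eq_or_lt_of_le hσnn with h | hσpos
  · rw [← h]; positivity
  have hq : (fun i : S => l i / σ) ∈ stdSimplex ℝ S := by
    constructor
    · intro i; exact div_nonneg (hl i) hσnn
    · rw [← Finset.sum_div, Finset.sum_coe_sort S l]
      exact div_self hσpos.ne'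
  have hMle := hq₀min hq
  have : f (fun i : S => l i / σ) = (1/σ) * ‖∑ v ∈ S, l v • v‖ := by
    have h5 : ∑ i : S, (l i / σ) • (i : H) = (1/σ) • ∑ v ∈ S, l v • v := by
      rw [Finset.smul_sum, ← Finset.sum_attach S (fun v => (1/σ) • (l v • v))]
      refine Finset.sum_congr rfl fun i _ => ?_
      rw [smul_smul]; congr 1; field_simp
    simp only [hf]
    rw [h5, norm_smul]
    simp [abs_of_pos hσpos]
  have hMle2 : M ≤ 1/σ * ‖∑ v ∈ S, l v • v‖ := by
    rw [← this]; exact hq₀min hq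
  have hN : 0 ≤ ‖∑ v ∈ S, l v • v‖ := norm_nonneg _
  rw [one_div, inv_mul_eq_div, le_div_iff₀ hMpos]
  rw [one_div, inv_mul_eq_div, le_div_iff₀ hσpos] at hMle2
  nlinarith

theorem hoffman_cone (G : Finset H) : ∃ γ > (0:ℝ), ∀ (z : H) (b : ℝ), 0 ≤ b →
    (∀ v ∈ G, ⟪v, z⟫ ≤ b) → ∃ p, (∀ v ∈ G, ⟪v, p⟫ ≤ 0) ∧ ‖z - p‖ ≤ γ * b := by
  classical
  -- choose coefficient bounds
  have hB : ∀ S : Finset H, ∃ β > (0:ℝ),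
      LinearIndependent ℝ (fun v : S => (v : H)) → ∀ l : H → ℝ, (∀ v, 0 ≤ l v) →
        ∑ v ∈ S, l v ≤ β * ‖∑ v ∈ S, l v • v‖ := fun S => coef_bound S
  set B : Finset H → ℝ := fun S => (hB S).choose with hBdef
  have hBpos : ∀ S, 0 < B S := fun S => (hB S).choose_spec.1
  have hBspec : ∀ S : Finset H, LinearIndependent ℝ (fun v : S => (v : H)) →
      ∀ l : H → ℝ, (∀ v, 0 ≤ l v) → ∑ v ∈ S, l v ≤ B S * ‖∑ v ∈ S, l v • v‖ :=
    fun S => (hB S).choose_spec.2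
  have hpne : (G.powerset.image B).Nonempty :=
    ⟨B ∅, Finset.mem_image_of_mem B (Finset.empty_mem_powerset G)⟩
  set γ : ℝ := (G.powerset.image B).max' hpne with hγ
  have hγge : ∀ S ∈ G.powerset, B S ≤ γ :=
    fun S hS => Finset.le_max' _ _ (Finset.mem_image_of_mem B hS)
  have hγpos : 0 < γ :=
    lt_of_lt_of_le (hBpos ∅) (hγge ∅ (Finset.empty_mem_powerset G))
  refine ⟨γ, hγpos, fun z b hb hzb => ?_⟩
  -- projection onto the cone C
  set C : Set H := {p | ∀ v ∈ G, ⟪v, p⟫ ≤ 0} with hC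
  have hCclosed : IsClosed C := by
    have : C = ⋂ v ∈ (G : Set H), {p : H | ⟪v, p⟫ ≤ 0} := by
      ext p; simp [hC]
    rw [this]
    exact isClosed_biInter fun v _ =>
      isClosed_le (Continuous.inner continuous_const continuous_id) continuous_const
  have hCconv : Convex ℝ C := by
    intro p hp q hq a b' ha hb' hab
    intro v hv
    have := hp v hv; have := hq v hv
    rw [inner_add_right, real_inner_smul_right, real_inner_smul_right]
    nlinarith
  have hCne : C.Nonempty := ⟨0, fun v _ => by simp⟩
  obtain ⟨p, hpC, hpmin⟩ := exists_norm_eq_iInf_of_complete_convex hCne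
    (hCclosed.isComplete) hCconv z
  rw [norm_eq_iInf_iff_real_inner_le_zero hCconv hpC] at hpmin
  set u : H := z - p with hu
  have hCadd : ∀ c ∈ C, p + c ∈ C := by
    intro c hc v hv
    rw [inner_add_right]
    linarith [hpC v hv, hc v hv]
  have hdual : ∀ c ∈ C, ⟪u, c⟫ ≤ 0 := by
    intro c hc
    have := hpmin (p + c) (hCadd c hc)
    simpa using this
  have hup : ⟪u, p⟫ = 0 := by
    have h0 : (0:H) ∈ C := fun v _ => by simp
    have h1 := hpmin 0 h0
    have h2 := hpmin (p + p) (hCadd p hpC)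
    rw [zero_sub, inner_neg_right] at h1
    rw [add_sub_cancel_right] at h2
    linarith
  have humem : u ∈ coneSet G := mem_coneSet_of_dual G u (fun z' hz' => hdual z' hz')
  obtain ⟨S, hSsub, hSind, l, hlnn, hlu⟩ := cone_carath G u humem
  have huz : ⟪u, z⟫ = ‖u‖^2 := by
    have hz2 : z = u + p := by rw [hu]; abel
    rw [hz2]
    rw [inner_add_right, hup, add_zero, ← real_inner_self_eq_norm_sq]
  have hsum : ⟪u, z⟫ = ∑ v ∈ S, l v * ⟪v, z⟫ := by
    rw [hlu, sum_inner]
    exact Finset.sum_congr rfl fun v _ => real_inner_smul_left _ _ _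
  have hbd : ∑ v ∈ S, l v * ⟪v, z⟫ ≤ (∑ v ∈ S, l v) * b := by
    rw [Finset.sum_mul]
    exact Finset.sum_le_sum fun v hv =>
      mul_le_mul_of_nonneg_left (hzb v (hSsub hv)) (hlnn v)
  have hcoef : ∑ v ∈ S, l v ≤ B S * ‖u‖ := by
    have h3 := hBspec S hSind l hlnn
    rwa [← hlu] at h3
  have hBSγ : B S ≤ γ := hγge S (Finset.mem_powerset.2 hSsub)
  have hnu : ‖u‖^2 ≤ γ * ‖u‖ * b := by
    calc ‖u‖^2 = ⟪u, z⟫ := huz.symm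
      _ = ∑ v ∈ S, l v * ⟪v, z⟫ := hsum
      _ ≤ (∑ v ∈ S, l v) * b := hbd
      _ ≤ (B S * ‖u‖) * b := mul_le_mul_of_nonneg_right hcoef hb
      _ ≤ γ * ‖u‖ * b :=
          mul_le_mul_of_nonneg_right (mul_le_mul_of_nonneg_right hBSγ (norm_nonneg u)) hb
  refine ⟨p, hpC, ?_⟩
  rcases eq_or_lt_of_le (norm_nonneg u) with h | h
  · rw [hu] at h; rw [← h]; positivity
  · have h4 : ‖u‖ ≤ γ * b := by nlinarith
    rwa [hu] at h4

abbrev En (n : ℕ) := EuclideanSpace ℝ (Fin n)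

-- EReal helpers
lemma ereal_eq_real_of_add_coe {a b : ℝ} {X : EReal} (hbot : X ≠ ⊥)
    (h : (a : EReal) + X = (b : EReal)) : X = ((b - a : ℝ) : EReal) := by
  induction X with
  | bot => exact absurd rfl hbot
  | coe x =>
      rw [← EReal.coe_add] at h
      have : a + x = b := by exact_mod_cast h
      have : x = b - a := by linarith
      exact_mod_cast this
  | top =>
      rw [EReal.add_top_of_ne_bot (by exact (EReal.coe_ne_bot a))] at h
      exact absurd h.symm (EReal.coe_ne_top b)


-- distance sandwich lemma
lemma infEdist_eq_of_sandwich {H : Type*} [NormedAddCommGroup H] [InnerProductSpace ℝ H]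
    {A B : Set H} {vb q : H} {ρ : ℝ} (hρ : 0 < ρ) (hvbA : vb ∈ A) (hAB : A ⊆ B)
    (hBA : ∀ x ∈ B, dist x vb < ρ → x ∈ A) (hq : dist q vb < ρ/3) :
    EMetric.infEdist q A = EMetric.infEdist q B := by
  have hAne : A.Nonempty := ⟨vb, hvbA⟩
  have hBne : B.Nonempty := ⟨vb, hAB hvbA⟩
  have hdB : infDist q B ≤ dist q vb := infDist_le_dist_of_mem (hAB hvbA)
  have le1 : infDist q B ≤ infDist q A := infDist_le_infDist_of_subset hAB hAne
  have le2 : infDist q A ≤ infDist q B := by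
    by_contra hcon
    push_neg at hcon
    set ε : ℝ := min ((infDist q A - infDist q B)/2) (ρ/6) with hε
    have hεpos : 0 < ε := lt_min (by linarith) (by linarith)
    obtain ⟨b, hbB, hbd⟩ := (infDist_lt_iff hBne).1
      (show infDist q B < infDist q B + ε by linarith)
    have hbA : b ∈ A := by
      refine hBA b hbB ?_
      have h1 : dist b q < ρ/3 + ρ/6 + ρ/6 := by
        have := min_le_right ((infDist q A - infDist q B)/2) (ρ/6)
        rw [dist_comm]
        calc dist q b < infDist q B + ε := hbd
          _ ≤ dist q vb + ε := by linarith
          _ < ρ/3 + ρ/6 + ρ/6 := by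
              have : ε ≤ ρ/6 := min_le_right _ _
              linarith
      calc dist b vb ≤ dist b q + dist q vb := dist_triangle _ _ _
        _ < (ρ/3 + ρ/6 + ρ/6) + ρ/3 := by linarith
        _ = ρ := by ring
    have : infDist q A ≤ dist q b := infDist_le_dist_of_mem hbA
    have hεle : ε ≤ (infDist q A - infDist q B)/2 := min_le_left _ _
    linarith
  have heq : infDist q A = infDist q B := le_antisymm le2 le1
  have hAt : EMetric.infEdist q A ≠ ⊤ := Metric.infEdist_ne_top hAne
  have hBt : EMetric.infEdist q B ≠ ⊤ := Metric.infEdist_ne_top hBne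
  rw [← ENNReal.toReal_eq_toReal_iff' hAt hBt]
  exact heq

lemma isometry_const_add {H : Type*} [NormedAddCommGroup H] (a : H) :
    Isometry (fun x : H => a + x) :=
  Isometry.of_dist_eq fun x y => dist_add_left a x y

section Poly
variable {n m : ℕ} (φ : En n → EReal) (w : Fin m → En n) (r s : Fin m → ℝ) (xb vb : En n) (μ : ℝ)

def activeJ (j : Fin m) : Prop := ⟪w j, xb⟫ + r j * μ = s j

noncomputable def gensF : Finset (En n) := by
  classical
  exact (Finset.univ.filter (fun j => activeJ w r s xb μ j)).image
    (fun j => if r j < 0 then (-(r j))⁻¹ • w j - vb else w j)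

def KpSet : Set (En n) := {z | ∀ v ∈ gensF w r s xb vb μ, ⟪v, z⟫ ≤ 0}

lemma mem_gensF {v : En n} : v ∈ gensF w r s xb vb μ ↔
    ∃ j, activeJ w r s xb μ j ∧ v = (if r j < 0 then (-(r j))⁻¹ • w j - vb else w j) := by
  classical
  simp only [gensF]
  rw [Finset.mem_image]
  simp only [Finset.mem_filter, Finset.mem_univ, true_and]
  constructor
  · rintro ⟨j, hj, rfl⟩; exact ⟨j, by convert hj, rfl⟩
  · rintro ⟨j, hj, rfl⟩; exact ⟨j, by convert hj, rfl⟩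

variable {φ w r s xb vb μ}

lemma KpSet_cone_smul {z : En n} (hz : z ∈ KpSet w r s xb vb μ) {t : ℝ} (ht : 0 ≤ t) :
    t • z ∈ KpSet w r s xb vb μ := by
  intro v hv
  rw [real_inner_smul_right]
  exact mul_nonpos_of_nonneg_of_nonpos ht (hz v hv)

lemma KpSet_convexish {z k : En n} (hz : z ∈ KpSet w r s xb vb μ)
    (hk : k ∈ KpSet w r s xb vb μ) {a b : ℝ} (ha : 0 ≤ a) (hb : 0 ≤ b) :
    a • z + b • k ∈ KpSet w r s xb vb μ := by
  intro v hv
  rw [inner_add_right, real_inner_smul_right, real_inner_smul_right]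
  have := hz v hv; have := hk v hv
  nlinarith

/-- membership in Kp via active constraints -/
lemma mem_Kp_iff (hr : ∀ j, r j ≤ 0) {z : En n} :
    z ∈ KpSet w r s xb vb μ ↔
      ∀ j, activeJ w r s xb μ j → ⟪w j, z⟫ + r j * ⟪vb, z⟫ ≤ 0 := by
  constructor
  · intro hz j hj
    rcases lt_or_eq_of_le (hr j) with hrj | hrj
    · have hv := hz _ ((mem_gensF w r s xb vb μ).2 ⟨j, hj, rfl⟩)
      rw [if_pos hrj] at hv
      rw [inner_sub_left, real_inner_smul_left] at hv
      have hpos : 0 < -(r j) := by linarith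
      have h2 : ⟪w j, z⟫ / (-(r j)) ≤ ⟪vb, z⟫ := by
        rw [← inv_mul_eq_div]; linarith
      rw [div_le_iff₀ hpos] at h2
      nlinarith
    · have hv := hz _ ((mem_gensF w r s xb vb μ).2 ⟨j, hj, rfl⟩)
      rw [if_neg (by simp [← hrj])] at hv
      rw [hrj, zero_mul, add_zero]; exact hv
  · intro h v hv
    obtain ⟨j, hj, rfl⟩ := (mem_gensF w r s xb vb μ).1 hv
    rcases lt_or_eq_of_le (hr j) with hrj | hrj
    · rw [if_pos hrj, inner_sub_left, real_inner_smul_left]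
      have hpos : 0 < -(r j) := by linarith
      have h2 : ⟪w j, z⟫ / (-(r j)) ≤ ⟪vb, z⟫ := by
        rw [div_le_iff₀ hpos]; nlinarith [h j hj]
      rw [← inv_mul_eq_div] at h2
      linarith
    · rw [if_neg (by simp [← hrj])]
      have h3 := h j hj
      rw [hrj, zero_mul, add_zero] at h3; exact h3


lemma subgrad_real (hμ : φ xb = (μ : EReal)) {ξ : En n} (hξ : ξ ∈ ESubdiff φ xb)
    {z : En n} {ρy : ℝ} (hy : φ (xb + z) = ((ρy : ℝ) : EReal)) : μ + ⟪ξ, z⟫ ≤ ρy := by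
  have h1 := hξ (xb + z)
  rw [hμ, hy, add_sub_cancel_left, ← EReal.coe_add] at h1
  exact_mod_cast h1

lemma r_nonpos (hμ : φ xb = (μ : EReal))
    (hS : ∀ x ρ, (φ x ≤ ((ρ : ℝ) : EReal)) ↔ ∀ j, ⟪w j, x⟫ + r j * ρ ≤ s j) :
    ∀ j, r j ≤ 0 := by
  intro j
  by_contra hc
  push_neg at hc
  have hM : ∀ M : ℝ, μ ≤ M → ⟪w j, xb⟫ + r j * M ≤ s j := fun M hM =>
    (hS xb M).1 (by rw [hμ]; exact_mod_cast hM) j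
  set M : ℝ := max μ ((s j - ⟪w j, xb⟫ + 1) / r j) with hMdef
  have h1 := hM M (le_max_left _ _)
  have h2 : (s j - ⟪w j, xb⟫ + 1) / r j ≤ M := le_max_right _ _
  rw [div_le_iff₀ hc] at h2
  nlinarith

lemma exists_L1 (hμ : φ xb = (μ : EReal))
    (hS : ∀ x ρ, (φ x ≤ ((ρ : ℝ) : EReal)) ↔ ∀ j, ⟪w j, x⟫ + r j * ρ ≤ s j) :
    ∃ δ₁ > (0:ℝ), ∀ z : En n, ∀ ρ' : ℝ, ‖z‖ ≤ δ₁ → |ρ'| ≤ δ₁ →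
      ((φ (xb + z) ≤ (((μ + ρ' : ℝ)) : EReal)) ↔
        ∀ j, activeJ w r s xb μ j → ⟪w j, z⟫ + r j * ρ' ≤ 0) := by
  classical
  have hμS : ∀ j, ⟪w j, xb⟫ + r j * μ ≤ s j := (hS xb μ).1 (le_of_eq hμ)
  rcases Nat.eq_zero_or_pos m with hm | hm
  · exfalso
    have h0 : φ xb ≤ ((μ - 1 : ℝ) : EReal) :=
      (hS xb (μ - 1)).2 (fun j => absurd j.isLt (by omega))
    rw [hμ] at h0
    have : μ ≤ μ - 1 := by exact_mod_cast h0
    linarith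
  haveI : Nonempty (Fin m) := ⟨⟨0, hm⟩⟩
  set f : Fin m → ℝ := fun j => if activeJ w r s xb μ j then 1
    else (s j - (⟪w j, xb⟫ + r j * μ)) / (‖w j‖ + |r j| + 1) with hf
  set δ₁ : ℝ := Finset.univ.inf' Finset.univ_nonempty f with hδ
  have hδpos : 0 < δ₁ := by
    rw [hδ, Finset.lt_inf'_iff]
    intro j _
    by_cases h : activeJ w r s xb μ j
    · simp [hf, h]
    · simp only [hf, if_neg h]
      apply div_pos
      · have h2 := hμS j
        have h3 : ⟪w j, xb⟫ + r j * μ ≠ s j := h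
        have : ⟪w j, xb⟫ + r j * μ < s j := lt_of_le_of_ne h2 h3
        linarith
      · positivity
  refine ⟨δ₁, hδpos, fun z ρ' hz hρ => ?_⟩
  have hkey : ∀ j, ¬ activeJ w r s xb μ j → ⟪w j, xb + z⟫ + r j * (μ + ρ') ≤ s j := by
    intro j hj
    have hδle : δ₁ ≤ f j := Finset.inf'_le _ (Finset.mem_univ j)
    simp only [hf, if_neg hj] at hδle
    have hCS : ⟪w j, z⟫ ≤ ‖w j‖ * δ₁ := by
      calc ⟪w j, z⟫ ≤ |⟪w j, z⟫| := le_abs_self _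
        _ ≤ ‖w j‖ * ‖z‖ := abs_real_inner_le_norm _ _
        _ ≤ ‖w j‖ * δ₁ := mul_le_mul_of_nonneg_left hz (norm_nonneg _)
    have h2 : r j * ρ' ≤ |r j| * δ₁ := by
      calc r j * ρ' ≤ |r j * ρ'| := le_abs_self _
        _ = |r j| * |ρ'| := abs_mul _ _
        _ ≤ |r j| * δ₁ := mul_le_mul_of_nonneg_left hρ (abs_nonneg _)
    have hslack : 0 < s j - (⟪w j, xb⟫ + r j * μ) :=
      sub_pos.2 (lt_of_le_of_ne (hμS j) hj)
    have hda : 0 < ‖w j‖ + |r j| + 1 := by positivity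
    rw [le_div_iff₀ hda] at hδle
    rw [inner_add_right]
    nlinarith [hδpos, norm_nonneg (w j), abs_nonneg (r j)]
  constructor
  · intro h j hj
    have h4 := (hS (xb + z) (μ + ρ')).1 h j
    rw [inner_add_right] at h4
    have heq : ⟪w j, xb⟫ + r j * μ = s j := hj
    ring_nf at h4 heq ⊢
    linarith
  · intro h
    apply (hS (xb + z) (μ + ρ')).2
    intro j
    by_cases hj : activeJ w r s xb μ j
    · have h5 := h j hj
      have heq : ⟪w j, xb⟫ + r j * μ = s j := hj
      rw [inner_add_right]
      ring_nf at h5 heq ⊢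
      linarith
    · exact hkey j hj


lemma wh_mem (hμ : φ xb = (μ : EReal))
    (hS : ∀ x ρ, (φ x ≤ ((ρ : ℝ) : EReal)) ↔ ∀ j, ⟪w j, x⟫ + r j * ρ ≤ s j)
    (hbot : ∀ x, φ x ≠ ⊥) {j : Fin m} (hj : activeJ w r s xb μ j) (hrj : r j < 0) :
    (-(r j))⁻¹ • w j ∈ ESubdiff φ xb := by
  intro y
  rcases eq_or_ne (φ y) ⊤ with hy | hy
  · rw [hy]; exact le_top
  · set ρy : ℝ := (φ y).toReal with hρy
    have hyy : φ y = ((ρy : ℝ) : EReal) := (EReal.coe_toReal hy (hbot y)).symm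
    have hcon := (hS y ρy).1 (le_of_eq hyy) j
    have heq : ⟪w j, xb⟫ + r j * μ = s j := hj
    rw [hμ, hyy, ← EReal.coe_add, EReal.coe_le_coe_iff]
    rw [inner_sub_right, real_inner_smul_left, real_inner_smul_left]
    have hpos : 0 < -(r j) := by linarith
    have h2 : ⟪w j, y⟫ - ⟪w j, xb⟫ ≤ (-(r j)) * (ρy - μ) := by nlinarith
    have h3 : (-(r j))⁻¹ * (⟪w j, y⟫ - ⟪w j, xb⟫) ≤ ρy - μ := by
      rw [inv_mul_eq_div, div_le_iff₀ hpos]; nlinarith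
    nlinarith [h3]

lemma w0_mem (hμ : φ xb = (μ : EReal))
    (hS : ∀ x ρ, (φ x ≤ ((ρ : ℝ) : EReal)) ↔ ∀ j, ⟪w j, x⟫ + r j * ρ ≤ s j)
    (hstat : vb ∈ ESubdiff φ xb)
    (hbot : ∀ x, φ x ≠ ⊥) {j : Fin m} (hj : activeJ w r s xb μ j) (hrj : r j = 0) :
    vb + w j ∈ ESubdiff φ xb := by
  intro y
  rcases eq_or_ne (φ y) ⊤ with hy | hy
  · rw [hy]; exact le_top
  · set ρy : ℝ := (φ y).toReal with hρy
    have hyy : φ y = ((ρy : ℝ) : EReal) := (EReal.coe_toReal hy (hbot y)).symm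
    have hcon := (hS y ρy).1 (le_of_eq hyy) j
    have heq : ⟪w j, xb⟫ + r j * μ = s j := hj
    rw [hrj] at hcon heq
    have hvb : μ + ⟪vb, y - xb⟫ ≤ ρy := by
      have h1 := hstat y
      rw [hμ, hyy, ← EReal.coe_add, EReal.coe_le_coe_iff] at h1
      exact h1
    rw [hμ, hyy, ← EReal.coe_add, EReal.coe_le_coe_iff, inner_add_left]
    rw [inner_sub_right]
    have : ⟪w j, y⟫ ≤ ⟪w j, xb⟫ := by nlinarith
    rw [inner_sub_right] at hvb
    rw [inner_sub_right]
    linarith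

lemma claim1 {δ₁ : ℝ}
    (hμ : φ xb = (μ : EReal))
    (hstat : vb ∈ ESubdiff φ xb)
    (hL1 : ∀ z : En n, ∀ ρ' : ℝ, ‖z‖ ≤ δ₁ → |ρ'| ≤ δ₁ →
      ((φ (xb + z) ≤ (((μ + ρ' : ℝ)) : EReal)) ↔
        ∀ j, activeJ w r s xb μ j → ⟪w j, z⟫ + r j * ρ' ≤ 0))
    (hr : ∀ j, r j ≤ 0)
    {z : En n} (hz : z ∈ KpSet w r s xb vb μ) (hz1 : ‖z‖ ≤ δ₁) (hz2 : |⟪vb, z⟫| ≤ δ₁) :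
    φ (xb + z) = (((μ + ⟪vb, z⟫ : ℝ)) : EReal) := by
  have hub : φ (xb + z) ≤ (((μ + ⟪vb, z⟫ : ℝ)) : EReal) := by
    apply (hL1 z ⟪vb, z⟫ hz1 hz2).2
    exact (mem_Kp_iff hr).1 hz
  have hlb := hstat (xb + z)
  rw [hμ, add_sub_cancel_left, ← EReal.coe_add] at hlb
  exact le_antisymm hub hlb

lemma K_eq_Kp {δ₁ : ℝ} (hδ₁ : 0 < δ₁)
    (hμ : φ xb = (μ : EReal))
    (hS : ∀ x ρ, (φ x ≤ ((ρ : ℝ) : EReal)) ↔ ∀ j, ⟪w j, x⟫ + r j * ρ ≤ s j)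
    (hstat : vb ∈ ESubdiff φ xb)
    (hbot : ∀ x, φ x ≠ ⊥)
    (hL1 : ∀ z : En n, ∀ ρ' : ℝ, ‖z‖ ≤ δ₁ → |ρ'| ≤ δ₁ →
      ((φ (xb + z) ≤ (((μ + ρ' : ℝ)) : EReal)) ↔
        ∀ j, activeJ w r s xb μ j → ⟪w j, z⟫ + r j * ρ' ≤ 0)) :
    {ξ : En n | vb ∈ ESubdiff φ xb ∧ ∀ y ∈ ESubdiff φ xb, ⟪ξ, y - vb⟫ ≤ 0}
      = KpSet w r s xb vb μ := by
  have hr := r_nonpos (φ := φ) (w := w) (r := r) (s := s) (xb := xb) (μ := μ) hμ hS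
  ext z
  simp only [Set.mem_setOf_eq]
  constructor
  · rintro ⟨-, hz⟩
    intro v hv
    obtain ⟨j, hj, rfl⟩ := (mem_gensF w r s xb vb μ).1 hv
    rcases lt_or_eq_of_le (hr j) with hrj | hrj
    · rw [if_pos hrj]
      have := hz _ (wh_mem hμ hS hbot hj hrj)
      rwa [real_inner_comm] at this
    · rw [if_neg (by simp [← hrj])]
      have := hz _ (w0_mem hμ hS hstat hbot hj hrj)
      rw [add_sub_cancel_left] at this
      rwa [real_inner_comm] at this
  · intro hz
    refine ⟨hstat, fun u hu => ?_⟩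
    -- scale z to be small
    set τ : ℝ := δ₁ / (‖z‖ + ‖vb‖ * ‖z‖ + 1) with hτ
    have hτpos : 0 < τ := by
      apply div_pos hδ₁
      positivity
    have hzτ : τ • z ∈ KpSet w r s xb vb μ := KpSet_cone_smul hz hτpos.le
    have hn1 : ‖τ • z‖ ≤ δ₁ := by
      rw [norm_smul, Real.norm_eq_abs, abs_of_pos hτpos, hτ]
      rw [div_mul_eq_mul_div, div_le_iff₀ (by positivity)]
      nlinarith [norm_nonneg z, norm_nonneg vb, mul_nonneg (norm_nonneg vb) (norm_nonneg z)]
    have hn2 : |⟪vb, τ • z⟫| ≤ δ₁ := by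
      rw [real_inner_smul_right, abs_mul, abs_of_pos hτpos]
      calc τ * |⟪vb, z⟫| ≤ τ * (‖vb‖ * ‖z‖) :=
            mul_le_mul_of_nonneg_left (abs_real_inner_le_norm _ _) hτpos.le
        _ ≤ δ₁ := by
            rw [hτ, div_mul_eq_mul_div, div_le_iff₀ (by positivity)]
            nlinarith [norm_nonneg z, norm_nonneg vb, mul_nonneg (norm_nonneg vb) (norm_nonneg z)]
    have hφτ := claim1 hμ hstat hL1 hr hzτ hn1 hn2
    have h1 := subgrad_real (φ := φ) (xb := xb) hμ hu hφτ
    rw [real_inner_smul_right, real_inner_smul_right] at h1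
    have h4 : ⟪u, z⟫ ≤ ⟪vb, z⟫ := le_of_mul_le_mul_left (by linarith) hτpos
    have hcz : ⟪z, u⟫ = ⟪u, z⟫ := real_inner_comm _ _
    have hcv : ⟪z, vb⟫ = ⟪vb, z⟫ := real_inner_comm _ _
    rw [inner_sub_right]
    linarith


/-- active-constraint bound on generators -/
lemma Fbound {δ₁ : ℝ}
    (hμ : φ xb = (μ : EReal))
    (hL1 : ∀ z : En n, ∀ ρ' : ℝ, ‖z‖ ≤ δ₁ → |ρ'| ≤ δ₁ →
      ((φ (xb + z) ≤ (((μ + ρ' : ℝ)) : EReal)) ↔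
        ∀ j, activeJ w r s xb μ j → ⟪w j, z⟫ + r j * ρ' ≤ 0))
    (hr : ∀ j, r j ≤ 0) (hstat : vb ∈ ESubdiff φ xb)
    {e : En n} {ρe : ℝ} (he : ‖e‖ ≤ δ₁) (hρe : |ρe - μ| ≤ δ₁)
    (hφe : φ (xb + e) = ((ρe : ℝ) : EReal)) :
    (0 ≤ (ρe - μ) - ⟪vb, e⟫) ∧
      ∀ v ∈ gensF w r s xb vb μ, ⟪v, e⟫ ≤ (ρe - μ) - ⟪vb, e⟫ := by
  have hFnn : 0 ≤ (ρe - μ) - ⟪vb, e⟫ := by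
    have := subgrad_real (φ := φ) (xb := xb) hμ hstat hφe
    linarith
  refine ⟨hFnn, ?_⟩
  have hact := (hL1 e (ρe - μ) he hρe).1 (by
    rw [show μ + (ρe - μ) = ρe by ring]; exact le_of_eq hφe)
  intro v hv
  obtain ⟨j, hj, rfl⟩ := (mem_gensF w r s xb vb μ).1 hv
  have h1 := hact j hj
  rcases lt_or_eq_of_le (hr j) with hrj | hrj
  · rw [if_pos hrj, inner_sub_left, real_inner_smul_left]
    have hpos : 0 < -(r j) := by linarith
    have h2 : (-(r j))⁻¹ * ⟪w j, e⟫ ≤ ρe - μ := by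
      rw [inv_mul_eq_div, div_le_iff₀ hpos]; nlinarith
    linarith
  · rw [if_neg (by simp [← hrj])]
    rw [hrj, zero_mul, add_zero] at h1; linarith

/-- convexity of the epigraph constraint system -/
lemma Sconvex
    (hS : ∀ x ρ, (φ x ≤ ((ρ : ℝ) : EReal)) ↔ ∀ j, ⟪w j, x⟫ + r j * ρ ≤ s j)
    {x1 x2 : En n} {ρ1 ρ2 τ : ℝ} (hτ0 : 0 ≤ τ) (hτ1 : τ ≤ 1)
    (h1 : φ x1 ≤ ((ρ1 : ℝ) : EReal)) (h2 : φ x2 ≤ ((ρ2 : ℝ) : EReal)) :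
    φ (x1 + τ • (x2 - x1)) ≤ (((1 - τ) * ρ1 + τ * ρ2 : ℝ) : EReal) := by
  apply (hS _ _).2
  intro j
  have c1 := (hS x1 ρ1).1 h1 j
  have c2 := (hS x2 ρ2).1 h2 j
  rw [inner_add_right, real_inner_smul_right, inner_sub_right]
  nlinarith [mul_le_mul_of_nonneg_left c1 (by linarith : (0:ℝ) ≤ 1 - τ),
    mul_le_mul_of_nonneg_left c2 hτ0]

/-- `∂φ(x̄+d) ⊆ v̄ + N_K(d)` for small `d ∈ K` -/
lemma subgrad_upper {δ₁ : ℝ} (hδ₁ : 0 < δ₁)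
    (hμ : φ xb = (μ : EReal)) (hstat : vb ∈ ESubdiff φ xb)
    (hL1 : ∀ z : En n, ∀ ρ' : ℝ, ‖z‖ ≤ δ₁ → |ρ'| ≤ δ₁ →
      ((φ (xb + z) ≤ (((μ + ρ' : ℝ)) : EReal)) ↔
        ∀ j, activeJ w r s xb μ j → ⟪w j, z⟫ + r j * ρ' ≤ 0))
    (hr : ∀ j, r j ≤ 0)
    {d u : En n} (hd : d ∈ KpSet w r s xb vb μ)
    (hdn : ‖d‖ ≤ δ₁ / (1 + ‖vb‖) / 2)
    (hu : u ∈ ESubdiff φ (xb + d)) :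
    ∀ k ∈ KpSet w r s xb vb μ, ⟪u - vb, k - d⟫ ≤ 0 := by
  intro k hk
  set δ₂ : ℝ := δ₁ / (1 + ‖vb‖) with hδ₂
  have hδ₂pos : 0 < δ₂ := by positivity
  have hsm : ∀ z : En n, z ∈ KpSet w r s xb vb μ → ‖z‖ ≤ δ₂ →
      φ (xb + z) = (((μ + ⟪vb, z⟫ : ℝ)) : EReal) := by
    intro z hz hzn
    refine claim1 hμ hstat hL1 hr hz ?_ ?_
    · calc ‖z‖ ≤ δ₂ := hzn
        _ ≤ δ₁ := by rw [hδ₂, div_le_iff₀ (by positivity)]; nlinarith [norm_nonneg vb]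
    · calc |⟪vb, z⟫| ≤ ‖vb‖ * ‖z‖ := abs_real_inner_le_norm _ _
        _ ≤ ‖vb‖ * δ₂ := mul_le_mul_of_nonneg_left hzn (norm_nonneg _)
        _ ≤ δ₁ := by rw [hδ₂, mul_div_assoc']; rw [div_le_iff₀ (by positivity)]
                     nlinarith [norm_nonneg vb]
  set τ : ℝ := min ((δ₂/2) / (‖k - d‖ + 1)) 1 with hτ
  have hτpos : 0 < τ := lt_min (by positivity) one_pos
  have hτ1 : τ ≤ 1 := min_le_right _ _
  set e : En n := d + τ • (k - d) with he
  have heK : e ∈ KpSet w r s xb vb μ := by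
    have : e = (1 - τ) • d + τ • k := by
      rw [he]; module
    rw [this]
    exact KpSet_convexish hd hk (by linarith) hτpos.le
  have hen : ‖e‖ ≤ δ₂ := by
    have h1 : τ * ‖k - d‖ ≤ δ₂/2 := by
      have h2 : τ ≤ (δ₂/2) / (‖k - d‖ + 1) := min_le_left _ _
      rw [le_div_iff₀ (by positivity)] at h2
      nlinarith [norm_nonneg (k - d), hτpos.le]
    calc ‖e‖ ≤ ‖d‖ + ‖τ • (k - d)‖ := norm_add_le _ _
      _ = ‖d‖ + τ * ‖k - d‖ := by
          rw [norm_smul, Real.norm_eq_abs, abs_of_pos hτpos]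
      _ ≤ δ₂/2 + δ₂/2 := by
          have : ‖d‖ ≤ δ₂/2 := hdn
          linarith
      _ = δ₂ := by ring
  have hφd : φ (xb + d) = (((μ + ⟪vb, d⟫ : ℝ)) : EReal) :=
    hsm d hd (by have : ‖d‖ ≤ δ₂/2 := hdn; linarith)
  have hφe : φ (xb + e) = (((μ + ⟪vb, e⟫ : ℝ)) : EReal) := hsm e heK hen
  have hsub := hu (xb + e)
  rw [hφd, hφe, ← EReal.coe_add, EReal.coe_le_coe_iff] at hsub
  have hdiff : (xb + e) - (xb + d) = τ • (k - d) := by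
    rw [he]; abel
  rw [hdiff, real_inner_smul_right] at hsub
  have hvbe : ⟪vb, e⟫ = ⟪vb, d⟫ + τ * ⟪vb, k - d⟫ := by
    rw [he, inner_add_right, real_inner_smul_right]
  rw [hvbe] at hsub
  have h3 : τ * ⟪u, k - d⟫ ≤ τ * ⟪vb, k - d⟫ := by linarith
  have h4 : ⟪u, k - d⟫ ≤ ⟪vb, k - d⟫ := le_of_mul_le_mul_left h3 hτpos
  rw [inner_sub_left]
  linarith


/-- `v̄ + η ∈ ∂φ(x̄+d)` for small `d ∈ K`, `η ∈ N_K(d)` small -/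
lemma subgrad_lower {δ₁ γ : ℝ} (hδ₁ : 0 < δ₁) (hγpos : 0 < γ)
    (hμ : φ xb = (μ : EReal)) (hstat : vb ∈ ESubdiff φ xb) (hbot : ∀ x, φ x ≠ ⊥)
    (hS : ∀ x ρ, (φ x ≤ ((ρ : ℝ) : EReal)) ↔ ∀ j, ⟪w j, x⟫ + r j * ρ ≤ s j)
    (hL1 : ∀ z : En n, ∀ ρ' : ℝ, ‖z‖ ≤ δ₁ → |ρ'| ≤ δ₁ →
      ((φ (xb + z) ≤ (((μ + ρ' : ℝ)) : EReal)) ↔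
        ∀ j, activeJ w r s xb μ j → ⟪w j, z⟫ + r j * ρ' ≤ 0))
    (hr : ∀ j, r j ≤ 0)
    (hγ : ∀ z : En n, ∀ b : ℝ, 0 ≤ b → (∀ v ∈ gensF w r s xb vb μ, ⟪v, z⟫ ≤ b) →
      ∃ p, (∀ v ∈ gensF w r s xb vb μ, ⟪v, p⟫ ≤ 0) ∧ ‖z - p‖ ≤ γ * b)
    {d η : En n} (hd : d ∈ KpSet w r s xb vb μ)
    (hηKp : ∀ k ∈ KpSet w r s xb vb μ, ⟪η, k - d⟫ ≤ 0)
    (hηγ : ‖η‖ * γ ≤ 1) (hη1 : ‖η‖ ≤ 1)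
    (hdn : ‖d‖ ≤ δ₁ / (2 * (2 + ‖vb‖)) / 2) :
    vb + η ∈ ESubdiff φ (xb + d) := by
  set δ₃ : ℝ := δ₁ / (2 * (2 + ‖vb‖)) with hδ₃
  have hδ₃pos : 0 < δ₃ := by positivity
  have hδ₃δ₁ : δ₃ * (2 + ‖vb‖) * 2 = δ₁ := by
    rw [hδ₃]; field_simp
  have hδ₃le : δ₃ ≤ δ₁ := by nlinarith [norm_nonneg vb]
  have hηd : ⟪η, d⟫ = 0 := by
    have h0 : (0 : En n) ∈ KpSet w r s xb vb μ := fun v _ => by simp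
    have h2d : d + d ∈ KpSet w r s xb vb μ := fun v hv => by
      rw [inner_add_right]; linarith [hd v hv]
    have ha := hηKp 0 h0
    have hb := hηKp (d + d) h2d
    rw [zero_sub, inner_neg_right] at ha
    rw [add_sub_cancel_right] at hb
    linarith
  have hηKp' : ∀ p ∈ KpSet w r s xb vb μ, ⟪η, p⟫ ≤ 0 := by
    intro p hp
    have hpd : p + d ∈ KpSet w r s xb vb μ := fun v hv => by
      rw [inner_add_right]; linarith [hp v hv, hd v hv]
    have := hηKp (p + d) hpd
    rwa [add_sub_cancel_right] at this
  -- the local inequality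
  have hlocal : ∀ e : En n, ‖e‖ ≤ δ₃ →
      (((μ + ⟪vb, e⟫ + ⟪η, e⟫ : ℝ)) : EReal) ≤ φ (xb + e) := by
    intro e hen
    rcases eq_or_ne (φ (xb + e)) ⊤ with hy | hy
    · rw [hy]; exact le_top
    set ρe : ℝ := (φ (xb + e)).toReal with hρe
    have hφe : φ (xb + e) = ((ρe : ℝ) : EReal) := (EReal.coe_toReal hy (hbot _)).symm
    have hvbe : |⟪vb, e⟫| ≤ ‖vb‖ * δ₃ := by
      calc |⟪vb, e⟫| ≤ ‖vb‖ * ‖e‖ := abs_real_inner_le_norm _ _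
        _ ≤ ‖vb‖ * δ₃ := mul_le_mul_of_nonneg_left hen (norm_nonneg _)
    have hηe : ⟪η, e⟫ ≤ ‖η‖ * ‖e‖ := real_inner_le_norm _ _
    have hlb : μ + ⟪vb, e⟫ ≤ ρe := subgrad_real (φ := φ) (xb := xb) hμ hstat hφe
    by_cases hub : ρe - μ ≤ δ₁
    · have habs : |ρe - μ| ≤ δ₁ := by
        rw [abs_le]
        constructor
        · have : -(‖vb‖ * δ₃) ≤ ⟪vb, e⟫ := neg_le_of_abs_le hvbe
          nlinarith [norm_nonneg vb]
        · exact hub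
      obtain ⟨hFnn, hFb⟩ := Fbound (vb := vb) hμ hL1 hr hstat (le_trans hen hδ₃le) habs hφe
      obtain ⟨p, hpKp, hpb⟩ := hγ e ((ρe - μ) - ⟪vb, e⟫) hFnn hFb
      have hηp : ⟪η, p⟫ ≤ 0 := hηKp' p hpKp
      have hsplit : ⟪η, e⟫ = ⟪η, p⟫ + ⟪η, e - p⟫ := by
        rw [← inner_add_right]; congr 1; abel
      have hcs : ⟪η, e - p⟫ ≤ ‖η‖ * ‖e - p‖ := real_inner_le_norm _ _
      have h5 : ‖η‖ * ‖e - p‖ ≤ ‖η‖ * (γ * ((ρe - μ) - ⟪vb, e⟫)) :=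
        mul_le_mul_of_nonneg_left hpb (norm_nonneg _)
      have h6 : ‖η‖ * (γ * ((ρe - μ) - ⟪vb, e⟫)) ≤ (ρe - μ) - ⟪vb, e⟫ := by
        rw [← mul_assoc]
        nlinarith
      rw [hφe, EReal.coe_le_coe_iff]
      linarith
    · push_neg at hub
      rw [hφe, EReal.coe_le_coe_iff]
      have h7 : ⟪η, e⟫ ≤ δ₃ := by nlinarith [norm_nonneg η, norm_nonneg e]
      have h8 : ⟪vb, e⟫ ≤ ‖vb‖ * δ₃ := le_of_abs_le hvbe
      nlinarith [norm_nonneg vb]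
  -- globalize by convexity
  have hφd : φ (xb + d) = (((μ + ⟪vb, d⟫ : ℝ)) : EReal) := by
    refine claim1 hμ hstat hL1 hr hd (le_trans (le_trans hdn (by linarith)) hδ₃le) ?_
    calc |⟪vb, d⟫| ≤ ‖vb‖ * ‖d‖ := abs_real_inner_le_norm _ _
      _ ≤ ‖vb‖ * δ₃ := mul_le_mul_of_nonneg_left (le_trans hdn (by linarith)) (norm_nonneg _)
      _ ≤ δ₁ := by nlinarith [norm_nonneg vb]
  intro y
  rcases eq_or_ne (φ y) ⊤ with hy | hy
  · rw [hy]; exact le_top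
  set ρy : ℝ := (φ y).toReal with hρy
  have hyy : φ y = ((ρy : ℝ) : EReal) := (EReal.coe_toReal hy (hbot _)).symm
  set τ : ℝ := min ((δ₃/2) / (‖y - (xb + d)‖ + 1)) 1 with hτ
  have hτpos : 0 < τ := lt_min (by positivity) one_pos
  have hτ1 : τ ≤ 1 := min_le_right _ _
  set e : En n := d + τ • (y - (xb + d)) with he
  have hen : ‖e‖ ≤ δ₃ := by
    have h1 : τ * ‖y - (xb + d)‖ ≤ δ₃/2 := by
      have h2 : τ ≤ (δ₃/2) / (‖y - (xb + d)‖ + 1) := min_le_left _ _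
      rw [le_div_iff₀ (by positivity)] at h2
      nlinarith [norm_nonneg (y - (xb + d)), hτpos.le]
    calc ‖e‖ ≤ ‖d‖ + ‖τ • (y - (xb + d))‖ := norm_add_le _ _
      _ = ‖d‖ + τ * ‖y - (xb + d)‖ := by
          rw [norm_smul, Real.norm_eq_abs, abs_of_pos hτpos]
      _ ≤ δ₃/2 + δ₃/2 := by
          have : ‖d‖ ≤ δ₃/2 := hdn
          linarith
      _ = δ₃ := by ring
  have hcomb : φ (xb + e) ≤ ((((1 - τ) * (μ + ⟪vb, d⟫) + τ * ρy : ℝ)) : EReal) := by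
    have hx1 : xb + e = (xb + d) + τ • (y - (xb + d)) := by rw [he]; abel
    rw [hx1]
    exact Sconvex hS hτpos.le hτ1 (le_of_eq hφd) (le_of_eq hyy)
  have hloc := hlocal e hen
  have hreal : μ + ⟪vb, e⟫ + ⟪η, e⟫ ≤ (1 - τ) * (μ + ⟪vb, d⟫) + τ * ρy := by
    have := le_trans hloc hcomb
    exact_mod_cast this
  have hvbe : ⟪vb, e⟫ = ⟪vb, d⟫ + τ * ⟪vb, y - (xb + d)⟫ := by
    rw [he, inner_add_right, real_inner_smul_right]
  have hηe : ⟪η, e⟫ = τ * ⟪η, y - (xb + d)⟫ := by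
    rw [he, inner_add_right, real_inner_smul_right, hηd, zero_add]
  rw [hvbe, hηe] at hreal
  have hdiv : μ + ⟪vb, d⟫ + (⟪vb, y - (xb + d)⟫ + ⟪η, y - (xb + d)⟫) ≤ ρy := by
    have h9 : τ * (μ + ⟪vb, d⟫ + (⟪vb, y - (xb + d)⟫ + ⟪η, y - (xb + d)⟫)) ≤ τ * ρy := by
      nlinarith
    exact le_of_mul_le_mul_left h9 hτpos
  rw [hφd, hyy, ← EReal.coe_add, EReal.coe_le_coe_iff, inner_add_left]
  linarith


/-- away from the cone, subgradients are far from `v̄` -/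
lemma offK_bound {δ₁ γ : ℝ} (hδ₁ : 0 < δ₁) (hγpos : 0 < γ)
    (hμ : φ xb = (μ : EReal)) (hstat : vb ∈ ESubdiff φ xb)
    (hL1 : ∀ z : En n, ∀ ρ' : ℝ, ‖z‖ ≤ δ₁ → |ρ'| ≤ δ₁ →
      ((φ (xb + z) ≤ (((μ + ρ' : ℝ)) : EReal)) ↔
        ∀ j, activeJ w r s xb μ j → ⟪w j, z⟫ + r j * ρ' ≤ 0))
    (hr : ∀ j, r j ≤ 0)
    (hγ : ∀ z : En n, ∀ b : ℝ, 0 ≤ b → (∀ v ∈ gensF w r s xb vb μ, ⟪v, z⟫ ≤ b) →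
      ∃ p, (∀ v ∈ gensF w r s xb vb μ, ⟪v, p⟫ ≤ 0) ∧ ‖z - p‖ ≤ γ * b)
    {z : En n} (hzK : z ∉ KpSet w r s xb vb μ)
    {ρz : ℝ} (hφz : φ (xb + z) = ((ρz : ℝ) : EReal))
    (hzn : ‖z‖ ≤ δ₁) (hρz : |ρz - μ| ≤ δ₁)
    (hsize : ‖z‖ + γ * (|ρz - μ| + ‖vb‖ * ‖z‖) ≤ δ₁ / (1 + ‖vb‖))
    {u : En n} (hu : u ∈ ESubdiff φ (xb + z)) :
    1 ≤ γ * ‖u - vb‖ := by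
  obtain ⟨hFnn, hFb⟩ := Fbound (vb := vb) hμ hL1 hr hstat hzn hρz hφz
  set F : ℝ := (ρz - μ) - ⟪vb, z⟫ with hF
  have hFpos : 0 < F := by
    rcases lt_or_eq_of_le hFnn with h | h
    · exact h
    · exfalso
      exact hzK (fun v hv => le_trans (hFb v hv) (le_of_eq h.symm))
  obtain ⟨p, hpKp, hpb⟩ := hγ z F hFnn hFb
  have hFle : F ≤ |ρz - μ| + ‖vb‖ * ‖z‖ := by
    have h1 : -⟪vb, z⟫ ≤ |⟪vb, z⟫| := neg_le_abs _
    have h2 : |⟪vb, z⟫| ≤ ‖vb‖ * ‖z‖ := abs_real_inner_le_norm _ _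
    have h3 : ρz - μ ≤ |ρz - μ| := le_abs_self _
    rw [hF]; linarith
  have hpn : ‖p‖ ≤ δ₁ / (1 + ‖vb‖) := by
    calc ‖p‖ = ‖z - (z - p)‖ := by congr 1; abel
      _ ≤ ‖z‖ + ‖z - p‖ := norm_sub_le _ _
      _ ≤ ‖z‖ + γ * F := by linarith
      _ ≤ ‖z‖ + γ * (|ρz - μ| + ‖vb‖ * ‖z‖) := by nlinarith
      _ ≤ δ₁ / (1 + ‖vb‖) := hsize
  have hφp : φ (xb + p) = (((μ + ⟪vb, p⟫ : ℝ)) : EReal) := by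
    refine claim1 hμ hstat hL1 hr hpKp ?_ ?_
    · calc ‖p‖ ≤ δ₁ / (1 + ‖vb‖) := hpn
        _ ≤ δ₁ := by rw [div_le_iff₀ (by positivity)]; nlinarith [norm_nonneg vb]
    · calc |⟪vb, p⟫| ≤ ‖vb‖ * ‖p‖ := abs_real_inner_le_norm _ _
        _ ≤ ‖vb‖ * (δ₁ / (1 + ‖vb‖)) := mul_le_mul_of_nonneg_left hpn (norm_nonneg _)
        _ ≤ δ₁ := by
            rw [mul_div_assoc', div_le_iff₀ (by positivity)]
            nlinarith [norm_nonneg vb]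
  have hsub := hu (xb + p)
  rw [hφz, hφp, ← EReal.coe_add, EReal.coe_le_coe_iff] at hsub
  have hdiff : (xb + p) - (xb + z) = p - z := by abel
  rw [hdiff] at hsub
  have h4 : F ≤ ⟪vb - u, p - z⟫ := by
    rw [inner_sub_left, inner_sub_right, inner_sub_right] at *
    rw [hF]; linarith
  have h5 : ⟪vb - u, p - z⟫ ≤ ‖vb - u‖ * ‖p - z‖ := real_inner_le_norm _ _
  have h6 : ‖p - z‖ ≤ γ * F := by rw [norm_sub_rev]; exact hpb
  have h7 : F ≤ ‖vb - u‖ * (γ * F) := by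
    calc F ≤ ⟪vb - u, p - z⟫ := h4
      _ ≤ ‖vb - u‖ * ‖p - z‖ := h5
      _ ≤ ‖vb - u‖ * (γ * F) := mul_le_mul_of_nonneg_left h6 (norm_nonneg _)
  have h8 : 1 ≤ γ * ‖vb - u‖ := by nlinarith [norm_nonneg (vb - u)]
  rwa [norm_sub_rev] at h8

end Poly

/-- With `ψ = g + φ`, `K = N_{∂φ(x̄)}(−∇g(x̄))` and
`ψ̃(x) = g(x) − ⟨∇g(x̄), x − x̄⟩ + ι_K(x − x̄)`, for any `α ∈ (0,1)`,
`ψ` satisfies the KL property at `x̄` with exponent `α` iff `ψ̃` does.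
Here the value `ψ(x) − ψ(x̄)` is encoded by the real number `t` with
`ψ(x) = ψ(x̄) + t`, distances to (possibly empty) sets are measured with
`EMetric.infEdist` (the distance to `∅` being `+∞`), and
`ψ̃(x) − ψ̃(x̄) = g(x) − ⟨∇g(x̄), x − x̄⟩ − g(x̄)` for `x − x̄ ∈ K`. -/
theorem stmt11 (n : ℕ) (hn : 0 < n)
    (g : EuclideanSpace ℝ (Fin n) → ℝ) (hg : ContDiff ℝ 1 g)
    (φ : EuclideanSpace ℝ (Fin n) → EReal)
    (hproper : (∀ x, φ x ≠ ⊥) ∧ (∃ x, φ x ≠ ⊤))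
    (hpoly : ∃ (m : ℕ) (w : Fin m → EuclideanSpace ℝ (Fin n)) (r s : Fin m → ℝ),
      {p : EuclideanSpace ℝ (Fin n) × ℝ | φ p.1 ≤ (p.2 : EReal)} =
        {p : EuclideanSpace ℝ (Fin n) × ℝ | ∀ j, (inner ℝ (w j) p.1 : ℝ) + r j * p.2 ≤ s j})
    (xb : EuclideanSpace ℝ (Fin n))
    (hstat : -(gradient g xb) ∈ ESubdiff φ xb)
    (K : Set (EuclideanSpace ℝ (Fin n)))
    (hK : K = normalCone (ESubdiff φ xb) (-(gradient g xb)))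
    (α : ℝ) (hα : α ∈ Set.Ioo (0 : ℝ) 1) :
    ((∃ c > (0 : ℝ), ∃ ε > (0 : ℝ), ∃ ν > (0 : ℝ), ∀ x : EuclideanSpace ℝ (Fin n),
        ∀ t : ℝ, ‖x - xb‖ < ε →
        (g x : EReal) + φ x = ((g xb : EReal) + φ xb) + ((t : ℝ) : EReal) →
        0 < t → t < ν →
        ENNReal.ofReal (c * t ^ α) ≤
          EMetric.infEdist (0 : EuclideanSpace ℝ (Fin n))
            {v | ∃ ξ ∈ ESubdiff φ x, v = gradient g x + ξ}) ↔
     (∃ c > (0 : ℝ), ∃ ε > (0 : ℝ), ∃ ν > (0 : ℝ), ∀ x : EuclideanSpace ℝ (Fin n),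
        x - xb ∈ K → ‖x - xb‖ < ε →
        0 < g x - (inner ℝ (gradient g xb) (x - xb) : ℝ) - g xb →
        g x - (inner ℝ (gradient g xb) (x - xb) : ℝ) - g xb < ν →
        ENNReal.ofReal (c * (g x - (inner ℝ (gradient g xb) (x - xb) : ℝ) - g xb) ^ α) ≤
          EMetric.infEdist (gradient g xb - gradient g x) (normalCone K (x - xb)))) := by
  classical
  obtain ⟨m, w, r, s, hpoly⟩ := hpoly
  have hS : ∀ x ρ, (φ x ≤ ((ρ : ℝ) : EReal)) ↔ ∀ j, ⟪w j, x⟫ + r j * ρ ≤ s j := by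
    intro x ρ
    have := Set.ext_iff.1 hpoly (x, ρ)
    simpa using this
  set vb : EuclideanSpace ℝ (Fin n) := -(gradient g xb) with hvb
  have hbot := hproper.1
  obtain ⟨y₀, hy₀⟩ := hproper.2
  have hμtop : φ xb ≠ ⊤ := by
    intro h
    have h1 := hstat y₀
    rw [h, EReal.top_add_of_ne_bot (EReal.coe_ne_bot _)] at h1
    exact hy₀ (top_le_iff.1 h1)
  set μ : ℝ := (φ xb).toReal with hμdef
  have hμ : φ xb = (μ : EReal) := (EReal.coe_toReal hμtop (hbot xb)).symm
  have hr := r_nonpos (φ := φ) (w := w) (r := r) (s := s) (xb := xb) (μ := μ) hμ hS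
  obtain ⟨δ₁, hδ₁, hL1⟩ := exists_L1 (φ := φ) (w := w) (r := r) (s := s) (xb := xb) (μ := μ) hμ hS
  obtain ⟨γ, hγpos, hγ⟩ := hoffman_cone (gensF w r s xb vb μ)
  have hKp : K = KpSet w r s xb vb μ := by
    rw [hK]
    exact K_eq_Kp hδ₁ hμ hS hstat hbot hL1
  -- convenient constants
  set δ₂ : ℝ := δ₁ / (1 + ‖vb‖) with hδ₂
  have hδ₂pos : 0 < δ₂ := by positivity
  have hδ₂δ₁ : δ₂ ≤ δ₁ := by
    rw [hδ₂, div_le_iff₀ (by positivity)]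
    nlinarith [norm_nonneg vb]
  set ρ0 : ℝ := min (1/γ) 1 with hρ0
  have hρ0pos : 0 < ρ0 := lt_min (by positivity) one_pos
  set δm : ℝ := min (δ₂/2) (δ₁ / (2 * (2 + ‖vb‖)) / 2) with hδm
  have hδmpos : 0 < δm := lt_min (by positivity) (by positivity)
  -- small-norm facts
  have hsmall : ∀ z : EuclideanSpace ℝ (Fin n), ‖z‖ ≤ δ₂ → ‖z‖ ≤ δ₁ ∧ |⟪vb, z⟫| ≤ δ₁ := by
    intro z hz
    constructor
    · exact le_trans hz hδ₂δ₁
    · calc |⟪vb, z⟫| ≤ ‖vb‖ * ‖z‖ := abs_real_inner_le_norm _ _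
        _ ≤ ‖vb‖ * δ₂ := mul_le_mul_of_nonneg_left hz (norm_nonneg _)
        _ ≤ δ₁ := by
            rw [hδ₂, mul_div_assoc', div_le_iff₀ (by positivity)]
            nlinarith [norm_nonneg vb]
  -- membership of vb in subdifferentials along K
  have hvbmem : ∀ d : EuclideanSpace ℝ (Fin n), d ∈ KpSet w r s xb vb μ → ‖d‖ ≤ δm →
      vb ∈ ESubdiff φ (xb + d) := by
    intro d hd hdn
    have h := subgrad_lower (η := (0 : EuclideanSpace ℝ (Fin n)))
      hδ₁ hγpos hμ hstat hbot hS hL1 hr hγ hd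
      (fun k hk => by simp) (by simp) (by simp)
      (le_trans hdn (min_le_right _ _))
    simpa using h
  -- the distance equality
  have hdisteq : ∀ d : EuclideanSpace ℝ (Fin n), d ∈ KpSet w r s xb vb μ → ‖d‖ ≤ δm →
      ∀ q : EuclideanSpace ℝ (Fin n), dist q vb < ρ0/3 →
        EMetric.infEdist q (ESubdiff φ (xb + d)) =
          EMetric.infEdist q ((fun η => vb + η) ''
            {η | ∀ k ∈ KpSet w r s xb vb μ, ⟪η, k - d⟫ ≤ 0}) := by
    intro d hd hdn q hq
    apply infEdist_eq_of_sandwich hρ0pos (hvbmem d hd hdn)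
    · intro u hu
      exact ⟨u - vb, subgrad_upper hδ₁ hμ hstat hL1 hr hd
        (le_trans hdn (min_le_left _ _)) hu, add_sub_cancel vb u⟩
    · rintro x ⟨η, hη, rfl⟩ hxd
      have hnd : ‖η‖ < ρ0 := by
        rwa [dist_eq_norm, add_sub_cancel_left] at hxd
      have h1 : ‖η‖ * γ ≤ 1 := by
        have : ‖η‖ ≤ 1/γ := le_trans hnd.le (min_le_left _ _)
        rw [le_div_iff₀ hγpos] at this
        linarith
      have h2 : ‖η‖ ≤ 1 := le_trans hnd.le (min_le_right _ _)
      exact subgrad_lower hδ₁ hγpos hμ hstat hbot hS hL1 hr hγ hd hη h1 h2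
        (le_trans hdn (min_le_right _ _))
    · exact hq
  -- rewriting the LHS distance
  have hLdist : ∀ x : EuclideanSpace ℝ (Fin n),
      EMetric.infEdist (0 : EuclideanSpace ℝ (Fin n))
          {v | ∃ ξ ∈ ESubdiff φ x, v = gradient g x + ξ} =
        EMetric.infEdist (-(gradient g x)) (ESubdiff φ x) := by
    intro x
    have hset : {v | ∃ ξ ∈ ESubdiff φ x, v = gradient g x + ξ} =
        (fun ξ => gradient g x + ξ) '' (ESubdiff φ x) := by
      ext v
      simp only [Set.mem_setOf_eq, Set.mem_image]
      constructor
      · rintro ⟨ξ, h1, h2⟩; exact ⟨ξ, h1, h2.symm⟩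
      · rintro ⟨ξ, h1, h2⟩; exact ⟨ξ, h1, h2.symm⟩
    rw [hset]
    have h0 : (0 : EuclideanSpace ℝ (Fin n)) = gradient g x + (-(gradient g x)) := by simp
    rw [h0]; unfold EMetric.infEdist; rw [Metric.infEDist_image (isometry_const_add _)]
  -- rewriting the RHS distance
  have hRdist : ∀ d : EuclideanSpace ℝ (Fin n), d ∈ KpSet w r s xb vb μ → ∀ x,
      EMetric.infEdist (gradient g xb - gradient g x) (normalCone (KpSet w r s xb vb μ) d) =
        EMetric.infEdist (-(gradient g x)) ((fun η => vb + η) ''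
          {η | ∀ k ∈ KpSet w r s xb vb μ, ⟪η, k - d⟫ ≤ 0}) := by
    intro d hd x
    have h0 : -(gradient g x) = vb + (gradient g xb - gradient g x) := by
      rw [hvb]; abel
    rw [h0]; unfold EMetric.infEdist; rw [Metric.infEDist_image (isometry_const_add _)]
    congr 1
    ext η
    simp only [normalCone, Set.mem_setOf_eq]
    exact ⟨fun h => h.2, fun h => ⟨hd, h⟩⟩
  -- gradient continuity
  have hgrad : Continuous (fun x => gradient g x) := by
    unfold gradient
    exact (InnerProductSpace.toDual ℝ _).symm.continuous.comp (hg.continuous_fderiv one_ne_zero)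
  have hgc : Continuous g := hg.continuous
  obtain ⟨hα0, hα1⟩ := hα
  constructor
  · rintro ⟨c, hc, ε, hε, ν, hν, hKL⟩
    obtain ⟨εg, hεg, hεgP⟩ := Metric.continuousAt_iff.1 hgrad.continuousAt (ρ0/3) (by positivity)
    refine ⟨c, hc, min ε (min εg δm), by positivity, ν, hν, ?_⟩
    intro x hxK hxn hpos hlt
    have hxε : ‖x - xb‖ < ε := lt_of_lt_of_le hxn (min_le_left _ _)
    have hxg : ‖x - xb‖ < εg := lt_of_lt_of_le hxn (le_trans (min_le_right _ _) (min_le_left _ _))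
    have hxm : ‖x - xb‖ ≤ δm := le_of_lt (lt_of_lt_of_le hxn (le_trans (min_le_right _ _) (min_le_right _ _)))
    have hdK : x - xb ∈ KpSet w r s xb vb μ := by rw [hKp] at hxK; exact hxK
    have hx : xb + (x - xb) = x := add_sub_cancel xb x
    have hxδ₂ : ‖x - xb‖ ≤ δ₂ := le_trans hxm (le_trans (min_le_left _ _) (by linarith))
    obtain ⟨hs1, hs2⟩ := hsmall (x - xb) hxδ₂
    have hφx : φ x = (((μ + ⟪vb, x - xb⟫ : ℝ)) : EReal) := by
      have h := claim1 hμ hstat hL1 hr hdK hs1 hs2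
      rwa [hx] at h
    set t : ℝ := g x - ⟪gradient g xb, x - xb⟫ - g xb with htdef
    have hinner : ⟪vb, x - xb⟫ = -⟪gradient g xb, x - xb⟫ := by
      rw [hvb, inner_neg_left]
    have heq : (g x : EReal) + φ x = ((g xb : EReal) + φ xb) + ((t : ℝ) : EReal) := by
      rw [hφx, hμ, ← EReal.coe_add, ← EReal.coe_add, ← EReal.coe_add, EReal.coe_eq_coe_iff]
      rw [htdef, hinner]; ring
    have hKLx := hKL x t hxε heq hpos hlt
    rw [hLdist x] at hKLx
    have hdq : dist (-(gradient g x)) vb < ρ0/3 := by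
      rw [hvb, dist_neg_neg]
      have := hεgP (show dist x xb < εg by rwa [dist_eq_norm])
      exact this
    have he1 : EMetric.infEdist (-(gradient g x)) (ESubdiff φ x) =
        EMetric.infEdist (-(gradient g x)) ((fun η => vb + η) ''
          {η | ∀ k ∈ KpSet w r s xb vb μ, ⟪η, k - (x - xb)⟫ ≤ 0}) := by
      have h := hdisteq (x - xb) hdK hxm (-(gradient g x)) hdq
      rwa [hx] at h
    rw [he1] at hKLx
    rw [hKp, hRdist (x - xb) hdK x]
    exact hKLx
  · rintro ⟨c, hc, ε, hε, ν, hν, hKL⟩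
    set c₂ : ℝ := min c (1/(2*γ)) with hc₂def
    have hc₂ : 0 < c₂ := lt_min hc (by positivity)
    set ν₂ : ℝ := min ν (min 1 (min (δ₁/4) (δ₂ / (4 * (γ + 1))))) with hν₂def
    have hν₂ : 0 < ν₂ := lt_min hν (lt_min one_pos (lt_min (by positivity) (by positivity)))
    obtain ⟨εg, hεg, hεgP⟩ := Metric.continuousAt_iff.1 hgrad.continuousAt
      (min (ρ0/3) (1/(2*γ))) (lt_min (by positivity) (by positivity))
    obtain ⟨εc, hεc, hεcP⟩ := Metric.continuousAt_iff.1 hgc.continuousAt ν₂ hν₂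
    set ε₂ : ℝ := min (min ε δm) (min (min εc εg) (δ₂ / (4 * (1 + γ * ‖vb‖)))) with hε₂def
    have hε₂ : 0 < ε₂ := by
      refine lt_min (lt_min hε hδmpos) (lt_min (lt_min hεc hεg) ?_)
      have : 0 ≤ γ * ‖vb‖ := mul_nonneg hγpos.le (norm_nonneg _)
      positivity
    refine ⟨c₂, hc₂, ε₂, hε₂, ν₂, hν₂, ?_⟩
    intro x t hxn heq ht0 htν
    have hx : xb + (x - xb) = x := add_sub_cancel xb x
    have hxε : ‖x - xb‖ < ε := lt_of_lt_of_le hxn (le_trans (min_le_left _ _) (min_le_left _ _))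
    have hxm : ‖x - xb‖ ≤ δm := le_of_lt (lt_of_lt_of_le hxn (le_trans (min_le_left _ _) (min_le_right _ _)))
    have hxc : dist x xb < εc := by
      rw [dist_eq_norm]
      exact lt_of_lt_of_le hxn (le_trans (min_le_right _ _) (le_trans (min_le_left _ _) (min_le_left _ _)))
    have hxg : dist x xb < εg := by
      rw [dist_eq_norm]
      exact lt_of_lt_of_le hxn (le_trans (min_le_right _ _) (le_trans (min_le_left _ _) (min_le_right _ _)))
    have hxsz : ‖x - xb‖ ≤ δ₂ / (4 * (1 + γ * ‖vb‖)) :=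
      le_of_lt (lt_of_lt_of_le hxn (le_trans (min_le_right _ _) (min_le_right _ _)))
    have hxδ₂ : ‖x - xb‖ ≤ δ₂ := le_trans hxm (le_trans (min_le_left _ _) (by linarith))
    obtain ⟨hs1, hs2⟩ := hsmall (x - xb) hxδ₂
    -- g-continuity
    have hgdiff : |g x - g xb| < ν₂ := by
      have := hεcP hxc
      rwa [Real.dist_eq] at this
    have hgraddiff : dist (gradient g x) (gradient g xb) < min (ρ0/3) (1/(2*γ)) := hεgP hxg
    -- φ x is real
    have hφreal : φ x = (((g xb + μ + t - g x : ℝ)) : EReal) := by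
      apply ereal_eq_real_of_add_coe (hbot x)
      rw [heq, hμ, ← EReal.coe_add, ← EReal.coe_add]
    have hν₂1 : ν₂ ≤ 1 := le_trans (min_le_right _ _) (min_le_left _ _)
    have hν₂δ : ν₂ ≤ δ₁/4 := le_trans (min_le_right _ _) (le_trans (min_le_right _ _) (min_le_left _ _))
    have hν₂γ : ν₂ ≤ δ₂ / (4 * (γ + 1)) := le_trans (min_le_right _ _) (le_trans (min_le_right _ _) (min_le_right _ _))
    have hρzb : |(g xb + μ + t - g x) - μ| ≤ 2*ν₂ := by
      have h1 : |g x - g xb| ≤ ν₂ := hgdiff.le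
      rw [abs_le] at h1 ⊢
      obtain ⟨h1a, h1b⟩ := h1
      constructor <;> nlinarith [ht0, htν.le]
    have hρzδ : |(g xb + μ + t - g x) - μ| ≤ δ₁ := le_trans hρzb (by linarith)
    by_cases hzK : (x - xb) ∈ KpSet w r s xb vb μ
    · -- on the cone: transfer from the KL hypothesis
      have hφx2 : φ x = (((μ + ⟪vb, x - xb⟫ : ℝ)) : EReal) := by
        have h := claim1 hμ hstat hL1 hr hzK hs1 hs2
        rwa [hx] at h
      have hinner : ⟪vb, x - xb⟫ = -⟪gradient g xb, x - xb⟫ := by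
        rw [hvb, inner_neg_left]
      have ht : t = g x - ⟪gradient g xb, x - xb⟫ - g xb := by
        rw [hφreal] at hφx2
        have h2 : g xb + μ + t - g x = μ + ⟪vb, x - xb⟫ := by exact_mod_cast hφx2
        rw [hinner] at h2
        linarith
      have h1 := hKL x (by rw [hKp]; exact hzK) hxε (by rw [← ht]; exact ht0)
        (by rw [← ht]; exact lt_of_lt_of_le htν (min_le_left _ _))
      rw [hKp, hRdist (x - xb) hzK x, ← ht] at h1
      rw [hLdist x]
      have hdq : dist (-(gradient g x)) vb < ρ0/3 := by
        rw [hvb, dist_neg_neg]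
        exact lt_of_lt_of_le hgraddiff (min_le_left _ _)
      have he1 : EMetric.infEdist (-(gradient g x)) (ESubdiff φ x) =
          EMetric.infEdist (-(gradient g x)) ((fun η => vb + η) ''
            {η | ∀ k ∈ KpSet w r s xb vb μ, ⟪η, k - (x - xb)⟫ ≤ 0}) := by
        have h := hdisteq (x - xb) hzK hxm (-(gradient g x)) hdq
        rwa [hx] at h
      rw [he1]
      refine le_trans (ENNReal.ofReal_le_ofReal ?_) h1
      have htα : 0 ≤ t ^ α := (Real.rpow_pos_of_pos ht0 α).le
      exact mul_le_mul_of_nonneg_right (min_le_left _ _) htα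
    · -- off the cone: the distance is bounded below by a constant
      have hsize : ‖x - xb‖ + γ * (|(g xb + μ + t - g x) - μ| + ‖vb‖ * ‖x - xb‖) ≤ δ₁ / (1 + ‖vb‖) := by
        have h1 : ‖x - xb‖ * (1 + γ * ‖vb‖) ≤ δ₂/4 := by
          rw [← le_div_iff₀ (by positivity : (0:ℝ) < 1 + γ * ‖vb‖)]
          calc ‖x - xb‖ ≤ δ₂ / (4 * (1 + γ * ‖vb‖)) := hxsz
            _ = δ₂/4 / (1 + γ * ‖vb‖) := (div_div δ₂ 4 (1 + γ * ‖vb‖)).symm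
        have h2 : γ * |(g xb + μ + t - g x) - μ| ≤ γ * (2*ν₂) :=
          mul_le_mul_of_nonneg_left hρzb hγpos.le
        have h3 : γ * (2*ν₂) ≤ δ₂/2 := by
          have := mul_le_mul_of_nonneg_left hν₂γ (by positivity : (0:ℝ) ≤ 2*γ)
          calc γ * (2*ν₂) = 2*γ*ν₂ := by ring
            _ ≤ 2*γ*(δ₂ / (4 * (γ + 1))) := this
            _ ≤ δ₂/2 := by
                rw [mul_div_assoc']
                rw [div_le_div_iff₀ (by positivity) (by norm_num)]
                nlinarith [hδ₂pos.le]
        have h4 : δ₂ = δ₁ / (1 + ‖vb‖) := hδ₂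
        rw [← h4]
        nlinarith [norm_nonneg (x - xb), mul_nonneg hγpos.le (norm_nonneg vb),
          norm_nonneg vb, hδ₂pos.le]
      have hφz : φ (xb + (x - xb)) = (((g xb + μ + t - g x : ℝ)) : EReal) := by
        rw [hx]; exact hφreal
      have h1u : ∀ u, u ∈ ESubdiff φ x → 1 ≤ γ * ‖u - vb‖ := by
        intro u hu
        exact offK_bound hδ₁ hγpos hμ hstat hL1 hr hγ hzK hφz hs1 hρzδ hsize
          (by rw [hx]; exact hu)
      rw [hLdist x]
      apply EMetric.le_infEdist.2
      intro y hy
      rw [edist_dist, dist_eq_norm]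
      apply ENNReal.ofReal_le_ofReal
      have h5 : ‖-(gradient g x) - y‖ = ‖y + gradient g x‖ := by
        rw [show -(gradient g x) - y = -(y + gradient g x) by abel, norm_neg]
      rw [h5]
      have h6 : 1 ≤ γ * ‖y - vb‖ := h1u y hy
      have h7 : ‖y + gradient g x‖ ≥ ‖y - vb‖ - ‖gradient g xb - gradient g x‖ := by
        have : y + gradient g x = (y - vb) - (gradient g xb - gradient g x) := by
          rw [hvb]; abel
        rw [this]
        exact le_trans (sub_le_sub_left (le_refl _) _) (norm_sub_norm_le _ _) |>.trans (le_refl _)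
      have h8 : ‖gradient g xb - gradient g x‖ < 1/(2*γ) := by
        rw [norm_sub_rev, ← dist_eq_norm]
        exact lt_of_lt_of_le hgraddiff (min_le_right _ _)
      have h9 : 1/γ ≤ ‖y - vb‖ := by
        rw [div_le_iff₀ hγpos]; linarith [mul_comm γ ‖y - vb‖]
      have h10 : 1/(2*γ) ≤ ‖y + gradient g x‖ := by
        have : 1/γ - 1/(2*γ) ≤ ‖y - vb‖ - ‖gradient g xb - gradient g x‖ := by
          have hgg : ‖gradient g xb - gradient g x‖ ≤ 1/(2*γ) := h8.le
          linarith
        have heq2 : 1/γ - 1/(2*γ) = 1/(2*γ) := by field_simp; ring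
        linarith
      have h11 : t ^ α ≤ 1 :=
        Real.rpow_le_one ht0.le (le_trans htν.le hν₂1) hα0.le
      calc c₂ * t ^ α ≤ c₂ * 1 := mul_le_mul_of_nonneg_left h11 hc₂.le
        _ = c₂ := mul_one _
        _ ≤ 1/(2*γ) := min_le_right _ _
        _ ≤ ‖y + gradient g x‖ := h10
end

section
/- Let g : ℝⁿ → ℝ be continuously differentiable and let φ : ℝⁿ → ℝ ∪ {+∞} be a proper polyhedral convex function. Let x̄ satisfy −∇g(x̄) ∈ ∂φ(x̄), set ψ = g + φ, K = N_{∂φ(x̄)}(−∇g(x̄)), and ψ̃(x) = g(x) − ⟨∇g(x̄), x − x̄⟩ + ι_K(x − x̄). If x̄ is a local minimizer of ψ, then x̄ is also a local minimizer of ψ̃, and the sets Ω := {x : ψ(x) = ψ(x̄)} and Ω̃ := {x : ψ̃(x) = ψ̃(x̄)} coincide on some neighborhood of x̄. -/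
open scoped BigOperators

open Filter Set

local notation "⟪" x ", " y "⟫" => @inner ℝ _ _ x y

lemma grad_inner {n : ℕ} (g : EuclideanSpace ℝ (Fin n) → ℝ) (x e : EuclideanSpace ℝ (Fin n)) :
    ⟪gradient g x, e⟫ = fderiv ℝ g x e := by
  simp [gradient, InnerProductSpace.toDual_symm_apply]

lemma deriv_aux {n : ℕ} (g : EuclideanSpace ℝ (Fin n) → ℝ) (hg : ContDiff ℝ 1 g)
    (x e : EuclideanSpace ℝ (Fin n)) (c : ℝ)
    (h : ∀ᶠ t in nhdsWithin (0:ℝ) (Set.Ioi 0), g x ≤ g (x + t • e) + t * c) :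
    0 ≤ ⟪gradient g x, e⟫ + c := by
  rw [grad_inner]
  set F : ℝ → ℝ := fun t => g (x + t • e) + t * c with hF
  have hd : HasDerivAt F (fderiv ℝ g x e + c) 0 := by
    have h1 : HasDerivAt (fun t : ℝ => x + t • e) e 0 := by
      simpa using ((hasDerivAt_id (0:ℝ)).smul_const e).const_add x
    have h2 : HasFDerivAt g (fderiv ℝ g x) (x + (0:ℝ) • e) := by
      simpa using ((hg.differentiable one_ne_zero) x).hasFDerivAt
    exact (h2.comp_hasDerivAt 0 h1).add (hasDerivAt_mul_const c)
  have hslope := hasDerivAt_iff_tendsto_slope.mp hd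
  have hmono : Tendsto (slope F 0) (nhdsWithin (0:ℝ) (Set.Ioi 0))
      (nhds (fderiv ℝ g x e + c)) :=
    hslope.mono_left (nhdsWithin_mono _ (fun t ht => ne_of_gt ht))
  refine ge_of_tendsto hmono ?_
  filter_upwards [h, self_mem_nhdsWithin] with t ht ht0
  have hF0 : F 0 = g x := by simp [hF]
  rw [slope_def_field, hF0]
  have h1 : (0:ℝ) ≤ F t - g x := by simpa [hF] using ht
  have ht0' : (0:ℝ) < t := ht0
  exact div_nonneg h1 (by linarith)

open Classical in
/-- The `EReal`-valued indicator function of a set `K` (0 on `K`, `+∞` outside). -/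
noncomputable def eIndicator {n : ℕ} (K : Set (EuclideanSpace ℝ (Fin n)))
    (x : EuclideanSpace ℝ (Fin n)) : EReal :=
  if x ∈ K then 0 else ⊤


lemma eIndicator_of_mem {n : ℕ} {K : Set (EuclideanSpace ℝ (Fin n))}
    {x : EuclideanSpace ℝ (Fin n)} (h : x ∈ K) : eIndicator K x = 0 := if_pos h

lemma eIndicator_of_not_mem {n : ℕ} {K : Set (EuclideanSpace ℝ (Fin n))}
    {x : EuclideanSpace ℝ (Fin n)} (h : x ∉ K) : eIndicator K x = ⊤ := if_neg h

set_option maxHeartbeats 2000000 in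
/-- With `ψ = g + φ`, `K = N_{∂φ(x̄)}(−∇g(x̄))` and
`ψ̃(x) = g(x) − ⟨∇g(x̄), x − x̄⟩ + ι_K(x − x̄)`: if `x̄` is a local minimizer of `ψ`,
then it is a local minimizer of `ψ̃`, and `{ψ = ψ(x̄)}` coincides with
`{ψ̃ = ψ̃(x̄)}` on a neighborhood of `x̄`. -/
theorem stmt12 (n : ℕ) (hn : 0 < n)
    (g : EuclideanSpace ℝ (Fin n) → ℝ) (hg : ContDiff ℝ 1 g)
    (φ : EuclideanSpace ℝ (Fin n) → EReal)
    (hproper : (∀ x, φ x ≠ ⊥) ∧ (∃ x, φ x ≠ ⊤))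
    (hpoly : ∃ (m : ℕ) (w : Fin m → EuclideanSpace ℝ (Fin n)) (r s : Fin m → ℝ),
      {p : EuclideanSpace ℝ (Fin n) × ℝ | φ p.1 ≤ (p.2 : EReal)} =
        {p : EuclideanSpace ℝ (Fin n) × ℝ | ∀ j, (inner ℝ (w j) p.1 : ℝ) + r j * p.2 ≤ s j})
    (xb : EuclideanSpace ℝ (Fin n))
    (hstat : -(gradient g xb) ∈ ESubdiff φ xb)
    (K : Set (EuclideanSpace ℝ (Fin n)))
    (hK : K = normalCone (ESubdiff φ xb) (-(gradient g xb)))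
    (ψ : EuclideanSpace ℝ (Fin n) → EReal)
    (hψ : ψ = fun x => (g x : EReal) + φ x)
    (ψt : EuclideanSpace ℝ (Fin n) → EReal)
    (hψt : ψt = fun x =>
      (((g x - (inner ℝ (gradient g xb) (x - xb) : ℝ)) : ℝ) : EReal) + eIndicator K (x - xb))
    (hloc : IsLocalMin ψ xb) :
    IsLocalMin ψt xb ∧
    ∃ U ∈ nhds xb, {x ∈ U | ψ x = ψ xb} = {x ∈ U | ψt x = ψt xb} := by
  classical
  obtain ⟨hbot, y₀, hy₀⟩ := hproper
  obtain ⟨m, w, r, s, hpoly⟩ := hpoly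
  set v : EuclideanSpace ℝ (Fin n) := -(gradient g xb) with hv
  have hstat' : ∀ y, φ xb + ((⟪v, y - xb⟫ : ℝ) : EReal) ≤ φ y := hstat
  have hR : ∀ (x : EuclideanSpace ℝ (Fin n)) (t : ℝ),
      φ x ≤ (t : EReal) ↔ ∀ j, ⟪w j, x⟫ + r j * t ≤ s j := by
    intro x t
    exact Set.ext_iff.mp hpoly (x, t)
  -- φ xb is finite
  have hxbtop : φ xb ≠ ⊤ := by
    intro h
    have := hstat' y₀
    rw [h, EReal.top_add_coe] at this
    exact hy₀ (top_le_iff.mp this)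
  set μ : ℝ := (φ xb).toReal with hμdef
  have hμ : φ xb = (μ : EReal) := (EReal.coe_toReal hxbtop (hbot xb)).symm
  -- all r j ≤ 0
  have hrle : ∀ j, r j ≤ 0 := by
    intro j
    by_contra hj
    push_neg at hj
    set u : ℝ := (φ y₀).toReal with hu
    have huy : φ y₀ = (u : EReal) := (EReal.coe_toReal hy₀ (hbot y₀)).symm
    have h1 : ∀ t : ℝ, u ≤ t → ⟪w j, y₀⟫ + r j * t ≤ s j := by
      intro t htt
      exact (hR y₀ t).mp (huy ▸ (EReal.coe_le_coe_iff.mpr htt)) j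
    have h2 := h1 (max u ((s j + 1 - ⟪w j, y₀⟫) / r j)) (le_max_left _ _)
    have h3 : (s j + 1 - ⟪w j, y₀⟫) / r j ≤ max u ((s j + 1 - ⟪w j, y₀⟫) / r j) :=
      le_max_right _ _
    have h4 : s j + 1 - ⟪w j, y₀⟫ ≤ r j * max u ((s j + 1 - ⟪w j, y₀⟫) / r j) := by
      rw [div_le_iff₀ hj] at h3
      linarith [h3]
    linarith
  -- the indices with negative r
  set Jm : Finset (Fin m) := Finset.univ.filter (fun j => r j < 0) with hJm
  set c : Fin m → EuclideanSpace ℝ (Fin n) → ℝ :=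
    fun j x => (⟪w j, x⟫ - s j) / (-(r j)) with hc
  set a : Fin m → EuclideanSpace ℝ (Fin n) := fun j => (-(r j))⁻¹ • (w j) with ha
  have hcdiff : ∀ j (x d : EuclideanSpace ℝ (Fin n)), c j (x + d) = c j x + ⟪a j, d⟫ := by
    intro j x d
    simp only [hc, ha, inner_add_right, real_inner_smul_left]
    ring
  have hceq : ∀ j ∈ Jm, ∀ (x : EuclideanSpace ℝ (Fin n)) (t : ℝ),
      (⟪w j, x⟫ + r j * t ≤ s j ↔ c j x ≤ t) := by
    intro j hj x t
    have hrj : r j < 0 := (Finset.mem_filter.mp hj).2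
    rw [hc]
    rw [div_le_iff₀ (by linarith : (0:ℝ) < -(r j))]
    constructor <;> intro h <;> nlinarith
  have hDfeas : ∀ x : EuclideanSpace ℝ (Fin n),
      (∀ j, r j = 0 → ⟪w j, x⟫ ≤ s j) ∨ (∃ j, r j = 0 ∧ s j < ⟪w j, x⟫) := by
    intro x
    by_cases h : ∀ j, r j = 0 → ⟪w j, x⟫ ≤ s j
    · exact Or.inl h
    · push_neg at h
      obtain ⟨j, hj1, hj2⟩ := h
      exact Or.inr ⟨j, hj1, hj2⟩
  have hφtop : ∀ x : EuclideanSpace ℝ (Fin n), ¬ (∀ j, r j = 0 → ⟪w j, x⟫ ≤ s j) → φ x = ⊤ := by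
    intro x hx
    by_contra hne
    push_neg at hx
    obtain ⟨j, hj1, hj2⟩ := hx
    have hxr : φ x = (((φ x).toReal : ℝ) : EReal) := (EReal.coe_toReal hne (hbot x)).symm
    have := (hR x ((φ x).toReal)).mp (le_of_eq hxr) j
    rw [hj1] at this
    linarith
  have hxbD : ∀ j, r j = 0 → ⟪w j, xb⟫ ≤ s j := by
    intro j hj
    have := (hR xb μ).mp (le_of_eq hμ) j
    rw [hj] at this
    linarith
  have hJne : Jm.Nonempty := by
    by_contra hJe
    rw [Finset.not_nonempty_iff_eq_empty] at hJe
    have hall0 : ∀ j, r j = 0 := by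
      intro j
      rcases lt_or_eq_of_le (hrle j) with h | h
      · have hmem : j ∈ Jm := by
          rw [hJm]
          exact Finset.mem_filter.mpr ⟨Finset.mem_univ j, h⟩
        rw [hJe] at hmem
        exact absurd hmem (Finset.notMem_empty j)
      · exact h
    have : φ xb ≤ ((μ - 1 : ℝ) : EReal) := by
      rw [hR]
      intro j
      rw [hall0 j]
      have := hxbD j (hall0 j)
      linarith
    rw [hμ, EReal.coe_le_coe_iff] at this
    linarith
  set realφ : EuclideanSpace ℝ (Fin n) → ℝ := fun x => Jm.sup' hJne (fun j => c j x) with hrealφ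
  have hφD : ∀ x : EuclideanSpace ℝ (Fin n), (∀ j, r j = 0 → ⟪w j, x⟫ ≤ s j) →
      φ x = ((realφ x : ℝ) : EReal) := by
    intro x hx
    refine le_antisymm ?_ ?_
    · rw [hR]
      intro j
      rcases lt_or_eq_of_le (hrle j) with h | h
      · have hjm : j ∈ Jm := Finset.mem_filter.mpr ⟨Finset.mem_univ j, h⟩
        rw [hceq j hjm]
        exact Finset.le_sup' (fun j => c j x) hjm
      · rw [h]
        have := hx j h
        linarith
    · by_contra hlt
      push_neg at hlt
      have hne : φ x ≠ ⊤ := ne_top_of_lt hlt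
      have hxr : φ x = (((φ x).toReal : ℝ) : EReal) := (EReal.coe_toReal hne (hbot x)).symm
      set u : ℝ := (φ x).toReal with hu
      have hulr : u < realφ x := by
        rw [hxr] at hlt
        exact_mod_cast hlt
      obtain ⟨j0, hj0m, hj0⟩ := Finset.exists_mem_eq_sup' hJne (fun j => c j x)
      have := (hR x u).mp (le_of_eq hxr) j0
      rw [hceq j0 hj0m] at this
      have hj0' : realφ x = c j0 x := hj0
      rw [hj0'] at hulr
      linarith
  have hμreal : realφ xb = μ := by
    have := hφD xb hxbD
    rw [hμ] at this
    exact_mod_cast this.symm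
  -- active sets at xb
  set A : Finset (Fin m) := Jm.filter (fun j => c j xb = μ) with hA
  have hAne : A.Nonempty := by
    obtain ⟨j0, hj0m, hj0⟩ := Finset.exists_mem_eq_sup' hJne (fun j => c j xb)
    refine ⟨j0, ?_⟩
    rw [hA]
    refine Finset.mem_filter.mpr ⟨hj0m, ?_⟩
    have : realφ xb = c j0 xb := hj0
    rw [← this, hμreal]
  set B : Finset (Fin m) := Finset.univ.filter (fun j => r j = 0 ∧ ⟪w j, xb⟫ = s j) with hB
  set M : EuclideanSpace ℝ (Fin n) → ℝ := fun d => A.sup' hAne (fun j => ⟪a j, d⟫) with hM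
  have hAsubJ : ∀ j ∈ A, j ∈ Jm := fun j hj => (Finset.mem_filter.mp hj).1
  have hAc : ∀ j ∈ A, c j xb = μ := fun j hj => (Finset.mem_filter.mp hj).2
  have hBr : ∀ j ∈ B, r j = 0 ∧ ⟪w j, xb⟫ = s j := fun j hj => (Finset.mem_filter.mp hj).2
  -- c j y in terms of xb
  have hcy : ∀ j (y : EuclideanSpace ℝ (Fin n)), c j y = c j xb + ⟪a j, y - xb⟫ := by
    intro j y
    have := hcdiff j xb (y - xb)
    rwa [add_sub_cancel] at this
  -- subgradients: a j for j ∈ A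
  have hsubA : ∀ j ∈ A, (a j) ∈ ESubdiff φ xb := by
    intro j hj y
    rcases hDfeas y with hy | hy
    · rw [hφD y hy, hμ, ← EReal.coe_add, EReal.coe_le_coe_iff]
      have h1 : c j y ≤ realφ y := Finset.le_sup' (fun j => c j y) (hAsubJ j hj)
      have h2 := hcy j y
      have h3 := hAc j hj
      linarith
    · rw [hφtop y (by push_neg; obtain ⟨j', h1, h2⟩ := hy; exact ⟨j', h1, h2⟩)]
      exact le_top
  -- subgradients: a jA + t • w j for j ∈ B, t ≥ 0
  obtain ⟨jA, hjA⟩ := id hAne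
  have hsubB : ∀ j ∈ B, ∀ t : ℝ, 0 ≤ t → (a jA + t • w j) ∈ ESubdiff φ xb := by
    intro j hj t ht y
    rcases hDfeas y with hy | hy
    · rw [hφD y hy, hμ, ← EReal.coe_add, EReal.coe_le_coe_iff]
      have h1 : c jA y ≤ realφ y := Finset.le_sup' (fun j => c j y) (hAsubJ jA hjA)
      have h2 := hcy jA y
      have h3 := hAc jA hjA
      have h4 : ⟪w j, y - xb⟫ ≤ 0 := by
        rw [inner_sub_right]
        have := hy j (hBr j hj).1
        have := (hBr j hj).2
        linarith
      have h5 : ⟪a jA + t • w j, y - xb⟫ = ⟪a jA, y - xb⟫ + t * ⟪w j, y - xb⟫ := by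
        rw [inner_add_left]
        congr 1
        exact real_inner_smul_left _ _ _
      nlinarith [mul_nonpos_of_nonneg_of_nonpos ht h4]
    · rw [hφtop y (by push_neg; obtain ⟨j', h1, h2⟩ := hy; exact ⟨j', h1, h2⟩)]
      exact le_top
  -- membership in K
  have hKmem : ∀ d : EuclideanSpace ℝ (Fin n),
      d ∈ K ↔ ∀ ξ ∈ ESubdiff φ xb, (⟪d, ξ - v⟫ : ℝ) ≤ 0 := by
    intro d
    rw [hK]
    exact ⟨fun h => h.2, fun h => ⟨hstat, h⟩⟩
  have hKB : ∀ d ∈ K, ∀ j ∈ B, ⟪w j, d⟫ ≤ 0 := by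
    intro d hd j hj
    by_contra hpos
    push_neg at hpos
    set α : ℝ := ⟪d, a jA - v⟫ with hα
    have hα0 : α ≤ 0 := by
      have := (hKmem d).mp hd (a jA) (hsubA jA hjA)
      simpa [hα] using this
    set t : ℝ := (1 - α) / ⟪w j, d⟫ with htdef
    have ht : 0 ≤ t := div_nonneg (by linarith) (le_of_lt hpos)
    have := (hKmem d).mp hd (a jA + t • w j) (hsubB j hj t ht)
    have hexp : ⟪d, a jA + t • w j - v⟫ = α + t * ⟪w j, d⟫ := by
      rw [hα, add_sub_right_comm, inner_add_right, real_inner_smul_right, real_inner_comm d (w j)]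
    rw [hexp] at this
    rw [htdef] at this
    rw [div_mul_cancel₀ _ (ne_of_gt hpos)] at this
    linarith
  have hKM : ∀ d ∈ K, M d ≤ ⟪v, d⟫ := by
    intro d hd
    rw [hM]
    apply Finset.sup'_le
    intro j hj
    have := (hKmem d).mp hd (a j) (hsubA j hj)
    rw [inner_sub_right] at this
    have hc1 : (⟪d, a j⟫ : ℝ) = ⟪a j, d⟫ := real_inner_comm _ _
    have hc2 : (⟪d, v⟫ : ℝ) = ⟪v, d⟫ := real_inner_comm _ _
    linarith
  -- local eventualities
  have hwcont : ∀ j : Fin m, Continuous (fun x : EuclideanSpace ℝ (Fin n) => (⟪w j, x⟫ : ℝ)) :=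
    fun j => continuous_const.inner continuous_id
  have ev1 : ∀ᶠ x in nhds xb, ∀ j, (r j = 0 ∧ j ∉ B) → ⟪w j, x⟫ < s j := by
    rw [eventually_all]
    intro j
    by_cases hP : r j = 0 ∧ j ∉ B
    · have hlt : ⟪w j, xb⟫ < s j := by
        rcases lt_or_eq_of_le (hxbD j hP.1) with h | h
        · exact h
        · exact absurd (Finset.mem_filter.mpr ⟨Finset.mem_univ j, hP.1, h⟩) hP.2
      filter_upwards [((hwcont j).tendsto xb).eventually_lt_const hlt] with x hx _
      exact hx
    · exact Eventually.of_forall (fun x hP' => absurd hP' hP)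
  have ev2 : ∀ᶠ x in nhds xb, ∀ j, (j ∈ Jm ∧ j ∉ A) → c j x < μ + ⟪a jA, x - xb⟫ := by
    rw [eventually_all]
    intro j
    by_cases hP : j ∈ Jm ∧ j ∉ A
    · have hlt : c j xb < μ := by
        have h1 : c j xb ≤ realφ xb := Finset.le_sup' (fun j' => c j' xb) hP.1
        rw [hμreal] at h1
        rcases lt_or_eq_of_le h1 with h | h
        · exact h
        · exact absurd (Finset.mem_filter.mpr ⟨hP.1, h⟩) hP.2
      have hcont : Continuous (fun x : EuclideanSpace ℝ (Fin n) =>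
          c j x - ⟪a jA, x - xb⟫) := by
        apply Continuous.sub
        · exact ((hwcont j).sub continuous_const).div_const _
        · exact continuous_const.inner (continuous_id.sub continuous_const)
      have hval : c j xb - ⟪a jA, xb - xb⟫ < μ := by simpa using hlt
      filter_upwards [(hcont.tendsto xb).eventually_lt_const hval] with x hx _
      have : c j x - ⟪a jA, x - xb⟫ < μ := by simpa using hx
      linarith
    · exact Eventually.of_forall (fun x hP' => absurd hP' hP)
  obtain ⟨ε, hε, hball⟩ := Metric.eventually_nhds_iff.mp ((ev1.and ev2).and hloc)
  have hb1 : ∀ x, dist x xb < ε → ∀ j, (r j = 0 ∧ j ∉ B) → ⟪w j, x⟫ < s j :=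
    fun x hx => (hball hx).1.1
  have hb2 : ∀ x, dist x xb < ε → ∀ j, (j ∈ Jm ∧ j ∉ A) → c j x < μ + ⟪a jA, x - xb⟫ :=
    fun x hx => (hball hx).1.2
  have hb3 : ∀ x, dist x xb < ε → ψ xb ≤ ψ x := fun x hx => (hball hx).2
  -- local formula for φ
  have hΦ1 : ∀ x, dist x xb < ε → (∀ j ∈ B, ⟪w j, x - xb⟫ ≤ 0) →
      φ x = ((μ + M (x - xb) : ℝ) : EReal) := by
    intro x hx hfeas
    have hDx : ∀ j, r j = 0 → ⟪w j, x⟫ ≤ s j := by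
      intro j hj
      by_cases hjB : j ∈ B
      · have h1 := hfeas j hjB
        rw [inner_sub_right] at h1
        have h2 := (hBr j hjB).2
        linarith
      · exact le_of_lt (hb1 x hx j ⟨hj, hjB⟩)
    rw [hφD x hDx]
    congr 1
    refine le_antisymm ?_ ?_
    · apply Finset.sup'_le
      intro j hj
      by_cases hjA' : j ∈ A
      · have h1 := hcy j x
        have h2 := hAc j hjA'
        have h3 : ⟪a j, x - xb⟫ ≤ M (x - xb) :=
          Finset.le_sup' (fun j' => ⟪a j', x - xb⟫) hjA'
        linarith
      · have h1 := hb2 x hx j ⟨hj, hjA'⟩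
        have h2 : ⟪a jA, x - xb⟫ ≤ M (x - xb) :=
          Finset.le_sup' (fun j' => ⟪a j', x - xb⟫) hjA
        linarith
    · obtain ⟨j1, hj1m, hj1⟩ := Finset.exists_mem_eq_sup' hAne (fun j' => (⟪a j', x - xb⟫ : ℝ))
      have hMd : M (x - xb) = ⟪a j1, x - xb⟫ := hj1
      have h1 := hcy j1 x
      have h2 := hAc j1 hj1m
      have h3 : c j1 x ≤ realφ x := Finset.le_sup' (fun j' => c j' x) (hAsubJ j1 hj1m)
      rw [hMd]
      linarith
  have hΦ2 : ∀ x, dist x xb < ε → ¬ (∀ j ∈ B, ⟪w j, x - xb⟫ ≤ 0) → φ x = ⊤ := by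
    intro x hx hfeas
    apply hφtop
    intro hD
    push_neg at hfeas
    obtain ⟨j, hjB, hjpos⟩ := hfeas
    have h1 := hD j (hBr j hjB).1
    have h2 := (hBr j hjB).2
    rw [inner_sub_right] at hjpos
    linarith
  -- subgradient inequality gives inner bounds by M
  have hM0 : ∀ (d : EuclideanSpace ℝ (Fin n)), dist (xb + d) xb < ε →
      (∀ j ∈ B, ⟪w j, d⟫ ≤ 0) → ∀ ξ ∈ ESubdiff φ xb, (⟪ξ, d⟫ : ℝ) ≤ M d := by
    intro d hd hfeas ξ hξ
    have h1 : φ xb + ((⟪ξ, (xb + d) - xb⟫ : ℝ) : EReal) ≤ φ (xb + d) := hξ (xb + d)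
    have hfeas' : ∀ j ∈ B, ⟪w j, (xb + d) - xb⟫ ≤ 0 := by
      intro j hj
      rw [add_sub_cancel_left]
      exact hfeas j hj
    rw [hΦ1 (xb + d) hd hfeas', hμ, add_sub_cancel_left, ← EReal.coe_add,
      EReal.coe_le_coe_iff] at h1
    linarith
  have hKM' : ∀ (d : EuclideanSpace ℝ (Fin n)), dist (xb + d) xb < ε → d ∈ K →
      M d = ⟪v, d⟫ := by
    intro d hd hdK
    refine le_antisymm (hKM d hdK) ?_
    exact hM0 d hd (fun j hj => hKB d hdK j hj) v hstat
  have hψxb : ψ xb = ((g xb + μ : ℝ) : EReal) := by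
    rw [hψ]
    dsimp only
    rw [hμ, EReal.coe_add]
  have h0K : (0 : EuclideanSpace ℝ (Fin n)) ∈ K := by
    rw [hK]
    refine ⟨hstat, fun y hy => ?_⟩
    simp [inner_zero_left]
  have hψtxb : ψt xb = ((g xb : ℝ) : EReal) := by
    rw [hψt]
    dsimp only
    rw [sub_self, eIndicator_of_mem h0K, add_zero]
    norm_num [inner_zero_right]
  -- value of ψt at points with d ∈ K
  have hψtK : ∀ x : EuclideanSpace ℝ (Fin n), x - xb ∈ K →
      ψt x = ((g x + ⟪v, x - xb⟫ : ℝ) : EReal) := by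
    intro x hxK
    have h1 : (g x - ⟪gradient g xb, x - xb⟫ : ℝ) = g x + ⟪v, x - xb⟫ := by
      rw [hv, inner_neg_left]
      ring
    rw [hψt]
    dsimp only
    rw [h1, eIndicator_of_mem hxK, add_zero]
  have hψtK' : ∀ x : EuclideanSpace ℝ (Fin n), x - xb ∉ K → ψt x = ⊤ := by
    intro x hxK
    rw [hψt]
    dsimp only
    rw [eIndicator_of_not_mem hxK, EReal.coe_add_top]
  -- value of ψ at good points
  have hψval : ∀ x : EuclideanSpace ℝ (Fin n), dist x xb < ε →
      (∀ j ∈ B, ⟪w j, x - xb⟫ ≤ 0) → ψ x = ((g x + (μ + M (x - xb)) : ℝ) : EReal) := by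
    intro x hx hfeas
    rw [hψ]
    dsimp only
    rw [hΦ1 x hx hfeas, ← EReal.coe_add]
  have hdistd : ∀ x : EuclideanSpace ℝ (Fin n), dist (xb + (x - xb)) xb = dist x xb := by
    intro x
    rw [add_sub_cancel]
  -- Part 1 : ψt has a local minimum at xb
  have part1 : IsLocalMin ψt xb := by
    rw [IsLocalMin, IsMinFilter]
    rw [Metric.eventually_nhds_iff]
    refine ⟨ε, hε, fun x hx => ?_⟩
    by_cases hxK : x - xb ∈ K
    · have hfeas : ∀ j ∈ B, ⟪w j, x - xb⟫ ≤ 0 := fun j hj => hKB _ hxK j hj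
      have hMv : M (x - xb) = ⟪v, x - xb⟫ := hKM' (x - xb) (by rw [hdistd]; exact hx) hxK
      have hloc' := hb3 x hx
      rw [hψval x hx hfeas, hψxb, EReal.coe_le_coe_iff] at hloc'
      rw [hψtxb, hψtK x hxK, EReal.coe_le_coe_iff]
      linarith
    · rw [hψtK' x hxK]
      exact le_top
  -- main claim : near xb, ψ x = ψ xb implies x - xb ∈ K
  have Hmain : ∀ᶠ x in nhds xb, (ψ x = ψ xb → x - xb ∈ K) := by
    by_contra hcon
    rw [Filter.not_eventually] at hcon
    have hev2 : ∀ᶠ x in nhds xb, dist x xb < ε / 2 := by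
      rw [Metric.eventually_nhds_iff]
      exact ⟨ε / 2, by linarith, fun x hx => hx⟩
    set Bad : EuclideanSpace ℝ (Fin n) → Prop :=
      fun x => dist x xb < ε / 2 ∧ ψ x = ψ xb ∧ x - xb ∉ K with hBadDef
    have hfreq : ∃ᶠ x in nhds xb, Bad x := by
      refine (hcon.and_eventually hev2).mono ?_
      rintro x ⟨hx1, hx2⟩
      rw [Classical.not_imp] at hx1
      exact ⟨hx2, hx1.1, hx1.2⟩
    have hBadfeas : ∀ x, Bad x → (∀ j ∈ B, ⟪w j, x - xb⟫ ≤ 0) := by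
      intro x hx
      by_contra hfeas
      have hphi := hΦ2 x (by linarith [hx.1]) hfeas
      have hψx : ψ x = ⊤ := by
        rw [hψ]
        dsimp only
        rw [hphi]
        exact EReal.coe_add_top _
      have h1 : ψ xb = ⊤ := hx.2.1.symm.trans hψx
      rw [hψxb] at h1
      exact (EReal.coe_ne_top _) h1
    have hBadg : ∀ x, Bad x → g x + M (x - xb) = g xb := by
      intro x hx
      have hfeas := hBadfeas x hx
      have h1 := hx.2.1
      rw [hψval x (by linarith [hx.1]) hfeas, hψxb, EReal.coe_eq_coe_iff] at h1
      linarith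
    set pA : EuclideanSpace ℝ (Fin n) → Finset (Fin m) :=
      fun x => A.filter (fun j => ⟪a j, x - xb⟫ = M (x - xb)) with hpA
    have hpAne : ∀ x, (pA x).Nonempty := by
      intro x
      obtain ⟨j1, hj1m, hj1⟩ := Finset.exists_mem_eq_sup' hAne (fun j => (⟪a j, x - xb⟫ : ℝ))
      exact ⟨j1, Finset.mem_filter.mpr ⟨hj1m, hj1.symm⟩⟩
    set pB : EuclideanSpace ℝ (Fin n) → Finset (Fin m) :=
      fun x => B.filter (fun j => ⟪w j, x - xb⟫ = 0) with hpB
    -- first-order optimality at bad points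
    have stepA : ∀ x, Bad x → ∀ (S : Finset (Fin m)) (hS : S.Nonempty), S = pA x →
        ∀ e : EuclideanSpace ℝ (Fin n), (∀ j ∈ pB x, ⟪w j, e⟫ ≤ 0) →
        0 ≤ ⟪gradient g x, e⟫ + S.sup' hS (fun j => ⟪a j, e⟫) := by
      intro x hx S hS hSeq e he
      subst hSeq
      apply deriv_aux g hg x e
      have ht1 : ∀ᶠ t in nhdsWithin (0:ℝ) (Set.Ioi 0), dist (x + t • e) xb < ε := by
        have hcont : Tendsto (fun t : ℝ => dist (x + t • e) xb) (nhds 0)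
            (nhds (dist x xb)) := by
          have hc : Continuous (fun t : ℝ => dist (x + t • e) xb) :=
            (continuous_const.add (continuous_id.smul continuous_const)).dist continuous_const
          simpa using hc.tendsto 0
        exact (hcont.eventually_lt_const (by linarith [hx.1])).filter_mono nhdsWithin_le_nhds
      have ht2 : ∀ᶠ t in nhdsWithin (0:ℝ) (Set.Ioi 0), ∀ j,
          (j ∈ B ∧ j ∉ pB x) → ⟪w j, (x - xb) + t • e⟫ < 0 := by
        rw [eventually_all]
        intro j
        by_cases hP : j ∈ B ∧ j ∉ pB x
        · have hlt : (⟪w j, x - xb⟫ : ℝ) < 0 := by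
            rcases lt_or_eq_of_le (hBadfeas x hx j hP.1) with h | h
            · exact h
            · exact absurd (Finset.mem_filter.mpr ⟨hP.1, h⟩) hP.2
          have hcont : Tendsto (fun t : ℝ => (⟪w j, (x - xb) + t • e⟫ : ℝ)) (nhds 0)
              (nhds (⟪w j, x - xb⟫ : ℝ)) := by
            have hc : Continuous fun t : ℝ => (⟪w j, (x - xb) + t • e⟫ : ℝ) :=
              continuous_const.inner (continuous_const.add (continuous_id.smul continuous_const))
            simpa using hc.tendsto 0
          exact ((hcont.eventually_lt_const hlt).filter_mono nhdsWithin_le_nhds).mono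
            (fun t h _ => h)
        · exact Eventually.of_forall fun t hP' => absurd hP' hP
      have ht3 : ∀ᶠ t in nhdsWithin (0:ℝ) (Set.Ioi 0), ∀ j, (j ∈ A ∧ j ∉ pA x) →
          (⟪a j, x - xb⟫ : ℝ) + t * ⟪a j, e⟫ <
            M (x - xb) + t * ((pA x).sup' hS (fun j' => ⟪a j', e⟫)) := by
        rw [eventually_all]
        intro j
        by_cases hP : j ∈ A ∧ j ∉ pA x
        · have hlt : (⟪a j, x - xb⟫ : ℝ) < M (x - xb) := by
            have h1 : (⟪a j, x - xb⟫ : ℝ) ≤ M (x - xb) :=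
              Finset.le_sup' (fun j' => (⟪a j', x - xb⟫ : ℝ)) hP.1
            rcases lt_or_eq_of_le h1 with h | h
            · exact h
            · exact absurd (Finset.mem_filter.mpr ⟨hP.1, h⟩) hP.2
          have hc1 : Tendsto (fun t : ℝ => (⟪a j, x - xb⟫ : ℝ) + t * ⟪a j, e⟫) (nhds 0)
              (nhds ((⟪a j, x - xb⟫ : ℝ) + 0 * ⟪a j, e⟫)) :=
            (continuous_const.add (continuous_id.mul continuous_const)).tendsto 0
          have hc2 : Tendsto (fun t : ℝ =>
              M (x - xb) + t * ((pA x).sup' hS (fun j' => ⟪a j', e⟫))) (nhds 0)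
              (nhds (M (x - xb) + 0 * ((pA x).sup' hS (fun j' => ⟪a j', e⟫)))) :=
            (continuous_const.add (continuous_id.mul continuous_const)).tendsto 0
          have := hc1.eventually_lt hc2 (by simpa using hlt)
          exact (this.filter_mono nhdsWithin_le_nhds).mono (fun t h _ => h)
        · exact Eventually.of_forall fun t hP' => absurd hP' hP
      filter_upwards [ht1, ht2, ht3, self_mem_nhdsWithin] with t h1 h2 h3 ht0
      have ht0' : (0:ℝ) < t := ht0
      have hrw : (x + t • e) - xb = (x - xb) + t • e := by abel
      have hfeast : ∀ j ∈ B, ⟪w j, (x + t • e) - xb⟫ ≤ 0 := by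
        intro j hj
        rw [hrw]
        by_cases hjpB : j ∈ pB x
        · have h0 : (⟪w j, x - xb⟫ : ℝ) = 0 := (Finset.mem_filter.mp hjpB).2
          rw [inner_add_right, h0, real_inner_smul_right, zero_add]
          exact mul_nonpos_of_nonneg_of_nonpos (le_of_lt ht0') (he j hjpB)
        · exact le_of_lt (h2 j ⟨hj, hjpB⟩)
      have hMt : M ((x + t • e) - xb) =
          M (x - xb) + t * ((pA x).sup' hS (fun j' => ⟪a j', e⟫)) := by
        rw [hrw]
        refine le_antisymm ?_ ?_
        · apply Finset.sup'_le
          intro j hj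
          rw [inner_add_right, real_inner_smul_right]
          by_cases hjpA : j ∈ pA x
          · have h0 : (⟪a j, x - xb⟫ : ℝ) = M (x - xb) := (Finset.mem_filter.mp hjpA).2
            have h4 : (⟪a j, e⟫ : ℝ) ≤ (pA x).sup' hS (fun j' => ⟪a j', e⟫) :=
              Finset.le_sup' (fun j' => (⟪a j', e⟫ : ℝ)) hjpA
            have h5 := mul_le_mul_of_nonneg_left h4 (le_of_lt ht0')
            linarith
          · exact le_of_lt (h3 j ⟨hj, hjpA⟩)
        · obtain ⟨j2, hj2m, hj2⟩ := Finset.exists_mem_eq_sup' hS (fun j' => (⟪a j', e⟫ : ℝ))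
          have h0 : (⟪a j2, x - xb⟫ : ℝ) = M (x - xb) := (Finset.mem_filter.mp hj2m).2
          have hle : (⟪a j2, (x - xb) + t • e⟫ : ℝ) ≤
              A.sup' hAne (fun j' => (⟪a j', (x - xb) + t • e⟫ : ℝ)) :=
            Finset.le_sup' (fun j' => (⟪a j', (x - xb) + t • e⟫ : ℝ))
              ((Finset.mem_filter.mp hj2m).1)
          have hexp : (⟪a j2, (x - xb) + t • e⟫ : ℝ) = ⟪a j2, x - xb⟫ + t * ⟪a j2, e⟫ := by
            rw [inner_add_right, real_inner_smul_right]
          rw [hj2]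
          have hMdef : M ((x - xb) + t • e) =
              A.sup' hAne (fun j' => (⟪a j', (x - xb) + t • e⟫ : ℝ)) := rfl
          rw [hMdef]
          linarith
      have hψle := hb3 (x + t • e) h1
      rw [hψval (x + t • e) h1 hfeast, hψxb, EReal.coe_le_coe_iff, hMt] at hψle
      have hgx := hBadg x hx
      linarith
    -- pigeonhole on the active index sets
    have hpart : ∃ (S T : Finset (Fin m)), ∃ᶠ x in nhds xb,
        (Bad x ∧ pA x = S ∧ pB x = T) := by
      by_contra hcon2
      push_neg at hcon2
      have hall : ∀ᶠ x in nhds xb, ∀ p : Finset (Fin m) × Finset (Fin m),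
          ¬(Bad x ∧ pA x = p.1 ∧ pB x = p.2) := by
        rw [eventually_all]
        intro p
        have := hcon2 p.1 p.2
        exact this.mono (fun x hx ⟨h1, h2, h3⟩ => hx h1 h2 h3)
      obtain ⟨x, hxBad, hxall⟩ := (hfreq.and_eventually hall).exists
      exact hxall (pA x, pB x) ⟨hxBad, rfl, rfl⟩
    obtain ⟨S, T, hfreq'⟩ := hpart
    obtain ⟨x₀, hx₀Bad, hx₀A, hx₀B⟩ := hfreq'.exists
    have hSne : S.Nonempty := hx₀A ▸ hpAne x₀
    set e₀ : EuclideanSpace ℝ (Fin n) := -(x₀ - xb) with he₀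
    have he₀T : ∀ j ∈ pB x₀, (⟪w j, e₀⟫ : ℝ) ≤ 0 := by
      intro j hj
      have h0 : (⟪w j, x₀ - xb⟫ : ℝ) = 0 := (Finset.mem_filter.mp hj).2
      rw [he₀, inner_neg_right, h0, neg_zero]
    have hfreq'' : ∃ᶠ x in nhds xb,
        0 ≤ ⟪gradient g x, e₀⟫ + S.sup' hSne (fun j => ⟪a j, e₀⟫) := by
      refine hfreq'.mono ?_
      rintro x ⟨hxB, hxA, hxBp⟩
      refine stepA x hxB S hSne hxA.symm e₀ ?_
      intro j hj
      rw [hxBp] at hj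
      exact he₀T j (by rw [hx₀B]; exact hj)
    have hgcont : Continuous (fun y => (⟪gradient g y, e₀⟫ : ℝ)) := by
      have heq : (fun y => (⟪gradient g y, e₀⟫ : ℝ)) = fun y => fderiv ℝ g y e₀ := by
        funext y
        exact grad_inner g y e₀
      rw [heq]
      exact (hg.continuous_fderiv one_ne_zero).clm_apply continuous_const
    have hlim : 0 ≤ ⟪gradient g xb, e₀⟫ + S.sup' hSne (fun j => ⟪a j, e₀⟫) := by
      by_contra hneg
      push_neg at hneg
      have hev3 : ∀ᶠ x in nhds xb,
          (⟪gradient g x, e₀⟫ : ℝ) < -(S.sup' hSne (fun j => ⟪a j, e₀⟫)) :=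
        (hgcont.tendsto xb).eventually_lt_const (by linarith)
      obtain ⟨x, hge, hlt⟩ := (hfreq''.and_eventually hev3).exists
      linarith
    have hsup : S.sup' hSne (fun j => (⟪a j, e₀⟫ : ℝ)) = -(M (x₀ - xb)) := by
      have h1 : ∀ j ∈ S, (⟪a j, e₀⟫ : ℝ) = -(M (x₀ - xb)) := by
        intro j hj
        rw [← hx₀A] at hj
        have h0 : (⟪a j, x₀ - xb⟫ : ℝ) = M (x₀ - xb) := (Finset.mem_filter.mp hj).2
        rw [he₀, inner_neg_right, h0]
      calc S.sup' hSne (fun j => (⟪a j, e₀⟫ : ℝ))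
          = S.sup' hSne (fun _ => -(M (x₀ - xb))) := Finset.sup'_congr hSne rfl h1
        _ = -(M (x₀ - xb)) := Finset.sup'_const _ _
    have hvd : M (x₀ - xb) ≤ ⟪v, x₀ - xb⟫ := by
      rw [hsup] at hlim
      have h1 : (⟪gradient g xb, e₀⟫ : ℝ) = -⟪gradient g xb, x₀ - xb⟫ := by
        rw [he₀, inner_neg_right]
      have hv' : (⟪v, x₀ - xb⟫ : ℝ) = -⟪gradient g xb, x₀ - xb⟫ := by
        rw [hv, inner_neg_left]
      linarith
    have hfeas₀ : ∀ j ∈ B, ⟪w j, x₀ - xb⟫ ≤ 0 := hBadfeas x₀ hx₀Bad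
    have hKx₀ : x₀ - xb ∈ K := by
      rw [hKmem]
      intro ξ hξ
      have h1 : (⟪ξ, x₀ - xb⟫ : ℝ) ≤ M (x₀ - xb) :=
        hM0 (x₀ - xb) (by rw [hdistd]; linarith [hx₀Bad.1]) hfeas₀ ξ hξ
      rw [inner_sub_right]
      have hc1 : (⟪x₀ - xb, ξ⟫ : ℝ) = ⟪ξ, x₀ - xb⟫ := real_inner_comm _ _
      have hc2 : (⟪x₀ - xb, v⟫ : ℝ) = ⟪v, x₀ - xb⟫ := real_inner_comm _ _
      linarith
    exact hx₀Bad.2.2 hKx₀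
  -- the equivalence of the two level sets
  have Hev : ∀ᶠ x in nhds xb, (ψ x = ψ xb ↔ ψt x = ψt xb) := by
    have hev' : ∀ᶠ x in nhds xb, dist x xb < ε := by
      rw [Metric.eventually_nhds_iff]
      exact ⟨ε, hε, fun x hx => hx⟩
    filter_upwards [Hmain, hev'] with x hxK hx
    constructor
    · intro hpsi
      have hdK : x - xb ∈ K := hxK hpsi
      have hfeas : ∀ j ∈ B, ⟪w j, x - xb⟫ ≤ 0 := fun j hj => hKB _ hdK j hj
      have hMv : M (x - xb) = ⟪v, x - xb⟫ := hKM' (x - xb) (by rw [hdistd]; exact hx) hdK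
      rw [hψval x hx hfeas, hψxb, EReal.coe_eq_coe_iff] at hpsi
      rw [hψtK x hdK, hψtxb, EReal.coe_eq_coe_iff]
      linarith
    · intro hpsit
      by_cases hdK : x - xb ∈ K
      · have hfeas : ∀ j ∈ B, ⟪w j, x - xb⟫ ≤ 0 := fun j hj => hKB _ hdK j hj
        have hMv : M (x - xb) = ⟪v, x - xb⟫ := hKM' (x - xb) (by rw [hdistd]; exact hx) hdK
        rw [hψtK x hdK, hψtxb, EReal.coe_eq_coe_iff] at hpsit
        rw [hψval x hx hfeas, hψxb, EReal.coe_eq_coe_iff]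
        linarith
      · rw [hψtK' x hdK, hψtxb] at hpsit
        exact absurd hpsit (by simp)
  refine ⟨part1, ?_⟩
  obtain ⟨U, hU, hU'⟩ := Filter.eventually_iff_exists_mem.mp Hev
  refine ⟨U, hU, ?_⟩
  ext x
  simp only [Set.mem_setOf_eq]
  exact ⟨fun ⟨h1, h2⟩ => ⟨h1, (hU' x h1).mp h2⟩, fun ⟨h1, h2⟩ => ⟨h1, (hU' x h1).mpr h2⟩⟩
end

section
/- Let α ∈ (0,1) and let x̄ be a stationary point of f satisfying strict complementarity, i.e., ∇h(x̄)ᵢ ∈ (−μ, μ) for every i with x̄ᵢ = 0. Let h̃(x) = h(x) − ⟨∇h(x̄), x − x̄⟩ and I = {i : x̄ᵢ ≠ 0}. Then f satisfies the KL property at x̄ with exponent α if and only if there exist c, r > 0 such that for every x ∈ ℝⁿ with ‖x − x̄‖ < r, 0 < h̃(x) − h̃(x̄) < r, and xᵢ = x̄ᵢ for all i ∉ I, it holds that ‖(∇h̃(x))_I‖ ≥ c·(h̃(x) − h̃(x̄))^α, where (∇h̃(x))_I is the subvector of ∇h̃(x) indexed by I. -/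
open scoped BigOperators

open scoped BigOperators

private lemma aux_abs_sub (a b : ℝ) (hs : Real.sign a = Real.sign b) :
    |a| - |b| = Real.sign b * (a - b) := by
  rcases lt_trichotomy b 0 with hb | hb | hb
  · rw [Real.sign_of_neg hb] at hs ⊢
    have ha : a < 0 := by
      rcases lt_trichotomy a 0 with h | h | h
      · exact h
      · simp [h, Real.sign_zero] at hs
      · rw [Real.sign_of_pos h] at hs; norm_num at hs
    rw [abs_of_neg ha, abs_of_neg hb]; ring
  · subst hb
    have : a = 0 := by
      by_contra h
      rcases lt_trichotomy a 0 with h' | h' | h'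
      · rw [Real.sign_of_neg h', Real.sign_zero] at hs; norm_num at hs
      · exact h h'
      · rw [Real.sign_of_pos h', Real.sign_zero] at hs; norm_num at hs
    simp [this]
  · rw [Real.sign_of_pos hb] at hs ⊢
    have ha : 0 < a := by
      rcases lt_trichotomy a 0 with h | h | h
      · rw [Real.sign_of_neg h] at hs; norm_num at hs
      · simp [h, Real.sign_zero] at hs
      · exact h
    rw [abs_of_pos ha, abs_of_pos hb]; ring

private lemma aux_sign_near (a b : ℝ) (hb : b ≠ 0) (hab : |a - b| < |b|) :
    a ≠ 0 ∧ Real.sign a = Real.sign b := by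
  rcases lt_trichotomy b 0 with h | h | h
  · have ha : a < 0 := by
      have := (abs_lt.1 hab).2
      rw [abs_of_neg h] at this; linarith
    exact ⟨ne_of_lt ha, by rw [Real.sign_of_neg ha, Real.sign_of_neg h]⟩
  · exact absurd h hb
  · have ha : 0 < a := by
      have := (abs_lt.1 hab).1
      rw [abs_of_pos h] at this; linarith
    exact ⟨ne_of_gt ha, by rw [Real.sign_of_pos ha, Real.sign_of_pos h]⟩

private lemma aux_sign_abs (t : ℝ) (ht : t ≠ 0) : |Real.sign t| = 1 := by
  rcases lt_trichotomy t 0 with h | h | h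
  · rw [Real.sign_of_neg h]; norm_num
  · exact absurd h ht
  · rw [Real.sign_of_pos h]; norm_num

private lemma aux_norm_eq {n : ℕ} (v : EuclideanSpace ℝ (Fin n)) :
    ‖v‖ = Real.sqrt (∑ i, (v i) ^ 2) := by
  rw [EuclideanSpace.norm_eq]; simp [sq_abs]

private lemma aux_coord_le {n : ℕ} (v : EuclideanSpace ℝ (Fin n)) (i : Fin n) :
    |v i| ≤ ‖v‖ := by
  rw [aux_norm_eq, ← Real.sqrt_sq_eq_abs]
  apply Real.sqrt_le_sqrt
  exact Finset.single_le_sum (f := fun j => (v j) ^ 2) (fun j _ => sq_nonneg _)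
    (Finset.mem_univ i)

private lemma aux_le_infDist {X : Type*} [MetricSpace X] (x : X) (s : Set X) (b : ℝ)
    (hb : 0 ≤ b) (hne : s.Nonempty) (H : ∀ y ∈ s, b ≤ dist x y) :
    b ≤ Metric.infDist x s := by
  rw [Metric.infDist, ← ENNReal.toReal_ofReal hb]
  apply ENNReal.toReal_mono (Metric.infEdist_ne_top hne)
  rw [EMetric.le_infEdist]
  intro y hy
  rw [edist_dist]
  exact ENNReal.ofReal_le_ofReal (H y hy)

private lemma aux_gradient_htil {n : ℕ} (h : EuclideanSpace ℝ (Fin n) → ℝ)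
    (hh : ContDiff ℝ 2 h) (g xb x : EuclideanSpace ℝ (Fin n)) :
    gradient (fun y => h y - (inner ℝ g (y - xb) : ℝ)) x = gradient h x - g := by
  have hd : DifferentiableAt ℝ h x := (hh.differentiable two_ne_zero).differentiableAt
  have h1 : HasGradientAt h (gradient h x) x := hd.hasGradientAt
  have h2 : HasGradientAt (fun y => (inner ℝ g (y - xb) : ℝ)) g x := by
    rw [hasGradientAt_iff_hasFDerivAt]
    have : HasFDerivAt (fun y : EuclideanSpace ℝ (Fin n) => (inner ℝ g y : ℝ))
        (InnerProductSpace.toDual ℝ _ g : EuclideanSpace ℝ (Fin n) →L[ℝ] ℝ) x :=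
      (InnerProductSpace.toDual ℝ _ g).hasFDerivAt
    simpa [inner_sub_right] using this.sub_const (inner ℝ g xb : ℝ)
  have h3 : HasGradientAt (fun y => h y - (inner ℝ g (y - xb) : ℝ)) (gradient h x - g) x := by
    rw [hasGradientAt_iff_hasFDerivAt] at h1 h2 ⊢
    rw [map_sub]; exact h1.sub h2
  exact h3.gradient

private lemma aux_grad_cont {n : ℕ} (h : EuclideanSpace ℝ (Fin n) → ℝ)
    (hh : ContDiff ℝ 2 h) : Continuous (gradient h) := by
  have h1 : Continuous (fderiv ℝ h) := hh.continuous_fderiv two_ne_zero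
  exact (InnerProductSpace.toDual ℝ _).symm.continuous.comp h1

/-- Let `x̄` be a stationary point of `f = h + μ‖·‖₁` satisfying
strict complementarity. With `h̃(x) = h(x) − ⟨∇h(x̄), x − x̄⟩` and `I = {i : x̄ᵢ ≠ 0}`,
`f` satisfies the KL property at `x̄` with exponent `α` iff there exist `c, r > 0`
such that `‖(∇h̃(x))_I‖ ≥ c(h̃(x) − h̃(x̄))^α` for every `x` with `‖x − x̄‖ < r`,
`0 < h̃(x) − h̃(x̄) < r` and `xᵢ = x̄ᵢ` for all `i ∉ I`. -/
theorem stmt13 (n : ℕ) (hn : 0 < n)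
    (h : EuclideanSpace ℝ (Fin n) → ℝ) (hh : ContDiff ℝ 2 h)
    (μ : ℝ) (hμ : 0 < μ)
    (f : EuclideanSpace ℝ (Fin n) → ℝ)
    (hf : f = fun x => h x + μ * ∑ i, |x i|)
    (xb : EuclideanSpace ℝ (Fin n))
    (hstat : ∀ i : Fin n,
      (xb i ≠ 0 → gradient h xb i = -μ * Real.sign (xb i)) ∧
      (xb i = 0 → gradient h xb i ∈ Set.Ioo (-μ) μ))
    (htil : EuclideanSpace ℝ (Fin n) → ℝ)
    (hhtil : htil = fun x => h x - (inner ℝ (gradient h xb) (x - xb) : ℝ))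
    (α : ℝ) (hα : α ∈ Set.Ioo (0 : ℝ) 1) :
    ((∃ c > (0 : ℝ), ∃ ε > (0 : ℝ), ∃ ν > (0 : ℝ), ∀ x : EuclideanSpace ℝ (Fin n),
        ‖x - xb‖ < ε → 0 < f x - f xb → f x - f xb < ν →
        c * (f x - f xb) ^ α ≤
          Metric.infDist (0 : EuclideanSpace ℝ (Fin n))
            {v | ∃ ξ : EuclideanSpace ℝ (Fin n),
              (∀ i, (x i ≠ 0 → ξ i = Real.sign (x i)) ∧
                (x i = 0 → ξ i ∈ Set.Icc (-1 : ℝ) 1)) ∧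
              v = gradient h x + μ • ξ}) ↔
     (∃ c > (0 : ℝ), ∃ r > (0 : ℝ), ∀ x : EuclideanSpace ℝ (Fin n),
        ‖x - xb‖ < r → 0 < htil x - htil xb → htil x - htil xb < r →
        (∀ i, xb i = 0 → x i = xb i) →
        c * (htil x - htil xb) ^ α ≤
          Real.sqrt (∑ i ∈ Finset.univ.filter (fun i => xb i ≠ 0),
            (gradient htil x i) ^ 2))) := by
  set g : EuclideanSpace ℝ (Fin n) := gradient h xb with hg
  have hgrad : ∀ x, gradient htil x = gradient h x - g := by
    intro x
    rw [hhtil]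
    exact aux_gradient_htil h hh g xb x
  have hgradi : ∀ x (i : Fin n), gradient htil x i = gradient h x i - g i := by
    intro x i; rw [hgrad]; rfl
  have hne : (Finset.univ : Finset (Fin n)).Nonempty := ⟨⟨0, hn⟩, Finset.mem_univ _⟩
  set σ : ℝ := Finset.univ.inf' hne (fun i => if xb i = 0 then 1 else |xb i|) with hσdef
  have hσpos : 0 < σ := by
    rw [hσdef, Finset.lt_inf'_iff]
    intro i _
    by_cases hi : xb i = 0 <;> simp [hi, abs_pos]
  have hσle : ∀ i, xb i ≠ 0 → σ ≤ |xb i| := by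
    intro i hi
    have := Finset.inf'_le (fun i => if xb i = 0 then (1 : ℝ) else |xb i|) (Finset.mem_univ i)
    rwa [if_neg hi] at this
  set ρ : ℝ := Finset.univ.inf' hne (fun i => if xb i = 0 then (μ - |g i|) / 2 else μ) with hρdef
  have hρpos : 0 < ρ := by
    rw [hρdef, Finset.lt_inf'_iff]
    intro i _
    by_cases hi : xb i = 0
    · have := (hstat i).2 hi
      rw [if_pos hi]
      have h1 : |g i| < μ := abs_lt.2 ⟨this.1, this.2⟩
      linarith
    · simpa [hi] using hμ
  have hρle : ∀ i, xb i = 0 → 2 * ρ ≤ μ - |g i| := by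
    intro i hi
    have h1 := Finset.inf'_le (fun i => if xb i = 0 then (μ - |g i|) / 2 else μ)
      (Finset.mem_univ i)
    rw [if_pos hi] at h1
    have h2 : ρ ≤ (μ - |g i|) / 2 := h1
    linarith
  obtain ⟨δ, hδpos, hδ⟩ : ∃ δ > 0, ∀ x : EuclideanSpace ℝ (Fin n),
      ‖x - xb‖ < δ → ‖gradient h x - g‖ < ρ := by
    have hc : ContinuousAt (gradient h) xb := (aux_grad_cont h hh).continuousAt
    rw [Metric.continuousAt_iff] at hc
    obtain ⟨δ, hδpos, hδ⟩ := hc ρ hρpos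
    refine ⟨δ, hδpos, fun x hx => ?_⟩
    have := hδ (show dist x xb < δ by rwa [dist_eq_norm])
    rw [dist_eq_norm] at this
    rw [hg]
    exact this
  have hsign : ∀ x : EuclideanSpace ℝ (Fin n), ‖x - xb‖ < σ → ∀ i, xb i ≠ 0 →
      x i ≠ 0 ∧ Real.sign (x i) = Real.sign (xb i) := by
    intro x hx i hi
    apply aux_sign_near _ _ hi
    calc |x i - xb i| = |(x - xb) i| := rfl
      _ ≤ ‖x - xb‖ := aux_coord_le _ i
      _ < σ := hx
      _ ≤ |xb i| := hσle i hi
  have hfd : ∀ x : EuclideanSpace ℝ (Fin n),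
      (∀ i, xb i ≠ 0 → Real.sign (x i) = Real.sign (xb i)) →
      (∀ i, xb i = 0 → x i = 0) →
      f x - f xb = htil x - htil xb := by
    intro x hs1 hs2
    rw [hf, hhtil]
    simp only
    rw [sub_self, inner_zero_right]
    have hinner : (inner ℝ g (x - xb) : ℝ) = ∑ i, g i * (x i - xb i) := by
      rw [PiLp.inner_apply]
      exact Finset.sum_congr rfl (fun i _ => by simp [RCLike.inner_apply, mul_comm])
    have key : μ * (∑ i, |x i|) - μ * (∑ i, |xb i|) = - ∑ i, g i * (x i - xb i) := by
      have e1 : μ * (∑ i, |x i|) - μ * (∑ i, |xb i|) = ∑ i, μ * (|x i| - |xb i|) := by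
        rw [← Finset.mul_sum, Finset.sum_sub_distrib, mul_sub]
      have e2 : ∀ i : Fin n, μ * (|x i| - |xb i|) = -(g i * (x i - xb i)) := by
        intro i
        by_cases hi : xb i = 0
        · rw [hs2 i hi, hi]; ring
        · rw [aux_abs_sub _ _ (hs1 i hi), (hstat i).1 hi]; ring
      rw [e1, Finset.sum_congr rfl (fun i _ => e2 i), Finset.sum_neg_distrib]
    rw [hinner]
    linarith [key]
  constructor
  · -- forward direction
    rintro ⟨c, hc, ε, hε, ν, hν, HKL⟩
    refine ⟨c, hc, min (min ε ν) (min σ δ), by positivity, ?_⟩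
    intro x hx1 hx2 hx3 hx4
    have hxε : ‖x - xb‖ < ε := lt_of_lt_of_le hx1 ((min_le_left _ _).trans (min_le_left _ _))
    have hxσ : ‖x - xb‖ < σ := lt_of_lt_of_le hx1 ((min_le_right _ _).trans (min_le_left _ _))
    have hxδ : ‖x - xb‖ < δ := lt_of_lt_of_le hx1 ((min_le_right _ _).trans (min_le_right _ _))
    have hzero : ∀ i, xb i = 0 → x i = 0 := fun i hi => by rw [hx4 i hi, hi]
    have hEq : f x - f xb = htil x - htil xb :=
      hfd x (fun i hi => (hsign x hxσ i hi).2) hzero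
    have hx2' : 0 < f x - f xb := by rw [hEq]; exact hx2
    have hx3' : f x - f xb < ν := by
      rw [hEq]
      exact lt_of_lt_of_le hx3 ((min_le_left _ _).trans (min_le_right _ _))
    have HK := HKL x hxε hx2' hx3'
    set v : EuclideanSpace ℝ (Fin n) :=
      WithLp.toLp 2 (fun i => if xb i = 0 then 0 else gradient h x i - g i) with hv
    have hgb : ∀ i : Fin n, xb i = 0 → |gradient h x i| < μ := by
      intro i hi
      have h1 : |gradient h x i - g i| ≤ ‖gradient h x - g‖ :=
        aux_coord_le (gradient h x - g) i
      have h2 : ‖gradient h x - g‖ < ρ := hδ x hxδ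
      have h3 : 2 * ρ ≤ μ - |g i| := hρle i hi
      have h4 : |gradient h x i| ≤ |g i| + |gradient h x i - g i| := by
        calc |gradient h x i| = |g i + (gradient h x i - g i)| := by ring_nf
          _ ≤ |g i| + |gradient h x i - g i| := abs_add_le _ _
      linarith
    have hmem : v ∈ {w : EuclideanSpace ℝ (Fin n) | ∃ ξ : EuclideanSpace ℝ (Fin n),
        (∀ i, (x i ≠ 0 → ξ i = Real.sign (x i)) ∧
          (x i = 0 → ξ i ∈ Set.Icc (-1 : ℝ) 1)) ∧
        w = gradient h x + μ • ξ} := by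
      refine ⟨(WithLp.toLp 2 (fun i => if xb i = 0 then -(gradient h x i) / μ else Real.sign (x i)) :
        EuclideanSpace ℝ (Fin n)), fun i => ⟨?_, ?_⟩, ?_⟩
      · intro hxi
        by_cases hbi : xb i = 0
        · exact absurd (hzero i hbi) hxi
        · simp [hbi]
      · intro hxi
        by_cases hbi : xb i = 0
        · have := hgb i hbi
          have habs : |(-(gradient h x i)) / μ| ≤ 1 := by
            rw [abs_div, abs_neg, abs_of_pos hμ]
            exact div_le_one_of_le₀ this.le hμ.le
          simp only [WithLp.ofLp_toLp, if_pos hbi]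
          exact abs_le.1 habs
        · exact absurd hxi (hsign x hxσ i hbi).1
      · ext i
        show (if xb i = 0 then (0:ℝ) else gradient h x i - g i) =
          gradient h x i + μ * (if xb i = 0 then -(gradient h x i) / μ else Real.sign (x i))
        by_cases hbi : xb i = 0
        · rw [if_pos hbi, if_pos hbi]
          field_simp
          ring
        · rw [if_neg hbi, if_neg hbi, (hsign x hxσ i hbi).2, (hstat i).1 hbi]
          ring
    have hle := Metric.infDist_le_dist_of_mem (x := (0 : EuclideanSpace ℝ (Fin n))) hmem
    rw [dist_zero_left] at hle
    have hnv : ‖v‖ = Real.sqrt (∑ i ∈ Finset.univ.filter (fun i => xb i ≠ 0),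
        (gradient htil x i) ^ 2) := by
      rw [aux_norm_eq]
      congr 1
      rw [← Finset.sum_filter_add_sum_filter_not Finset.univ (fun i => xb i ≠ 0)
        (fun i => (v i) ^ 2)]
      have h0 : ∑ i ∈ Finset.univ.filter (fun i => ¬ xb i ≠ 0), (v i) ^ 2 = 0 := by
        apply Finset.sum_eq_zero
        intro i hi
        have hbi : xb i = 0 := not_not.1 (Finset.mem_filter.1 hi).2
        simp [hv, hbi]
      rw [h0, add_zero]
      apply Finset.sum_congr rfl
      intro i hi
      have hbi : xb i ≠ 0 := (Finset.mem_filter.1 hi).2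
      rw [hgradi]
      simp [hv, hbi]
    calc c * (htil x - htil xb) ^ α = c * (f x - f xb) ^ α := by rw [hEq]
      _ ≤ _ := HK
      _ ≤ ‖v‖ := hle
      _ = _ := hnv
  · -- backward direction
    rintro ⟨c, hc, r, hr, HRS⟩
    have hrα : (0 : ℝ) < r ^ α := Real.rpow_pos_of_pos hr α
    set c' : ℝ := min c (ρ / r ^ α) with hc'def
    have hc' : 0 < c' := lt_min hc (div_pos hρpos hrα)
    refine ⟨c', hc', min (min r σ) δ, by positivity, r, hr, ?_⟩
    intro x hx1 hx2 hx3
    have hxr : ‖x - xb‖ < r := lt_of_lt_of_le hx1 ((min_le_left _ _).trans (min_le_left _ _))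
    have hxσ : ‖x - xb‖ < σ := lt_of_lt_of_le hx1 ((min_le_left _ _).trans (min_le_right _ _))
    have hxδ : ‖x - xb‖ < δ := lt_of_lt_of_le hx1 (min_le_right _ _)
    have hSne : Set.Nonempty {w : EuclideanSpace ℝ (Fin n) | ∃ ξ : EuclideanSpace ℝ (Fin n),
        (∀ i, (x i ≠ 0 → ξ i = Real.sign (x i)) ∧
          (x i = 0 → ξ i ∈ Set.Icc (-1 : ℝ) 1)) ∧
        w = gradient h x + μ • ξ} := by
      refine ⟨_, (WithLp.toLp 2 (fun i => Real.sign (x i)) : EuclideanSpace ℝ (Fin n)),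
        fun i => ⟨fun _ => rfl, ?_⟩, rfl⟩
      intro hxi
      show Real.sign (x i) ∈ Set.Icc (-1 : ℝ) 1
      rw [hxi, Real.sign_zero]
      constructor <;> norm_num
    by_cases hcase : ∀ i, xb i = 0 → x i = 0
    · have hEq : f x - f xb = htil x - htil xb :=
        hfd x (fun i hi => (hsign x hxσ i hi).2) hcase
      have h2' : 0 < htil x - htil xb := by rw [← hEq]; exact hx2
      have h3' : htil x - htil xb < r := by rw [← hEq]; exact hx3
      have HB := HRS x hxr h2' h3' (fun i hi => by rw [hcase i hi, hi])
      have hbound : Real.sqrt (∑ i ∈ Finset.univ.filter (fun i => xb i ≠ 0),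
          (gradient htil x i) ^ 2) ≤ Metric.infDist (0 : EuclideanSpace ℝ (Fin n))
          {w : EuclideanSpace ℝ (Fin n) | ∃ ξ : EuclideanSpace ℝ (Fin n),
            (∀ i, (x i ≠ 0 → ξ i = Real.sign (x i)) ∧
              (x i = 0 → ξ i ∈ Set.Icc (-1 : ℝ) 1)) ∧
            w = gradient h x + μ • ξ} := by
        apply aux_le_infDist _ _ _ (Real.sqrt_nonneg _) hSne
        rintro y ⟨ξ, hξ, rfl⟩
        rw [dist_zero_left, aux_norm_eq]
        apply Real.sqrt_le_sqrt
        calc ∑ i ∈ Finset.univ.filter (fun i => xb i ≠ 0), (gradient htil x i) ^ 2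
            = ∑ i ∈ Finset.univ.filter (fun i => xb i ≠ 0),
              ((gradient h x + μ • ξ) i) ^ 2 := by
              apply Finset.sum_congr rfl
              intro i hi
              have hbi : xb i ≠ 0 := (Finset.mem_filter.1 hi).2
              have hxi : x i ≠ 0 := (hsign x hxσ i hbi).1
              have hξi : ξ i = Real.sign (x i) := (hξ i).1 hxi
              have hcoords : (gradient h x + μ • ξ) i = gradient h x i + μ * ξ i := rfl
              rw [hcoords, hξi, (hsign x hxσ i hbi).2, hgradi]
              have := (hstat i).1 hbi
              rw [hg] at this ⊢
              rw [this]
              ring_nf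
          _ ≤ ∑ i, ((gradient h x + μ • ξ) i) ^ 2 :=
              Finset.sum_le_sum_of_subset_of_nonneg (Finset.filter_subset _ _)
                (fun i _ _ => sq_nonneg _)
      calc c' * (f x - f xb) ^ α = c' * (htil x - htil xb) ^ α := by rw [hEq]
        _ ≤ c * (htil x - htil xb) ^ α :=
            mul_le_mul_of_nonneg_right (min_le_left _ _) (Real.rpow_nonneg h2'.le α)
        _ ≤ _ := HB
        _ ≤ _ := hbound
    · push_neg at hcase
      obtain ⟨i₀, hb0, hx0⟩ := hcase
      have key1 : c' * (f x - f xb) ^ α ≤ ρ := by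
        have ht : (f x - f xb) ^ α ≤ r ^ α :=
          Real.rpow_le_rpow hx2.le hx3.le hα.1.le
        calc c' * (f x - f xb) ^ α ≤ (ρ / r ^ α) * (r ^ α) :=
            mul_le_mul (min_le_right _ _) ht (Real.rpow_nonneg hx2.le α)
              (div_pos hρpos hrα).le
          _ = ρ := div_mul_cancel₀ _ (ne_of_gt hrα)
      refine le_trans key1 (aux_le_infDist _ _ _ hρpos.le hSne ?_)
      rintro y ⟨ξ, hξ, rfl⟩
      rw [dist_zero_left]
      have hξi : ξ i₀ = Real.sign (x i₀) := (hξ i₀).1 hx0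
      have hcoords : (gradient h x + μ • ξ) i₀ = gradient h x i₀ + μ * ξ i₀ := rfl
      have habs : |μ * ξ i₀| = μ := by
        rw [abs_mul, hξi, aux_sign_abs _ hx0, abs_of_pos hμ, mul_one]
      have h1 : |gradient h x i₀ - g i₀| ≤ ‖gradient h x - g‖ :=
        aux_coord_le (gradient h x - g) i₀
      have h2 : ‖gradient h x - g‖ < ρ := hδ x hxδ
      have h3 : 2 * ρ ≤ μ - |g i₀| := hρle i₀ hb0
      have h4 : |gradient h x i₀| ≤ |g i₀| + |gradient h x i₀ - g i₀| := by
        calc |gradient h x i₀| = |g i₀ + (gradient h x i₀ - g i₀)| := by ring_nf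
          _ ≤ |g i₀| + |gradient h x i₀ - g i₀| := abs_add_le _ _
      have h5 : μ ≤ |(gradient h x + μ • ξ) i₀| + |gradient h x i₀| := by
        calc μ = |μ * ξ i₀| := habs.symm
          _ = |((gradient h x + μ • ξ) i₀) - gradient h x i₀| := by rw [hcoords]; ring_nf
          _ ≤ |(gradient h x + μ • ξ) i₀| + |gradient h x i₀| := abs_sub _ _
      have h6 : ρ ≤ |(gradient h x + μ • ξ) i₀| := by linarith
      exact h6.trans (aux_coord_le _ i₀)
end

section
/- Fix α ∈ [1/2, 1) and define h : ℝ → ℝ by h(x) = (1−α)|x|^{1/(1−α)} − x, and F : ℝ×ℝ → ℝ by F(a,b) = h(a² − b²) + a² + b² = (1−α)|a² − b²|^{1/(1−α)} + 2b². Then: (1) h is twice continuously differentiable and convex; (2) (0,0) is a global minimizer of F; (3) for every t > 0, F(t,0) − F(0,0) = (1−α)t^{2/(1−α)} and ‖∇F(t,0)‖ = 2·((1−α)^{−1}(F(t,0) − F(0,0)))^{(1+α)/2}; (4) consequently, for every θ ∈ (0, (1+α)/2), F does not satisfy the KL property at (0,0) with exponent θ, i.e., there are no c, ε, ν > 0 such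 that ‖∇F(a,b)‖ ≥ c·(F(a,b) − F(0,0))^θ for all (a,b) with ‖(a,b)‖ < ε and 0 < F(a,b) − F(0,0) < ν. -/
open scoped BigOperators

open Filter Set


open Filter Set

lemma absDeriv_ne (q x : ℝ) (hx : x ≠ 0) :
    HasDerivAt (fun y : ℝ => |y| ^ q) (q * x * |x| ^ (q - 2)) x := by
  rcases hx.lt_or_gt with hx0 | hx0
  · -- x < 0
    have hpos : 0 < -x := by linarith
    have h1 : HasDerivAt (fun y : ℝ => (-y) ^ q) (q * (-x) ^ (q - 1) * (-1)) x := by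
      have houter : HasDerivAt (fun z : ℝ => z ^ q) (q * (-x) ^ (q - 1)) (-x) :=
        Real.hasDerivAt_rpow_const (Or.inl (by linarith))
      have hinner : HasDerivAt (fun y : ℝ => -y) (-1) x := (hasDerivAt_id x).neg
      exact houter.comp x hinner
    have heq : (fun y : ℝ => |y| ^ q) =ᶠ[nhds x] fun y : ℝ => (-y) ^ q := by
      filter_upwards [eventually_lt_nhds hx0] with y hy
      rw [abs_of_neg hy]
    have := h1.congr_of_eventuallyEq heq
    refine this.congr_deriv (Eq.symm ?_)
    rw [abs_of_neg hx0]
    have : (-x) ^ (q - 1) = (-x) ^ (q - 2) * (-x) := by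
      rw [← Real.rpow_add_one (ne_of_gt hpos)]; ring_nf
    rw [this]; ring
  · -- x > 0
    have h1 : HasDerivAt (fun z : ℝ => z ^ q) (q * x ^ (q - 1)) x :=
      Real.hasDerivAt_rpow_const (Or.inl hx)
    have heq : (fun y : ℝ => |y| ^ q) =ᶠ[nhds x] fun y : ℝ => y ^ q := by
      filter_upwards [eventually_gt_nhds hx0] with y hy
      rw [abs_of_pos hy]
    have := h1.congr_of_eventuallyEq heq
    refine this.congr_deriv (Eq.symm ?_)
    rw [abs_of_pos hx0]
    have : x ^ (q - 1) = x ^ (q - 2) * x := by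
      rw [← Real.rpow_add_one (ne_of_gt hx0)]; ring_nf
    rw [this]; ring

lemma tendsto_abs_rpow (r : ℝ) (hr : 0 < r) :
    Filter.Tendsto (fun y : ℝ => |y| ^ r) (nhds 0) (nhds 0) := by
  have h1 : ContinuousAt (fun z : ℝ => z ^ r) (|(0:ℝ)|) := by
    simpa using Real.continuousAt_rpow_const 0 r (Or.inr hr.le)
  have h2 : ContinuousAt (fun y : ℝ => |y| ^ r) 0 :=
    h1.comp continuous_abs.continuousAt
  have := h2.tendsto
  simpa [Real.zero_rpow (ne_of_gt hr)] using this

lemma absDeriv_zero (q : ℝ) (hq : 1 < q) :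
    HasDerivAt (fun y : ℝ => |y| ^ q) 0 0 := by
  rw [hasDerivAt_iff_tendsto_slope]
  have heq : slope (fun y : ℝ => |y| ^ q) 0 =ᶠ[nhdsWithin 0 {(0:ℝ)}ᶜ]
      fun y => |y| ^ q / y := by
    filter_upwards [self_mem_nhdsWithin] with y hy
    simp [slope_def_field, Real.zero_rpow (by positivity : q ≠ 0), div_eq_inv_mul]
  rw [Filter.tendsto_congr' heq]
  apply squeeze_zero_norm' (a := fun y : ℝ => |y| ^ (q - 1))
  · filter_upwards [self_mem_nhdsWithin] with y hy
    have hy0 : y ≠ 0 := hy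
    have hay : (0:ℝ) < |y| := abs_pos.2 hy0
    rw [Real.norm_eq_abs, abs_div, abs_of_nonneg (Real.rpow_nonneg (abs_nonneg y) q),
      Real.rpow_sub hay, Real.rpow_one]
  · exact (tendsto_abs_rpow (q-1) (by linarith)).mono_left nhdsWithin_le_nhds
lemma absD1 (q : ℝ) (hq : 2 ≤ q) (x : ℝ) :
    HasDerivAt (fun y : ℝ => |y| ^ q) (q * x * |x| ^ (q - 2)) x := by
  rcases eq_or_ne x 0 with rfl | hx
  · simpa using absDeriv_zero q (by linarith)
  · exact absDeriv_ne q x hx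

lemma absD2 (q : ℝ) (hq : 2 ≤ q) (x : ℝ) :
    HasDerivAt (fun y : ℝ => q * y * |y| ^ (q - 2)) (q * (q - 1) * |x| ^ (q - 2)) x := by
  rcases eq_or_lt_of_le hq with rfl | hq2
  · -- q = 2
    have hfun : (fun y : ℝ => (2:ℝ) * y * |y| ^ ((2:ℝ) - 2)) = fun y : ℝ => 2 * y := by
      funext y; norm_num
    rw [hfun]
    have : HasDerivAt (fun y : ℝ => (2:ℝ) * y) 2 x := by
      simpa using (hasDerivAt_id x).const_mul (2:ℝ)
    convert this using 1
    norm_num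
  · rcases eq_or_ne x 0 with rfl | hx
    · -- x = 0, q > 2
      have hval : q * (q - 1) * |(0:ℝ)| ^ (q - 2) = 0 := by
        rw [abs_zero, Real.zero_rpow (by linarith : q - 2 ≠ 0)]; ring
      rw [hval, hasDerivAt_iff_tendsto_slope]
      have heq : slope (fun y : ℝ => q * y * |y| ^ (q - 2)) 0 =ᶠ[nhdsWithin 0 {(0:ℝ)}ᶜ]
          fun y => q * |y| ^ (q - 2) := by
        filter_upwards [self_mem_nhdsWithin] with y hy
        have hy0 : (y:ℝ) ≠ 0 := hy
        rw [slope_def_field]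
        simp only [mul_zero, zero_mul, sub_zero]
        rw [div_eq_iff hy0]; ring
      rw [Filter.tendsto_congr' heq]
      have := (tendsto_abs_rpow (q - 2) (by linarith)).mono_left
        (nhdsWithin_le_nhds (s := {(0:ℝ)}ᶜ))
      have h2 := this.const_mul q
      simpa using h2
    · -- x ≠ 0, q > 2
      have hd : HasDerivAt (fun y : ℝ => |y| ^ (q - 2)) ((q-2) * x * |x| ^ (q - 2 - 2)) x :=
        absDeriv_ne (q - 2) x hx
      have hid : HasDerivAt (fun y : ℝ => q * y) q x := by
        simpa using (hasDerivAt_id x).const_mul q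
      have := hid.mul hd
      refine this.congr_deriv (Eq.symm ?_)
      have hax : (0:ℝ) < |x| := abs_pos.2 hx
      have hxx : x * x = |x| ^ (2:ℝ) := by
        rw [show (2:ℝ) = ((2:ℕ):ℝ) by norm_num, Real.rpow_natCast, sq_abs]; ring
      have key : x * ((q - 2) * x * |x| ^ (q - 2 - 2)) = (q-2) * |x| ^ (q - 2) := by
        have : |x| ^ (q - 2) = |x| ^ (2:ℝ) * |x| ^ (q - 2 - 2) := by
          rw [← Real.rpow_add hax]; ring_nf
        rw [this, ← hxx]; ring
      calc q * (q - 1) * |x| ^ (q - 2)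
          = q * |x| ^ (q-2) + q * ((q-2) * |x| ^ (q - 2)) := by ring
        _ = q * x * ((q - 2) * x * |x| ^ (q - 2 - 2)) + |x| ^ (q-2) * q := by
            rw [← key]; ring
        _ = q * |x| ^ (q - 2) + q * x * ((q - 2) * x * |x| ^ (q - 2 - 2)) := by ring
lemma absContDiff2 (q : ℝ) (hq : 2 ≤ q) : ContDiff ℝ 2 (fun y : ℝ => |y| ^ q) := by
  have hderiv : deriv (fun y : ℝ => |y| ^ q) = fun x => q * x * |x| ^ (q - 2) :=
    funext fun x => (absD1 q hq x).deriv
  have hderiv2 : deriv (deriv (fun y : ℝ => |y| ^ q)) =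
      fun x => q * (q - 1) * |x| ^ (q - 2) := by
    rw [hderiv]; exact funext fun x => (absD2 q hq x).deriv
  have hcont : Continuous (fun x : ℝ => q * (q - 1) * |x| ^ (q - 2)) := by
    apply continuous_const.mul
    have : Continuous fun x : ℝ => x ^ (q - 2) :=
      continuous_iff_continuousAt.2 fun x =>
        Real.continuousAt_rpow_const x (q - 2) (Or.inr (by linarith))
    exact this.comp continuous_abs
  rw [show (2 : WithTop ℕ∞) = 1 + 1 by norm_num]
  rw [contDiff_succ_iff_deriv]
  refine ⟨fun x => (absD1 q hq x).differentiableAt, by simp, ?_⟩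
  rw [contDiff_one_iff_deriv]
  refine ⟨?_, by rw [hderiv2]; exact hcont⟩
  rw [hderiv]
  exact fun x => (absD2 q hq x).differentiableAt

lemma absConvex (q : ℝ) (hq : 1 ≤ q) : ConvexOn ℝ Set.univ (fun y : ℝ => |y| ^ q) := by
  have habs : ConvexOn ℝ Set.univ (fun y : ℝ => |y|) := by
    refine ⟨convex_univ, fun x _ y _ a b ha hb hab => ?_⟩
    simp only [smul_eq_mul]
    calc |a * x + b * y| ≤ |a * x| + |b * y| := abs_add_le _ _
      _ = a * |x| + b * |y| := by rw [abs_mul, abs_mul, abs_of_nonneg ha, abs_of_nonneg hb]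
  have himg : (fun y : ℝ => |y|) '' Set.univ = Set.Ici 0 := by
    ext t
    constructor
    · rintro ⟨y, -, rfl⟩; exact abs_nonneg y
    · intro ht; exact ⟨t, Set.mem_univ t, abs_of_nonneg ht⟩
  have hrpow : ConvexOn ℝ ((fun y : ℝ => |y|) '' Set.univ) (fun t : ℝ => t ^ q) := by
    rw [himg]; exact convexOn_rpow hq
  have hmono : MonotoneOn (fun t : ℝ => t ^ q) ((fun y : ℝ => |y|) '' Set.univ) := by
    rw [himg]
    intro a ha b _ hab
    exact Real.rpow_le_rpow ha hab (by linarith)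
  exact hrpow.comp habs hmono

/-- **Example 3.9.** With `h(x) = (1−α)|x|^{1/(1−α)} − x` and
`F(a,b) = h(a² − b²) + a² + b² = (1−α)|a² − b²|^{1/(1−α)} + 2b²` for `α ∈ [1/2, 1)`:
(1) `h` is `C²` and convex; (2) `(0,0)` globally minimizes `F`;
(3) for `t > 0`, `F(t,0) − F(0,0) = (1−α)t^{2/(1−α)}` and
`‖∇F(t,0)‖ = 2((1−α)⁻¹(F(t,0) − F(0,0)))^{(1+α)/2}`; (4) hence `F` does not satisfy
the KL property at `(0,0)` with any exponent `θ ∈ (0, (1+α)/2)`. -/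
theorem stmt15 (α : ℝ) (hα : α ∈ Set.Ico (1 / 2 : ℝ) 1)
    (h : ℝ → ℝ) (hh : h = fun x => (1 - α) * |x| ^ (1 / (1 - α)) - x)
    (F : ℝ × ℝ → ℝ) (hF : F = fun p => h (p.1 ^ 2 - p.2 ^ 2) + p.1 ^ 2 + p.2 ^ 2) :
    (∀ p : ℝ × ℝ, F p = (1 - α) * |p.1 ^ 2 - p.2 ^ 2| ^ (1 / (1 - α)) + 2 * p.2 ^ 2) ∧
    (ContDiff ℝ 2 h ∧ ConvexOn ℝ Set.univ h) ∧
    (∀ p : ℝ × ℝ, F (0, 0) ≤ F p) ∧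
    (∀ t : ℝ, 0 < t →
      F (t, 0) - F (0, 0) = (1 - α) * t ^ (2 / (1 - α)) ∧
      Real.sqrt ((fderiv ℝ F (t, 0) (1, 0)) ^ 2 + (fderiv ℝ F (t, 0) (0, 1)) ^ 2) =
        2 * ((1 - α)⁻¹ * (F (t, 0) - F (0, 0))) ^ ((1 + α) / 2)) ∧
    (∀ θ : ℝ, 0 < θ → θ < (1 + α) / 2 →
      ¬ ∃ c > (0 : ℝ), ∃ ε > (0 : ℝ), ∃ ν > (0 : ℝ), ∀ p : ℝ × ℝ,
        Real.sqrt (p.1 ^ 2 + p.2 ^ 2) < ε →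
        0 < F p - F (0, 0) → F p - F (0, 0) < ν →
        c * (F p - F (0, 0)) ^ θ ≤
          Real.sqrt ((fderiv ℝ F p (1, 0)) ^ 2 + (fderiv ℝ F p (0, 1)) ^ 2)) := by
  obtain ⟨hα1, hα2⟩ := hα
  have h1α : 0 < 1 - α := by linarith
  have h1α' : (1:ℝ) - α ≤ 1/2 := by linarith
  set pe : ℝ := 1 / (1 - α) with hpe_def
  have hpe_pos : 0 < pe := by positivity
  have hpe2 : 2 ≤ pe := by
    rw [hpe_def, le_div_iff₀ h1α]; linarith
  have hpe_mul : (1 - α) * pe = 1 := by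
    rw [hpe_def]; field_simp
  -- Part (0): alternative formula for F
  have part0 : ∀ p : ℝ × ℝ, F p = (1 - α) * |p.1 ^ 2 - p.2 ^ 2| ^ pe + 2 * p.2 ^ 2 := by
    intro p
    rw [hF, hh]
    ring
  -- F(0,0) = 0
  have hF00 : F (0, 0) = 0 := by
    rw [part0]
    show (1 - α) * |(0:ℝ) ^ 2 - (0:ℝ) ^ 2| ^ pe + 2 * (0:ℝ) ^ 2 = 0
    rw [show |(0:ℝ) ^ 2 - (0:ℝ) ^ 2| = 0 by norm_num, Real.zero_rpow (ne_of_gt hpe_pos)]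
    ring
  -- Part (1)
  have part1 : ContDiff ℝ 2 h ∧ ConvexOn ℝ Set.univ h := by
    constructor
    · rw [hh]
      exact (contDiff_const.mul (absContDiff2 pe hpe2)).sub contDiff_id
    · rw [hh]
      have hg := absConvex pe (by linarith)
      refine ⟨convex_univ, ?_⟩
      intro x _ y _ a b ha hb hab
      have hgc := hg.2 (Set.mem_univ x) (Set.mem_univ y) ha hb hab
      simp only [smul_eq_mul] at hgc ⊢
      nlinarith [mul_le_mul_of_nonneg_left hgc (le_of_lt h1α)]
  -- Part (2)
  have part2 : ∀ p : ℝ × ℝ, F (0, 0) ≤ F p := by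
    intro p
    rw [hF00, part0]
    have h1 : (0:ℝ) ≤ (1 - α) * |p.1 ^ 2 - p.2 ^ 2| ^ pe :=
      mul_nonneg (le_of_lt h1α) (Real.rpow_nonneg (abs_nonneg _) pe)
    nlinarith [sq_nonneg p.2]
  -- Part (3)
  have part3 : ∀ t : ℝ, 0 < t →
      F (t, 0) - F (0, 0) = (1 - α) * t ^ (2 / (1 - α)) ∧
      Real.sqrt ((fderiv ℝ F (t, 0) (1, 0)) ^ 2 + (fderiv ℝ F (t, 0) (0, 1)) ^ 2) =
        2 * ((1 - α)⁻¹ * (F (t, 0) - F (0, 0))) ^ ((1 + α) / 2) := by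
    intro t ht
    have ht2 : (0:ℝ) < t ^ 2 := by positivity
    have habs : |t ^ 2 - (0:ℝ) ^ 2| = t ^ 2 := by
      rw [show t ^ 2 - (0:ℝ) ^ 2 = t ^ 2 by ring, abs_of_pos ht2]
    have hkey : ((t:ℝ) ^ 2) ^ pe = t ^ (2 * pe) := by
      rw [← Real.rpow_natCast t 2, ← Real.rpow_mul (le_of_lt ht)]
      norm_num
    have hFt : F (t, 0) = (1 - α) * t ^ (2 * pe) := by
      rw [part0]
      show (1 - α) * |t ^ 2 - (0:ℝ) ^ 2| ^ pe + 2 * (0:ℝ) ^ 2 = _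
      rw [habs, hkey]
      ring
    have hdiff : F (t, 0) - F (0, 0) = (1 - α) * t ^ (2 * pe) := by
      rw [hFt, hF00]; ring
    have hexp : 2 / (1 - α) = 2 * pe := by rw [hpe_def]; ring
    constructor
    · rw [hdiff, hexp]
    · -- fderiv computation
      set dh : ℝ := (1 - α) * (pe * (t^2 - 0^2) * |t^2 - 0^2| ^ (pe - 2)) - 1 with hdh_def
      have hd : HasDerivAt h dh ((t:ℝ)^2 - (0:ℝ)^2) := by
        rw [hh]
        exact ((absD1 pe hpe2 _).const_mul (1 - α)).sub (hasDerivAt_id _)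
      have hsq1 : HasFDerivAt (fun p : ℝ × ℝ => p.1 ^ 2)
          ((t : ℝ) • ContinuousLinearMap.fst ℝ ℝ ℝ + (t : ℝ) • ContinuousLinearMap.fst ℝ ℝ ℝ)
          ((t, 0) : ℝ × ℝ) := by
        have := (hasFDerivAt_fst (𝕜 := ℝ) (p := ((t,0):ℝ×ℝ))).mul (hasFDerivAt_fst (𝕜 := ℝ) (p := ((t,0):ℝ×ℝ)))
        simp only [sq]; exact this
      have hsq2 : HasFDerivAt (fun p : ℝ × ℝ => p.2 ^ 2)
          ((0 : ℝ) • ContinuousLinearMap.snd ℝ ℝ ℝ + (0 : ℝ) • ContinuousLinearMap.snd ℝ ℝ ℝ)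
          ((t, 0) : ℝ × ℝ) := by
        have := (hasFDerivAt_snd (𝕜 := ℝ) (p := ((t,0):ℝ×ℝ))).mul (hasFDerivAt_snd (𝕜 := ℝ) (p := ((t,0):ℝ×ℝ)))
        simp only [sq]; exact this
      have hu : HasFDerivAt (fun p : ℝ × ℝ => p.1 ^ 2 - p.2 ^ 2)
          (((t : ℝ) • ContinuousLinearMap.fst ℝ ℝ ℝ + (t : ℝ) • ContinuousLinearMap.fst ℝ ℝ ℝ) -
           ((0 : ℝ) • ContinuousLinearMap.snd ℝ ℝ ℝ + (0 : ℝ) • ContinuousLinearMap.snd ℝ ℝ ℝ))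
          ((t, 0) : ℝ × ℝ) := hsq1.sub hsq2
      have hcomp : HasFDerivAt (fun p : ℝ × ℝ => h (p.1 ^ 2 - p.2 ^ 2))
          (dh • (((t : ℝ) • ContinuousLinearMap.fst ℝ ℝ ℝ + (t : ℝ) • ContinuousLinearMap.fst ℝ ℝ ℝ) -
           ((0 : ℝ) • ContinuousLinearMap.snd ℝ ℝ ℝ + (0 : ℝ) • ContinuousLinearMap.snd ℝ ℝ ℝ)))
          ((t, 0) : ℝ × ℝ) := hd.comp_hasFDerivAt ((t, 0) : ℝ × ℝ) hu
      have hFd : HasFDerivAt F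
          (dh • (((t : ℝ) • ContinuousLinearMap.fst ℝ ℝ ℝ + (t : ℝ) • ContinuousLinearMap.fst ℝ ℝ ℝ) -
           ((0 : ℝ) • ContinuousLinearMap.snd ℝ ℝ ℝ + (0 : ℝ) • ContinuousLinearMap.snd ℝ ℝ ℝ))
           + ((t : ℝ) • ContinuousLinearMap.fst ℝ ℝ ℝ + (t : ℝ) • ContinuousLinearMap.fst ℝ ℝ ℝ)
           + ((0 : ℝ) • ContinuousLinearMap.snd ℝ ℝ ℝ + (0 : ℝ) • ContinuousLinearMap.snd ℝ ℝ ℝ))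
          ((t, 0) : ℝ × ℝ) := by
        rw [hF]
        exact (hcomp.add hsq1).add hsq2
      have hval1 : fderiv ℝ F (t, 0) (1, 0) = dh * (2 * t) + 2 * t := by
        rw [hFd.fderiv]
        simp [ContinuousLinearMap.add_apply, ContinuousLinearMap.sub_apply,
          ContinuousLinearMap.smul_apply]
        ring
      have hval2 : fderiv ℝ F (t, 0) (0, 1) = 0 := by
        rw [hFd.fderiv]
        simp [ContinuousLinearMap.add_apply, ContinuousLinearMap.sub_apply,
          ContinuousLinearMap.smul_apply]
      rw [hval1, hval2]
      -- simplify dh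
      have hdh : dh = t ^ (2 * (pe - 1)) - 1 := by
        rw [hdh_def, habs, show t ^ 2 - (0:ℝ) ^ 2 = t ^ 2 by ring]
        have e1 : (1 - α) * (pe * t ^ 2 * (t ^ 2) ^ (pe - 2)) = t ^ 2 * (t ^ 2) ^ (pe - 2) := by
          linear_combination (t ^ 2 * (t ^ 2) ^ (pe - 2)) * hpe_mul
        rw [e1]
        have e2 : t ^ 2 * ((t:ℝ) ^ 2) ^ (pe - 2) = t ^ (2 * (pe - 1)) := by
          rw [← Real.rpow_natCast t 2, ← Real.rpow_mul (le_of_lt ht),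
            ← Real.rpow_add ht]
          congr 1
          push_cast
          ring
        rw [e2]
      have hX : dh * (2 * t) + 2 * t = 2 * t ^ (2 * pe - 1) := by
        rw [hdh]
        have : t ^ (2 * pe - 1) = t ^ (2 * (pe - 1)) * t := by
          rw [← Real.rpow_add_one (ne_of_gt ht)]; ring_nf
        rw [this]; ring
      rw [hX, hdiff]
      have hXpos : (0:ℝ) < 2 * t ^ (2 * pe - 1) := by
        have := Real.rpow_pos_of_pos ht (2 * pe - 1)
        linarith
      rw [show ((2 * t ^ (2 * pe - 1)) ^ 2 + (0:ℝ) ^ 2) = (2 * t ^ (2 * pe - 1)) ^ 2 by ring]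
      rw [Real.sqrt_sq (le_of_lt hXpos)]
      rw [show (1 - α)⁻¹ * ((1 - α) * t ^ (2 * pe)) = t ^ (2 * pe) by
        field_simp]
      rw [← Real.rpow_mul (le_of_lt ht)]
      have hexp2 : 2 * pe * ((1 + α) / 2) = 2 * pe - 1 := by
        linear_combination (-1 : ℝ) * hpe_mul
      rw [hexp2]
  refine ⟨part0, part1, part2, part3, ?_⟩
  -- Part (4)
  intro θ hθ0 hθ
  rintro ⟨c, hc, ε, hε, ν, hν, hKL⟩
  have hexp : 2 / (1 - α) = 2 * pe := by rw [hpe_def]; ring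
  set e0 : ℝ := 2 * pe * ((1 + α) / 2 - θ) with he0
  have he0pos : 0 < e0 := by
    apply mul_pos (by linarith) (by linarith)
  have hA : (0:ℝ) < (1 - α) ^ θ := Real.rpow_pos_of_pos h1α θ
  set K : ℝ := c * (1 - α) ^ θ / 2 with hK_def
  have hK : 0 < K := by
    rw [hK_def]; positivity
  have htends : ∀ r : ℝ, 0 < r →
      Filter.Tendsto (fun t : ℝ => t ^ r) (nhdsWithin 0 (Set.Ioi 0)) (nhds 0) := by
    intro r hr
    have h1 := (Real.continuousAt_rpow_const 0 r (Or.inr hr.le)).tendsto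
    rw [Real.zero_rpow (ne_of_gt hr)] at h1
    exact h1.mono_left nhdsWithin_le_nhds
  have ev1 : ∀ᶠ t : ℝ in nhdsWithin 0 (Set.Ioi 0), t < ε :=
    ((tendsto_id.mono_left nhdsWithin_le_nhds)).eventually_lt_const hε
  have ev2 : ∀ᶠ t : ℝ in nhdsWithin 0 (Set.Ioi 0), (1 - α) * t ^ (2 * pe) < ν := by
    have := (htends (2 * pe) (by linarith)).const_mul (1 - α)
    rw [mul_zero] at this
    exact this.eventually_lt_const hν
  have ev3 : ∀ᶠ t : ℝ in nhdsWithin 0 (Set.Ioi 0), t ^ e0 < K :=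
    (htends e0 he0pos).eventually_lt_const hK
  have ev4 : ∀ᶠ t : ℝ in nhdsWithin 0 (Set.Ioi 0), t ∈ Set.Ioi (0:ℝ) :=
    self_mem_nhdsWithin
  obtain ⟨t, htε, htν, htK, htpos⟩ := (ev1.and (ev2.and (ev3.and ev4))).exists
  have ht : (0:ℝ) < t := htpos
  obtain ⟨hd1, hd2⟩ := part3 t ht
  have hsval : F (t, 0) - F (0, 0) = (1 - α) * t ^ (2 * pe) := by rw [hd1, hexp]
  have hs_pos : 0 < F (t, 0) - F (0, 0) := by
    rw [hsval]
    exact mul_pos h1α (Real.rpow_pos_of_pos ht _)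
  have hnorm : Real.sqrt (((t,(0:ℝ)).1) ^ 2 + ((t,(0:ℝ)).2) ^ 2) < ε := by
    show Real.sqrt (t ^ 2 + (0:ℝ) ^ 2) < ε
    rw [show t ^ 2 + (0:ℝ) ^ 2 = t ^ 2 by ring, Real.sqrt_sq ht.le]
    exact htε
  have hsν : F (t, 0) - F (0, 0) < ν := by rw [hsval]; exact htν
  have hle := hKL (t, 0) hnorm hs_pos hsν
  rw [hd2, hsval] at hle
  have hL : c * ((1 - α) * t ^ (2 * pe)) ^ θ = c * (1 - α) ^ θ * t ^ (2 * pe * θ) := by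
    rw [Real.mul_rpow h1α.le (Real.rpow_nonneg ht.le _), ← Real.rpow_mul ht.le]
    ring
  have hR : 2 * ((1 - α)⁻¹ * ((1 - α) * t ^ (2 * pe))) ^ ((1 + α) / 2) =
      2 * t ^ e0 * t ^ (2 * pe * θ) := by
    rw [show (1 - α)⁻¹ * ((1 - α) * t ^ (2 * pe)) = t ^ (2 * pe) by field_simp,
      ← Real.rpow_mul ht.le,
      show 2 * pe * ((1 + α) / 2) = e0 + 2 * pe * θ by rw [he0]; ring,
      Real.rpow_add ht]
    ring
  rw [hL, hR] at hle
  have htp : (0:ℝ) < t ^ (2 * pe * θ) := Real.rpow_pos_of_pos ht _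
  have hlt : 2 * t ^ e0 * t ^ (2 * pe * θ) < c * (1 - α) ^ θ * t ^ (2 * pe * θ) := by
    apply mul_lt_mul_of_pos_right _ htp
    rw [hK_def] at htK
    linarith
  linarith
end

section
/- Fix γ ∈ (0, 1/2] and α ∈ (1/2, 1), and let Ω = {x ∈ ℝ² : x₁ ≥ 0, x₂ ≥ 0, x₂ ≥ x₁^{1/γ}} and σ = √(γ^{−2} + 1)/(1−α). Then for every x ∈ ℝ² with x₁ ≥ 0, x₂ ≥ 0 and x₁ ≤ 1, it holds that max{x₁^{1/γ} − x₂, 0} ≤ σ·dist(x, Ω). -/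
open scoped BigOperators

lemma key_rpow (p : ℝ) (hp : 1 ≤ p) {a b : ℝ} (ha : 0 ≤ a) (hab : a ≤ b) (hb1 : b ≤ 1) :
    b ^ p - a ^ p ≤ p * (b - a) := by
  have hs : Convex ℝ (Set.Icc (0:ℝ) 1) := convex_Icc 0 1
  have hderiv : ∀ t ∈ Set.Icc (0:ℝ) 1,
      HasDerivWithinAt (fun s : ℝ => s ^ p) (p * t ^ (p - 1)) (Set.Icc (0:ℝ) 1) t := by
    intro t _
    exact (Real.hasDerivAt_rpow_const (Or.inr hp)).hasDerivWithinAt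
  have hbound : ∀ t ∈ Set.Icc (0:ℝ) 1, ‖p * t ^ (p - 1)‖ ≤ p := by
    intro t ht
    have h1 : t ^ (p - 1) ≤ 1 := Real.rpow_le_one ht.1 ht.2 (by linarith)
    have h0 : 0 ≤ t ^ (p - 1) := Real.rpow_nonneg ht.1 _
    rw [Real.norm_eq_abs, abs_mul, abs_of_nonneg (by linarith : (0:ℝ) ≤ p), abs_of_nonneg h0]
    nlinarith
  have h := hs.norm_image_sub_le_of_norm_hasDerivWithin_le hderiv hbound
    (Set.mem_Icc.mpr ⟨ha, le_trans hab hb1⟩) (Set.mem_Icc.mpr ⟨le_trans ha hab, hb1⟩)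
  calc b ^ p - a ^ p ≤ ‖b ^ p - a ^ p‖ := le_abs_self _
    _ ≤ p * ‖b - a‖ := h
    _ = p * (b - a) := by rw [Real.norm_eq_abs, abs_of_nonneg (by linarith)]

/-- For `γ ∈ (0, 1/2]`, `α ∈ (1/2, 1)`,
`Ω = {x ∈ ℝ² : x₁ ≥ 0, x₂ ≥ 0, x₂ ≥ x₁^{1/γ}}` and `σ = √(γ⁻² + 1)/(1−α)`:
for every `x` with `x₁, x₂ ≥ 0` and `x₁ ≤ 1`,
`max{x₁^{1/γ} − x₂, 0} ≤ σ · dist(x, Ω)`. -/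
theorem stmt18 (γ α : ℝ) (hγ : γ ∈ Set.Ioc (0 : ℝ) (1 / 2))
    (hα : α ∈ Set.Ioo (1 / 2 : ℝ) 1)
    (Ω : Set (EuclideanSpace ℝ (Fin 2)))
    (hΩ : Ω = {x | 0 ≤ x 0 ∧ 0 ≤ x 1 ∧ (x 0) ^ (1 / γ) ≤ x 1})
    (σ : ℝ) (hσ : σ = Real.sqrt (γ⁻¹ ^ 2 + 1) / (1 - α)) :
    ∀ x : EuclideanSpace ℝ (Fin 2), 0 ≤ x 0 → 0 ≤ x 1 → x 0 ≤ 1 →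
      max ((x 0) ^ (1 / γ) - x 1) 0 ≤ σ * Metric.infDist x Ω := by
  intro x hx0 hx1 hx01
  have hγ0 : 0 < γ := hγ.1
  set p := 1 / γ with hp_def
  have hp1 : 2 ≤ p := by
    rw [hp_def, le_div_iff₀ hγ0]; linarith [hγ.2]
  have hp2 : γ⁻¹ ^ 2 = p ^ 2 := by rw [hp_def, one_div]
  set c := Real.sqrt (γ⁻¹ ^ 2 + 1) with hc_def
  have hc0 : 0 < c := Real.sqrt_pos.mpr (by positivity)
  have hα1 : 0 < 1 - α := by linarith [hα.2]
  have hσ0 : 0 ≤ σ := by rw [hσ]; positivity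
  have hd0 : 0 ≤ Metric.infDist x Ω := Metric.infDist_nonneg
  have hΩne : Ω.Nonempty := by
    refine ⟨(WithLp.toLp 2 (fun _ => (1 : ℝ)) : EuclideanSpace ℝ (Fin 2)), ?_⟩
    rw [hΩ]
    exact ⟨zero_le_one, zero_le_one, by simp [Real.one_rpow]⟩
  apply max_le _ (by positivity)
  have hkey : ∀ y ∈ Ω, (x 0) ^ p - x 1 ≤ c * dist x y := by
    intro y hy
    rw [hΩ] at hy
    obtain ⟨hy0, hy1, hy2⟩ := hy
    set u := dist (x 0) (y 0) with hu_def
    set v := dist (x 1) (y 1) with hv_def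
    have hu0 : 0 ≤ u := dist_nonneg
    have hv0 : 0 ≤ v := dist_nonneg
    have step1 : (x 0) ^ p - (y 0) ^ p ≤ p * u := by
      rcases le_or_gt (y 0) (x 0) with h | h
      · have := key_rpow p (by linarith) hy0 h hx01
        have hule : x 0 - y 0 ≤ u := by
          rw [hu_def, Real.dist_eq]; exact le_abs_self _
        nlinarith
      · have : (x 0) ^ p ≤ (y 0) ^ p :=
          Real.rpow_le_rpow hx0 h.le (by linarith)
        nlinarith
    have step2 : (x 0) ^ p - x 1 ≤ p * u + v := by
      have hvle : y 1 - x 1 ≤ v := by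
        rw [hv_def, Real.dist_eq, abs_sub_comm]; exact le_abs_self _
      linarith
    have hdist : dist x y = Real.sqrt (u ^ 2 + v ^ 2) := by
      rw [EuclideanSpace.dist_eq, Fin.sum_univ_two]
    have step3 : p * u + v ≤ c * dist x y := by
      rw [hdist, hc_def, hp2, ← Real.sqrt_mul (by positivity)]
      rw [show (p ^ 2 + 1) * (u ^ 2 + v ^ 2)
        = (p * u + v) ^ 2 + (u - p * v) ^ 2 by ring]
      calc p * u + v = Real.sqrt ((p * u + v) ^ 2) := by
            rw [Real.sqrt_sq (by nlinarith)]
        _ ≤ _ := Real.sqrt_le_sqrt (by nlinarith)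
    linarith
  have h2 : (x 0) ^ p - x 1 ≤ c * Metric.infDist x Ω := by
    rcases le_or_gt ((x 0) ^ p - x 1) 0 with h | h
    · exact h.trans (mul_nonneg hc0.le hd0)
    · by_contra hcon
      push_neg at hcon
      have hcon' : Metric.infDist x Ω < ((x 0) ^ p - x 1) / c := by
        rw [lt_div_iff₀ hc0, mul_comm]; exact hcon
      obtain ⟨y, hy, hlt⟩ := (Metric.infDist_lt_iff hΩne).mp hcon'
      have hk := hkey y hy
      rw [lt_div_iff₀ hc0, mul_comm] at hlt
      exact absurd hk (not_le.mpr hlt)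
  have hcσ : c ≤ σ := by
    rw [hσ, le_div_iff₀ hα1]
    nlinarith [hc0.le, hα.1]
  calc (x 0) ^ p - x 1 ≤ c * Metric.infDist x Ω := h2
    _ ≤ σ * Metric.infDist x Ω := mul_le_mul_of_nonneg_right hcσ hd0
end

section
/- Fix γ ∈ (0, 1/2] and α ∈ (1/2, 1), set β = 1 − γ(1−α), and define F : ℝ²×ℝ² → ℝ by F(a,b) = (1−α)·max{|a₁² − b₁²|^{1/γ} − a₂² + b₂², 0}^{1/(1−α)} + 2b₁² + 2b₂². Then: (1) (0,0) is a global minimizer of F; (2) for every t > 0, F((t,0),(0,0)) − F(0,0) = (1−α)t^{2/(γ(1−α))} and ∇F((t,0),(0,0)) = ((2/γ)t^{2/(γ(1−α))−1}, 0, 0, 0), so that ‖∇F((t,0),(0,0))‖ = (2/γ)·((1−α)^{−1}(F((t,0),(0,0)) − F(0,0)))^{(1+β)/2}; (3) consequently, for every θ ∈ (0, (1+β)/2), F does not satisfy the KL property at (0,0) with exponent θ, i.e., there are no c, ε, ν > 0 such that ‖∇F(a,b)‖ ≥ c·(F(a,b) − F(0,0))^θ for all (a,b) with ‖(a,b)‖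 < ε and 0 < F(a,b) − F(0,0) < ν. -/
open scoped BigOperators

private lemma sq_fd {E : Type*} [NormedAddCommGroup E] [NormedSpace ℝ E] {f : E → ℝ}
    {f' : E →L[ℝ] ℝ} {x : E} (hf : HasFDerivAt f f' x) :
    HasFDerivAt (fun y => f y ^ 2) (((2:ℝ) * f x) • f') x := by
  simpa only [pow_two, two_mul, add_smul] using hf.fun_mul hf

private lemma key19 (γ α t : ℝ) (hγ0 : 0 < γ) (h1α : 0 < 1 - α) (ht : 0 < t) :
    HasFDerivAt (fun p : EuclideanSpace ℝ (Fin 2) × EuclideanSpace ℝ (Fin 2) =>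
      (1 - α) * (max (|p.1 0 ^ 2 - p.2 0 ^ 2| ^ (1 / γ) - p.1 1 ^ 2 + p.2 1 ^ 2) 0)
          ^ (1 / (1 - α)) + 2 * (p.2 0) ^ 2 + 2 * (p.2 1) ^ 2)
      ((((2:ℝ)/γ) * t ^ (2/(γ*(1-α)) - 1)) •
        ((EuclideanSpace.proj (0 : Fin 2)).comp
          (ContinuousLinearMap.fst ℝ (EuclideanSpace ℝ (Fin 2)) (EuclideanSpace ℝ (Fin 2)))))
      ((WithLp.toLp 2 ![t,0] : EuclideanSpace ℝ (Fin 2)), (0 : EuclideanSpace ℝ (Fin 2))) := by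
  set E := EuclideanSpace ℝ (Fin 2)
  set x₀ : E × E := ((WithLp.toLp 2 ![t,0] : E), (0 : E)) with hx₀
  have hx10 : x₀.1 0 = t := rfl
  have hx11 : x₀.1 1 = 0 := rfl
  have hx20 : x₀.2 0 = 0 := rfl
  have hx21 : x₀.2 1 = 0 := rfl
  set La0 : E × E →L[ℝ] ℝ := (EuclideanSpace.proj (0 : Fin 2)).comp (ContinuousLinearMap.fst ℝ E E) with hLa0
  set La1 : E × E →L[ℝ] ℝ := (EuclideanSpace.proj (1 : Fin 2)).comp (ContinuousLinearMap.fst ℝ E E) with hLa1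
  set Lb0 : E × E →L[ℝ] ℝ := (EuclideanSpace.proj (0 : Fin 2)).comp (ContinuousLinearMap.snd ℝ E E) with hLb0
  set Lb1 : E × E →L[ℝ] ℝ := (EuclideanSpace.proj (1 : Fin 2)).comp (ContinuousLinearMap.snd ℝ E E) with hLb1
  have ha0 : HasFDerivAt (fun p : E × E => p.1 0) La0 x₀ := La0.hasFDerivAt
  have ha1 : HasFDerivAt (fun p : E × E => p.1 1) La1 x₀ := La1.hasFDerivAt
  have hb0 : HasFDerivAt (fun p : E × E => p.2 0) Lb0 x₀ := Lb0.hasFDerivAt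
  have hb1 : HasFDerivAt (fun p : E × E => p.2 1) Lb1 x₀ := Lb1.hasFDerivAt
  set u : E × E → ℝ := fun p => p.1 0 ^ 2 - p.2 0 ^ 2 with hu_def
  have hu : HasFDerivAt u (((2:ℝ) * x₀.1 0) • La0 - ((2:ℝ) * x₀.2 0) • Lb0) x₀ :=
    (sq_fd ha0).sub (sq_fd hb0)
  have hut : u x₀ = t ^ 2 := by show x₀.1 0 ^ 2 - x₀.2 0 ^ 2 = t ^ 2; rw [hx10, hx20]; ring
  have hupos : 0 < u x₀ := by rw [hut]; positivity
  have hv : HasFDerivAt (fun p => u p ^ (1/γ))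
      (((1/γ) * u x₀ ^ (1/γ - 1)) • (((2:ℝ) * x₀.1 0) • La0 - ((2:ℝ) * x₀.2 0) • Lb0)) x₀ :=
    hu.rpow_const (Or.inl hupos.ne')
  set g : E × E → ℝ := fun p => u p ^ (1/γ) - p.1 1 ^ 2 + p.2 1 ^ 2 with hg_def
  set U : E × E →L[ℝ] ℝ :=
    (((1/γ) * u x₀ ^ (1/γ - 1)) • (((2:ℝ) * x₀.1 0) • La0 - ((2:ℝ) * x₀.2 0) • Lb0)
      - ((2:ℝ) * x₀.1 1) • La1) + ((2:ℝ) * x₀.2 1) • Lb1 with hU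
  have hg : HasFDerivAt g U x₀ := (hv.sub (sq_fd ha1)).add (sq_fd hb1)
  have hgt : g x₀ = (t ^ 2) ^ (1/γ) := by
    show u x₀ ^ (1/γ) - x₀.1 1 ^ 2 + x₀.2 1 ^ 2 = _
    rw [hut, hx11, hx21]; ring
  have hgpos : 0 < g x₀ := by
    rw [hgt]; exact Real.rpow_pos_of_pos (by positivity) _
  have hG : HasFDerivAt (fun p => (1 - α) * g p ^ (1/(1-α)) + 2 * (p.2 0) ^ 2 + 2 * (p.2 1) ^ 2)
      (((1 - α) • (((1/(1-α)) * g x₀ ^ (1/(1-α) - 1)) • U)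
        + (2:ℝ) • (((2:ℝ) * x₀.2 0) • Lb0)) + (2:ℝ) • (((2:ℝ) * x₀.2 1) • Lb1)) x₀ := by
    exact (((hg.rpow_const (Or.inl hgpos.ne')).const_smul (1-α)).add
      ((sq_fd hb0).const_smul (2:ℝ))).add ((sq_fd hb1).const_smul (2:ℝ))
  -- eventual equality
  have hcu : Continuous u := by
    simp only [hu_def]
    exact (La0.continuous.pow 2).sub (Lb0.continuous.pow 2)
  have h1 : ∀ᶠ p in nhds x₀, 0 < u p :=
    hcu.continuousAt.eventually (eventually_gt_nhds hupos)
  have h2 : ∀ᶠ p in nhds x₀, 0 < g p :=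
    hg.continuousAt.eventually (eventually_gt_nhds hgpos)
  have hEq : (fun p : E × E =>
      (1 - α) * (max (|p.1 0 ^ 2 - p.2 0 ^ 2| ^ (1 / γ) - p.1 1 ^ 2 + p.2 1 ^ 2) 0)
          ^ (1 / (1 - α)) + 2 * (p.2 0) ^ 2 + 2 * (p.2 1) ^ 2)
      =ᶠ[nhds x₀] (fun p => (1 - α) * g p ^ (1/(1-α)) + 2 * (p.2 0) ^ 2 + 2 * (p.2 1) ^ 2) := by
    filter_upwards [h1, h2] with p hp1 hp2
    have : |p.1 0 ^ 2 - p.2 0 ^ 2| = u p := abs_of_pos hp1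
    rw [this]
    have : max (u p ^ (1/γ) - p.1 1 ^ 2 + p.2 1 ^ 2) 0 = g p := max_eq_left hp2.le
    rw [this]
  have hFd := hG.congr_of_eventuallyEq hEq
  have hDeq : (((1 - α) • (((1/(1-α)) * g x₀ ^ (1/(1-α) - 1)) • U)
        + (2:ℝ) • (((2:ℝ) * x₀.2 0) • Lb0)) + (2:ℝ) • (((2:ℝ) * x₀.2 1) • Lb1))
      = ((((2:ℝ)/γ) * t ^ (2/(γ*(1-α)) - 1)) • La0) := by
    refine ContinuousLinearMap.ext fun p => ?_
    have h2t : (t^2:ℝ) = t ^ (2:ℝ) := by rw [← Real.rpow_natCast t 2]; norm_num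
    have e1 : ((t:ℝ)^(2:ℝ))^(1/γ - 1) = t ^ (2/γ - 2) := by
      rw [← Real.rpow_mul ht.le]; congr 1; field_simp
    have e2 : (((t:ℝ)^(2:ℝ))^(1/γ))^(1/(1-α)-1) = t ^ (2/(γ*(1-α)) - 2/γ) := by
      rw [← Real.rpow_mul ht.le, ← Real.rpow_mul ht.le]; congr 1
      field_simp
    have ecoef : (1-α) * (1/(1-α) * ((t^2:ℝ)^(1/γ))^(1/(1-α)-1) * (1/γ * ((t^2:ℝ))^(1/γ-1) * (2*t)))
        = 2/γ * t^(2/(γ*(1-α))-1) := by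
      rw [h2t, e1, e2,
        show (2:ℝ)/(γ*(1-α)) - 1 = (2/(γ*(1-α)) - 2/γ) + ((2/γ - 2) + 1) by ring,
        Real.rpow_add ht, Real.rpow_add ht, Real.rpow_one]
      field_simp
    have hz : ∀ i : Fin 2, (0 : E) i = 0 := fun i => rfl
    simp only [hU, hx10, hx11, hx20, hx21, hut, hgt, hz, ContinuousLinearMap.add_apply,
      ContinuousLinearMap.smul_apply, ContinuousLinearMap.sub_apply, smul_eq_mul,
      Matrix.cons_val_zero, Matrix.cons_val_one, Matrix.head_cons, PiLp.zero_apply,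
      mul_zero, zero_mul, add_zero, mul_one]
    linear_combination La0 p * ecoef
  rw [hDeq] at hFd
  exact hFd

/-- **Example 3.15.** For `γ ∈ (0,1/2]`, `α ∈ (1/2,1)`,
`β = 1 − γ(1−α)` and
`F(a,b) = (1−α)max{|a₁²−b₁²|^{1/γ} − a₂² + b₂², 0}^{1/(1−α)} + 2b₁² + 2b₂²`:
(1) `(0,0)` globally minimizes `F`;
(2) for `t > 0`, `F((t,0),(0,0)) − F(0,0) = (1−α)t^{2/(γ(1−α))}`,
`∇F((t,0),(0,0)) = ((2/γ)t^{2/(γ(1−α))−1}, 0, 0, 0)`, and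
`‖∇F((t,0),(0,0))‖ = (2/γ)((1−α)⁻¹(F((t,0),(0,0)) − F(0,0)))^{(1+β)/2}`;
(3) hence `F` does not satisfy the KL property at `(0,0)` with any exponent
`θ ∈ (0, (1+β)/2)`. -/
theorem stmt19 (γ α : ℝ) (hγ : γ ∈ Set.Ioc (0 : ℝ) (1 / 2))
    (hα : α ∈ Set.Ioo (1 / 2 : ℝ) 1)
    (β : ℝ) (hβ : β = 1 - γ * (1 - α))
    (F : EuclideanSpace ℝ (Fin 2) × EuclideanSpace ℝ (Fin 2) → ℝ)
    (hF : F = fun p =>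
      (1 - α) * (max (|p.1 0 ^ 2 - p.2 0 ^ 2| ^ (1 / γ) - p.1 1 ^ 2 + p.2 1 ^ 2) 0)
          ^ (1 / (1 - α))
        + 2 * (p.2 0) ^ 2 + 2 * (p.2 1) ^ 2) :
    (∀ p, F (0, 0) ≤ F p) ∧
    (∀ t : ℝ, 0 < t →
      F ((WithLp.toLp 2 ![t, 0] : EuclideanSpace ℝ (Fin 2)), 0) - F (0, 0) =
        (1 - α) * t ^ (2 / (γ * (1 - α))) ∧
      fderiv ℝ F ((WithLp.toLp 2 ![t, 0] : EuclideanSpace ℝ (Fin 2)), 0)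
          (EuclideanSpace.single 0 1, 0) = (2 / γ) * t ^ (2 / (γ * (1 - α)) - 1) ∧
      fderiv ℝ F ((WithLp.toLp 2 ![t, 0] : EuclideanSpace ℝ (Fin 2)), 0)
          (EuclideanSpace.single 1 1, 0) = 0 ∧
      fderiv ℝ F ((WithLp.toLp 2 ![t, 0] : EuclideanSpace ℝ (Fin 2)), 0)
          (0, EuclideanSpace.single 0 1) = 0 ∧
      fderiv ℝ F ((WithLp.toLp 2 ![t, 0] : EuclideanSpace ℝ (Fin 2)), 0)
          (0, EuclideanSpace.single 1 1) = 0 ∧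
      Real.sqrt
          (∑ i, (fderiv ℝ F ((WithLp.toLp 2 ![t, 0] : EuclideanSpace ℝ (Fin 2)), 0)
              (EuclideanSpace.single i 1, 0)) ^ 2 +
           ∑ i, (fderiv ℝ F ((WithLp.toLp 2 ![t, 0] : EuclideanSpace ℝ (Fin 2)), 0)
              ((0 : EuclideanSpace ℝ (Fin 2)), EuclideanSpace.single i 1)) ^ 2) =
        (2 / γ) * ((1 - α)⁻¹ *
          (F ((WithLp.toLp 2 ![t, 0] : EuclideanSpace ℝ (Fin 2)), 0) - F (0, 0))) ^ ((1 + β) / 2)) ∧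
    (∀ θ : ℝ, 0 < θ → θ < (1 + β) / 2 →
      ¬ ∃ c > (0 : ℝ), ∃ ε > (0 : ℝ), ∃ ν > (0 : ℝ),
        ∀ a b : EuclideanSpace ℝ (Fin 2),
          Real.sqrt (‖a‖ ^ 2 + ‖b‖ ^ 2) < ε →
          0 < F (a, b) - F (0, 0) → F (a, b) - F (0, 0) < ν →
          c * (F (a, b) - F (0, 0)) ^ θ ≤
            Real.sqrt
              (∑ i, (fderiv ℝ F (a, b) (EuclideanSpace.single i 1, 0)) ^ 2 +
               ∑ i, (fderiv ℝ F (a, b) ((0 : EuclideanSpace ℝ (Fin 2)),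
                  EuclideanSpace.single i 1)) ^ 2)) := by
  obtain ⟨hγ0, hγ2⟩ := hγ
  obtain ⟨hα1, hα2⟩ := hα
  have h1α : 0 < 1 - α := by linarith
  have hz : ∀ i : Fin 2, (0 : EuclideanSpace ℝ (Fin 2)) i = 0 := fun i => rfl
  set q : ℝ := 2 / (γ * (1 - α)) with hq_def
  have hq : 0 < q := by positivity
  have hq1 : q - 1 = q * ((1 + β) / 2) := by
    rw [hβ, hq_def]; field_simp; ring
  -- value at 0
  have hF00 : F (0, 0) = 0 := by
    rw [hF]
    simp [hz, Real.zero_rpow (one_div_ne_zero hγ0.ne'),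
      Real.zero_rpow (one_div_ne_zero h1α.ne'),
      Real.zero_rpow (inv_ne_zero hγ0.ne'), Real.zero_rpow (inv_ne_zero h1α.ne')]
  -- value along the curve
  have hval : ∀ t : ℝ, 0 < t →
      F ((WithLp.toLp 2 ![t, 0] : EuclideanSpace ℝ (Fin 2)), 0) = (1 - α) * t ^ q := by
    intro t ht
    rw [hF]
    simp only [Matrix.cons_val_zero, Matrix.cons_val_one, Matrix.head_cons, hz]
    rw [show |t ^ 2 - (0:ℝ) ^ 2| = t ^ 2 by
      rw [show t ^ 2 - (0:ℝ) ^ 2 = t ^ 2 by ring, abs_of_pos (by positivity)]]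
    have h1 : (t ^ 2) ^ (1/γ) - (0:ℝ) ^ 2 + (0:ℝ) ^ 2 = (t ^ 2) ^ (1/γ) := by ring
    rw [h1, max_eq_left (Real.rpow_nonneg (by positivity) _)]
    rw [← Real.rpow_natCast t 2, ← Real.rpow_mul ht.le, ← Real.rpow_mul ht.le]
    norm_num [hq_def]
    left
    field_simp
  -- derivative facts
  have hderiv : ∀ t : ℝ, 0 < t →
      fderiv ℝ F ((WithLp.toLp 2 ![t, 0] : EuclideanSpace ℝ (Fin 2)), 0) =
      (((2:ℝ)/γ) * t ^ (q - 1)) •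
        ((EuclideanSpace.proj (0 : Fin 2)).comp
          (ContinuousLinearMap.fst ℝ (EuclideanSpace ℝ (Fin 2)) (EuclideanSpace ℝ (Fin 2)))) := by
    intro t ht
    rw [hF]
    exact (key19 γ α t hγ0 h1α ht).fderiv
  refine ⟨?_, ?_, ?_⟩
  · intro p
    rw [hF00, hF]
    have : (0:ℝ) ≤ max (|p.1 0 ^ 2 - p.2 0 ^ 2| ^ (1 / γ) - p.1 1 ^ 2 + p.2 1 ^ 2) 0 :=
      le_max_right _ _
    have h2 := Real.rpow_nonneg this (1 / (1 - α))
    nlinarith [sq_nonneg (p.2 0), sq_nonneg (p.2 1), h2, h1α]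
  · intro t ht
    have hd := hderiv t ht
    have hd0 : fderiv ℝ F ((WithLp.toLp 2 ![t, 0] : EuclideanSpace ℝ (Fin 2)), 0)
        (EuclideanSpace.single 0 1, 0) = (2 / γ) * t ^ (q - 1) := by
      rw [hd]
      simp [EuclideanSpace.single_apply]
    have hd1 : fderiv ℝ F ((WithLp.toLp 2 ![t, 0] : EuclideanSpace ℝ (Fin 2)), 0)
        (EuclideanSpace.single 1 1, 0) = 0 := by
      rw [hd]
      simp [EuclideanSpace.single_apply]
    have hd2 : fderiv ℝ F ((WithLp.toLp 2 ![t, 0] : EuclideanSpace ℝ (Fin 2)), 0)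
        ((0 : EuclideanSpace ℝ (Fin 2)), EuclideanSpace.single 0 1) = 0 := by
      rw [hd]
      simp [hz]
    have hd3 : fderiv ℝ F ((WithLp.toLp 2 ![t, 0] : EuclideanSpace ℝ (Fin 2)), 0)
        ((0 : EuclideanSpace ℝ (Fin 2)), EuclideanSpace.single 1 1) = 0 := by
      rw [hd]
      simp [hz]
    have hdiff : F ((WithLp.toLp 2 ![t, 0] : EuclideanSpace ℝ (Fin 2)), 0) - F (0, 0) = (1 - α) * t ^ q := by
      rw [hval t ht, hF00, sub_zero]
    refine ⟨hdiff, hd0, hd1, hd2, hd3, ?_⟩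
    rw [Fin.sum_univ_two, Fin.sum_univ_two, hd0, hd1, hd2, hd3, hdiff]
    rw [← mul_assoc, inv_mul_cancel₀ h1α.ne', one_mul]
    have hc0 : (0:ℝ) ≤ 2 / γ * t ^ (q - 1) := by positivity
    rw [show (2 / γ * t ^ (q - 1)) ^ 2 + 0 ^ 2 + (0 ^ 2 + 0 ^ 2) = (2 / γ * t ^ (q - 1)) ^ 2 by ring,
      Real.sqrt_sq hc0, ← Real.rpow_mul ht.le, ← hq1]
  · intro θ hθ0 hθ1 ⟨c, hc, ε, hε, ν, hν, H⟩
    have hδ : 0 < q - 1 - q * θ := by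
      have : q * θ < q * ((1 + β) / 2) := by
        exact mul_lt_mul_of_pos_left hθ1 hq
      linarith [hq1]
    -- find small t
    have l1 : Filter.Tendsto (fun s : ℝ => (1 - α) * s ^ q) (nhdsWithin 0 (Set.Ioi 0)) (nhds 0) := by
      have h0 : Filter.Tendsto (fun s : ℝ => s ^ q) (nhds 0) (nhds ((0:ℝ) ^ q)) :=
        (Real.continuousAt_rpow_const 0 q (Or.inr hq.le))
      rw [Real.zero_rpow hq.ne'] at h0
      have := (h0.const_mul (1 - α)).mono_left
        (nhdsWithin_le_nhds (s := Set.Ioi (0:ℝ)))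
      simpa using this
    have l2 : Filter.Tendsto (fun s : ℝ => (2 / γ) * s ^ (q - 1 - q * θ))
        (nhdsWithin 0 (Set.Ioi 0)) (nhds 0) := by
      have h0 : Filter.Tendsto (fun s : ℝ => s ^ (q - 1 - q * θ)) (nhds 0)
          (nhds ((0:ℝ) ^ (q - 1 - q * θ))) :=
        (Real.continuousAt_rpow_const 0 _ (Or.inr hδ.le))
      rw [Real.zero_rpow hδ.ne'] at h0
      have := (h0.const_mul (2 / γ)).mono_left
        (nhdsWithin_le_nhds (s := Set.Ioi (0:ℝ)))
      simpa using this
    have hcθ : 0 < c * (1 - α) ^ θ := by positivity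
    have ev : ∀ᶠ s : ℝ in nhdsWithin 0 (Set.Ioi 0),
        (1 - α) * s ^ q < ν ∧ (2 / γ) * s ^ (q - 1 - q * θ) < c * (1 - α) ^ θ ∧ s < ε ∧ 0 < s := by
      have e1 := l1.eventually (eventually_lt_nhds hν)
      have e2 := l2.eventually (eventually_lt_nhds hcθ)
      have e3 : ∀ᶠ s : ℝ in nhdsWithin 0 (Set.Ioi 0), s < ε :=
        (Filter.Tendsto.mono_left Filter.tendsto_id nhdsWithin_le_nhds).eventually
          (eventually_lt_nhds hε)
      have e4 : ∀ᶠ s : ℝ in nhdsWithin 0 (Set.Ioi 0), 0 < s := self_mem_nhdsWithin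
      filter_upwards [e1, e2, e3, e4] with s h1 h2 h3 h4
      exact ⟨h1, h2, h3, h4⟩
    obtain ⟨t, h1, h2, h3, ht⟩ := ev.exists
    -- apply H
    set a : EuclideanSpace ℝ (Fin 2) := WithLp.toLp 2 ![t, 0] with ha
    have hdiff : F (a, 0) - F (0, 0) = (1 - α) * t ^ q := by
      rw [ha, hval t ht, hF00, sub_zero]
    have hnorma : ‖a‖ = t := by
      rw [EuclideanSpace.norm_eq]
      have h0 : ∀ i : Fin 2, ‖a i‖ ^ 2 = (a i) ^ 2 := fun i => sq_abs _
      rw [Fin.sum_univ_two, h0, h0]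
      rw [show a 0 = t from rfl, show a 1 = 0 from rfl]
      rw [show t ^ 2 + (0:ℝ) ^ 2 = t ^ 2 by ring, Real.sqrt_sq ht.le]
    have harg : Real.sqrt (‖a‖ ^ 2 + ‖(0 : EuclideanSpace ℝ (Fin 2))‖ ^ 2) < ε := by
      rw [norm_zero, hnorma]
      calc Real.sqrt (t ^ 2 + 0 ^ 2) = t := by
            rw [show t ^ 2 + (0:ℝ) ^ 2 = t ^ 2 by ring, Real.sqrt_sq ht.le]
        _ < ε := h3
    have hpos : 0 < F (a, 0) - F (0, 0) := by
      rw [hdiff]; positivity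
    have hlt : F (a, 0) - F (0, 0) < ν := by
      rw [hdiff]; exact h1
    have key := H a 0 harg hpos hlt
    -- compute the RHS of key
    have hd := hderiv t ht
    have hd0 : fderiv ℝ F ((WithLp.toLp 2 ![t, 0] : EuclideanSpace ℝ (Fin 2)), 0)
        (EuclideanSpace.single 0 1, 0) = (2 / γ) * t ^ (q - 1) := by
      rw [hd]; simp [EuclideanSpace.single_apply]
    have hd1 : fderiv ℝ F ((WithLp.toLp 2 ![t, 0] : EuclideanSpace ℝ (Fin 2)), 0)
        (EuclideanSpace.single 1 1, 0) = 0 := by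
      rw [hd]; simp [EuclideanSpace.single_apply]
    have hd2 : fderiv ℝ F ((WithLp.toLp 2 ![t, 0] : EuclideanSpace ℝ (Fin 2)), 0)
        ((0 : EuclideanSpace ℝ (Fin 2)), EuclideanSpace.single 0 1) = 0 := by
      rw [hd]; simp [hz]
    have hd3 : fderiv ℝ F ((WithLp.toLp 2 ![t, 0] : EuclideanSpace ℝ (Fin 2)), 0)
        ((0 : EuclideanSpace ℝ (Fin 2)), EuclideanSpace.single 1 1) = 0 := by
      rw [hd]; simp [hz]
    rw [Fin.sum_univ_two, Fin.sum_univ_two, hd0, hd1, hd2, hd3, hdiff] at key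
    rw [show (2 / γ * t ^ (q - 1)) ^ 2 + 0 ^ 2 + (0 ^ 2 + 0 ^ 2) = (2 / γ * t ^ (q - 1)) ^ 2 by ring,
      Real.sqrt_sq (by positivity)] at key
    -- derive contradiction
    have hexp : t ^ (q - 1) = t ^ (q - 1 - q * θ) * t ^ (q * θ) := by
      rw [← Real.rpow_add ht]; congr 1; ring
    have hlhs : c * ((1 - α) * t ^ q) ^ θ = (c * (1 - α) ^ θ) * t ^ (q * θ) := by
      rw [Real.mul_rpow h1α.le (Real.rpow_nonneg ht.le _), ← Real.rpow_mul ht.le]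
      ring
    rw [hlhs, hexp] at key
    have hposτ : 0 < t ^ (q * θ) := Real.rpow_pos_of_pos ht _
    have hfin : c * (1 - α) ^ θ ≤ 2 / γ * t ^ (q - 1 - q * θ) := by
      rw [← mul_assoc] at key
      exact le_of_mul_le_mul_right key hposτ
    linarith
end
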